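/- arXiv:2602.16319 — 7 statements merged into one kernel-verified Lean document; each statement's English description precedes it below -/
import Mathlib

section
/- For all integers n ≥ 1, q ≥ 2 and w with 1 ≤ w ≤ n, the maximum cardinality A_q(n,2,w) of a q-ary constant-weight code of length n, weight w and minimum distance 2 equals C(n,w)·(q−1)^{w−1}: there exists such a code of cardinality C(n,w)·(q−1)^{w−1}, and every such code has cardinality at most C(n,w)·(q−1)^{w−1}. -/
/-- The weight of a word of length `m` over `ℤ_q` (represented as `Fin q`):
the number of nonzero coordinates. -/
def wordWeight {m q : ℕ} (x : Fin m → Fin q) : ℕ :=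
  (Finset.univ.filter (fun i => (x i : ℕ) ≠ 0)).card

/-- `IsCWCode n q d w C` : `C` is a `q`-ary constant-weight code of length `n`,
weight `w` and minimum distance `d`. -/
def IsCWCode (n q d w : ℕ) (C : Finset (Fin n → Fin q)) : Prop :=
  (∀ x ∈ C, wordWeight x = w) ∧
  (∀ x ∈ C, ∀ y ∈ C, x ≠ y → d ≤ hammingDist x y)

namespace AqAux

variable {n q : ℕ}

/-- The support of a word: the set of nonzero coordinates. -/
def supp (x : Fin n → Fin q) : Finset (Fin n) :=
  Finset.univ.filter (fun i => (x i : ℕ) ≠ 0)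

lemma mem_supp {x : Fin n → Fin q} {j : Fin n} : j ∈ supp x ↔ (x j : ℕ) ≠ 0 := by
  simp [supp]

lemma wordWeight_eq_card_supp (x : Fin n → Fin q) : wordWeight x = (supp x).card := rfl

/-- The sum of the coordinates of a word, viewed in `ZMod (q-1)`. -/
def resSum (x : Fin n → Fin q) : ZMod (q-1) := ∑ i, ((x i : ℕ) : ZMod (q-1))

/-- The unique element of `{1, ..., q-1} ⊆ Fin q` with a given residue mod `q-1`. -/
def unlift (hq : 2 ≤ q) (r : ZMod (q-1)) : Fin q :=
  haveI : NeZero (q-1) := ⟨by omega⟩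
  if r.val = 0 then ⟨q-1, by omega⟩ else ⟨r.val, by have := ZMod.val_lt r; omega⟩

lemma unlift_ne_zero (hq : 2 ≤ q) (r : ZMod (q-1)) : ((unlift hq r : Fin q) : ℕ) ≠ 0 := by
  unfold unlift
  split
  · next h => simp; omega
  · next h => simpa using h

lemma unlift_cast (hq : 2 ≤ q) (r : ZMod (q-1)) :
    (((unlift hq r : Fin q) : ℕ) : ZMod (q-1)) = r := by
  haveI : NeZero (q-1) := ⟨by omega⟩
  unfold unlift
  split
  · next h =>
    have : r = 0 := by rwa [ZMod.val_eq_zero] at h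
    simp [this, ZMod.natCast_self]
  · show ((r.val : ℕ) : ZMod (q-1)) = r
    rw [ZMod.natCast_val, ZMod.cast_id]

lemma unlift_spec (hq : 2 ≤ q) (j : Fin q) (hj : (j : ℕ) ≠ 0) :
    unlift hq (((j : ℕ) : ZMod (q-1))) = j := by
  haveI : NeZero (q-1) := ⟨by omega⟩
  have hlt := j.isLt
  by_cases h : (j : ℕ) = q - 1
  · have : (((j : ℕ) : ZMod (q-1))).val = 0 := by rw [h]; simp [ZMod.natCast_self]
    unfold unlift
    rw [if_pos this]
    exact Fin.ext (by simp [h])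
  · have hlt' : (j : ℕ) < q - 1 := by omega
    have hv : (((j : ℕ) : ZMod (q-1))).val = (j : ℕ) := ZMod.val_cast_of_lt hlt'
    unfold unlift
    rw [if_neg (by rw [hv]; exact hj)]
    exact Fin.ext (by simp [hv])

lemma res_inj (hq : 2 ≤ q) (j k : Fin q) (hj : (j : ℕ) ≠ 0) (hk : (k : ℕ) ≠ 0)
    (h : ((j : ℕ) : ZMod (q-1)) = ((k : ℕ) : ZMod (q-1))) : j = k := by
  rw [← unlift_spec hq j hj, ← unlift_spec hq k hk, h]

lemma wordWeight_eq (x : Fin n → Fin q) :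
    wordWeight x = ∑ i : Fin n, (if (x i : ℕ) ≠ 0 then 1 else 0) := by
  rw [wordWeight, Finset.card_filter]

lemma eq_of_agree_off (hq : 2 ≤ q) (x y : Fin n → Fin q)
    (hw : wordWeight x = wordWeight y) (hr : resSum x = resSum y) (i : Fin n)
    (hagree : ∀ j, j ≠ i → x j = y j) : x = y := by
  funext j
  by_cases hji : j = i
  swap
  · exact hagree j hji
  subst hji
  have herase1 : ∑ k ∈ Finset.univ.erase j, (if (x k : ℕ) ≠ 0 then 1 else 0) =
      ∑ k ∈ Finset.univ.erase j, (if (y k : ℕ) ≠ 0 then 1 else 0) :=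
    Finset.sum_congr rfl (fun k hk => by rw [hagree k (Finset.mem_erase.mp hk).1])
  have hW : (if (x j : ℕ) ≠ 0 then (1:ℕ) else 0) = (if (y j : ℕ) ≠ 0 then 1 else 0) := by
    have h := hw
    rw [wordWeight_eq, wordWeight_eq,
      ← Finset.add_sum_erase _ (fun k => if (x k : ℕ) ≠ 0 then (1:ℕ) else 0) (Finset.mem_univ j),
      ← Finset.add_sum_erase _ (fun k => if (y k : ℕ) ≠ 0 then (1:ℕ) else 0) (Finset.mem_univ j),
      herase1] at h
    exact Nat.add_right_cancel h
  have herase2 : ∑ k ∈ Finset.univ.erase j, ((x k : ℕ) : ZMod (q-1)) =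
      ∑ k ∈ Finset.univ.erase j, ((y k : ℕ) : ZMod (q-1)) :=
    Finset.sum_congr rfl (fun k hk => by rw [hagree k (Finset.mem_erase.mp hk).1])
  have hR : ((x j : ℕ) : ZMod (q-1)) = ((y j : ℕ) : ZMod (q-1)) := by
    have h := hr
    rw [resSum, resSum,
      ← Finset.add_sum_erase _ (fun k => ((x k : ℕ) : ZMod (q-1))) (Finset.mem_univ j),
      ← Finset.add_sum_erase _ (fun k => ((y k : ℕ) : ZMod (q-1))) (Finset.mem_univ j),
      herase2] at h
    exact add_right_cancel h
  by_cases hx0 : (x j : ℕ) = 0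
  · have hy0 : (y j : ℕ) = 0 := by
      by_contra hy0
      simp [hx0, hy0] at hW
    exact Fin.ext (by rw [hx0, hy0])
  · have hy0 : (y j : ℕ) ≠ 0 := by
      by_contra hy0
      simp [hx0, hy0] at hW
    exact res_inj hq _ _ hx0 hy0 hR

lemma dist_ge_two (hq : 2 ≤ q) (x y : Fin n → Fin q)
    (hw : wordWeight x = wordWeight y) (hr : resSum x = resSum y) (hxy : x ≠ y) :
    2 ≤ hammingDist x y := by
  by_contra hcon
  push_neg at hcon
  have hd : (Finset.univ.filter (fun i => x i ≠ y i)).card < 2 := hcon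
  have hne : (Finset.univ.filter (fun i => x i ≠ y i)).Nonempty := by
    rw [Finset.filter_nonempty_iff]
    obtain ⟨i, hi⟩ := Function.ne_iff.mp hxy
    exact ⟨i, Finset.mem_univ i, hi⟩
  obtain ⟨i, hi⟩ := hne
  have hagree : ∀ j, j ≠ i → x j = y j := by
    intro j hj
    by_contra hne'
    have : 1 < (Finset.univ.filter (fun i => x i ≠ y i)).card :=
      Finset.one_lt_card.mpr ⟨j, Finset.mem_filter.mpr ⟨Finset.mem_univ j, hne'⟩, i, hi, hj⟩
    omega
  exact hxy (eq_of_agree_off hq x y hw hr i hagree)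

/-- Adjust the value at the minimum of the support so that `resSum` becomes `0`. -/
def fixup (hq : 2 ≤ q) (x : Fin n → Fin q) : Fin n → Fin q :=
  if h : (supp x).Nonempty then
    Function.update x ((supp x).min' h)
      (unlift hq (((x ((supp x).min' h) : ℕ) : ZMod (q-1)) - resSum x))
  else x

lemma fixup_eq_off (hq : 2 ≤ q) (x : Fin n → Fin q) (hx : (supp x).Nonempty)
    (j : Fin n) (hj : j ≠ (supp x).min' hx) : fixup hq x j = x j := by
  unfold fixup
  rw [dif_pos hx, Function.update_of_ne hj]

lemma fixup_min (hq : 2 ≤ q) (x : Fin n → Fin q) (hx : (supp x).Nonempty) :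
    fixup hq x ((supp x).min' hx) =
      unlift hq (((x ((supp x).min' hx) : ℕ) : ZMod (q-1)) - resSum x) := by
  unfold fixup
  rw [dif_pos hx]
  exact Function.update_self _ _ _

lemma supp_fixup (hq : 2 ≤ q) (x : Fin n → Fin q) (hx : (supp x).Nonempty) :
    supp (fixup hq x) = supp x := by
  ext j
  rw [mem_supp, mem_supp]
  by_cases hji : j = (supp x).min' hx
  · rw [hji, fixup_min hq x hx]
    constructor
    · intro _; exact mem_supp.mp ((supp x).min'_mem hx)
    · intro _; exact unlift_ne_zero hq _
  · rw [fixup_eq_off hq x hx j hji]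

lemma resSum_fixup (hq : 2 ≤ q) (x : Fin n → Fin q) (hx : (supp x).Nonempty) :
    resSum (fixup hq x) = 0 := by
  set i := (supp x).min' hx with hi
  set v := unlift hq (((x i : ℕ) : ZMod (q-1)) - resSum x) with hv
  have hval : ∀ j, fixup hq x j = Function.update x i v j := by
    intro j
    by_cases h : j = i
    · subst h; rw [fixup_min hq x hx, Function.update_self]
    · rw [fixup_eq_off hq x hx j h, Function.update_of_ne h]
  have hcomm : ∀ j, ((fixup hq x j : ℕ) : ZMod (q-1)) =
      Function.update (fun j => ((x j : ℕ) : ZMod (q-1))) i ((v : ℕ) : ZMod (q-1)) j := by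
    intro j
    rw [hval j]
    by_cases h : j = i
    · subst h; simp
    · simp [Function.update_of_ne h]
  have h1 := Finset.add_sum_erase Finset.univ (fun j => ((x j : ℕ) : ZMod (q-1)))
    (Finset.mem_univ i)
  rw [resSum]
  calc ∑ j, ((fixup hq x j : ℕ) : ZMod (q-1))
      = ∑ j, Function.update (fun j => ((x j : ℕ) : ZMod (q-1))) i ((v : ℕ) : ZMod (q-1)) j :=
        Finset.sum_congr rfl (fun j _ => hcomm j)
    _ = ((v : ℕ) : ZMod (q-1)) + ∑ j ∈ Finset.univ \ {i}, ((x j : ℕ) : ZMod (q-1)) :=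
        Finset.sum_update_of_mem (Finset.mem_univ i) _ _
    _ = 0 := by
        rw [Finset.sdiff_singleton_eq_erase, hv, unlift_cast]
        have h2 : resSum x = ∑ j, ((x j : ℕ) : ZMod (q-1)) := rfl
        linear_combination h1 - h2

lemma resSum_eq_sum_supp (x : Fin n → Fin q) :
    resSum x = ∑ j ∈ supp x, ((x j : ℕ) : ZMod (q-1)) := by
  rw [resSum]
  refine (Finset.sum_subset (Finset.subset_univ _) ?_).symm
  intro j _ hj
  rw [mem_supp, not_not] at hj
  rw [hj, Nat.cast_zero]

/-- The inverse map used in counting the words of a fixed support with `resSum = 0`. -/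
def backMap (hq : 2 ≤ q) (S : Finset (Fin n)) (i0 : Fin n)
    (g : ∀ a ∈ S.erase i0, Fin (q-1)) : Fin n → Fin q := fun a =>
  if h : a ∈ S.erase i0 then
    (⟨(g a h : ℕ) + 1, by have := (g a h).isLt; omega⟩ : Fin q)
  else if a = i0 then
    unlift hq (- ∑ b ∈ (S.erase i0).attach, (((g b.1 b.2 : ℕ) + 1 : ℕ) : ZMod (q-1)))
  else ⟨0, by omega⟩

section backMapLemmas

variable (hq : 2 ≤ q) (S : Finset (Fin n)) (i0 : Fin n)
  (g : ∀ a ∈ S.erase i0, Fin (q-1))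

lemma backMap_apply_mem {a : Fin n} (h : a ∈ S.erase i0) :
    ((backMap hq S i0 g a : Fin q) : ℕ) = (g a h : ℕ) + 1 := by
  simp only [backMap]
  rw [dif_pos h]

lemma backMap_apply_i0 :
    backMap hq S i0 g i0 =
      unlift hq (- ∑ b ∈ (S.erase i0).attach, (((g b.1 b.2 : ℕ) + 1 : ℕ) : ZMod (q-1))) := by
  simp only [backMap]
  rw [dif_neg (Finset.notMem_erase _ _)]
  simp

lemma backMap_apply_zero {a : Fin n} (h : a ∉ S.erase i0) (h' : a ≠ i0) :
    ((backMap hq S i0 g a : Fin q) : ℕ) = 0 := by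
  simp only [backMap]
  rw [dif_neg h, if_neg h']

lemma backMap_supp (hi0 : i0 ∈ S) : supp (backMap hq S i0 g) = S := by
  ext a
  rw [mem_supp]
  by_cases haE : a ∈ S.erase i0
  · rw [backMap_apply_mem hq S i0 g haE]
    exact iff_of_true (by omega) (Finset.mem_of_mem_erase haE)
  · by_cases hai : a = i0
    · rw [hai, backMap_apply_i0 hq S i0 g]
      exact iff_of_true (unlift_ne_zero hq _) hi0
    · rw [backMap_apply_zero hq S i0 g haE hai]
      refine iff_of_false (by omega) ?_
      intro haS
      exact haE (Finset.mem_erase.mpr ⟨hai, haS⟩)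

lemma backMap_resSum (hi0 : i0 ∈ S) : resSum (backMap hq S i0 g) = 0 := by
  rw [resSum_eq_sum_supp, backMap_supp hq S i0 g hi0, ← Finset.add_sum_erase _ _ hi0]
  have h1 : ((backMap hq S i0 g i0 : ℕ) : ZMod (q-1)) =
      - ∑ b ∈ (S.erase i0).attach, (((g b.1 b.2 : ℕ) + 1 : ℕ) : ZMod (q-1)) := by
    rw [backMap_apply_i0 hq S i0 g]
    exact unlift_cast hq _
  have h2 : ∑ a ∈ S.erase i0, ((backMap hq S i0 g a : ℕ) : ZMod (q-1)) =
      ∑ b ∈ (S.erase i0).attach, (((g b.1 b.2 : ℕ) + 1 : ℕ) : ZMod (q-1)) := by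
    rw [← Finset.sum_attach (S.erase i0) (fun a => ((backMap hq S i0 g a : ℕ) : ZMod (q-1)))]
    refine Finset.sum_congr rfl (fun b _ => ?_)
    rw [backMap_apply_mem hq S i0 g b.2]
  rw [h1, h2, neg_add_cancel]

end backMapLemmas

lemma card_fiber (hq : 2 ≤ q) {w : ℕ} (hw : 1 ≤ w) (S : Finset (Fin n)) (hS : S.card = w) :
    ((Finset.univ.filter
        (fun x : Fin n → Fin q => wordWeight x = w ∧ resSum x = 0)).filter
      (fun x => supp x = S)).card = (q-1)^(w-1) := by
  classical
  have hq0 : 0 < q := by omega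
  have hSne : S.Nonempty := Finset.card_pos.mp (by omega)
  set i0 := S.min' hSne with hi0def
  have hi0 : i0 ∈ S := S.min'_mem hSne
  have key : ((Finset.univ.filter
        (fun x : Fin n → Fin q => wordWeight x = w ∧ resSum x = 0)).filter
      (fun x => supp x = S)).card =
      ((S.erase i0).pi (fun _ => (Finset.univ : Finset (Fin (q-1))))).card := by
    refine Finset.card_bij'
      (fun x hx => fun a (ha : a ∈ S.erase i0) =>
        (⟨(x a : ℕ) - 1, by
          have hmem := Finset.mem_filter.mp hx
          have hsx : supp x = S := hmem.2
          have ha' : a ∈ supp x := by rw [hsx]; exact Finset.mem_of_mem_erase ha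
          have := mem_supp.mp ha'
          have := (x a).isLt
          omega⟩ : Fin (q-1)))
      (fun g _ => backMap hq S i0 g) ?_ ?_ ?_ ?_
    · -- image in pi
      intro x hx
      simp [Finset.mem_pi]
    · -- preimage in fiber
      intro g hg
      refine Finset.mem_filter.mpr ⟨Finset.mem_filter.mpr ⟨Finset.mem_univ _, ?_, ?_⟩, ?_⟩
      · rw [wordWeight_eq_card_supp, backMap_supp hq S i0 g hi0, hS]
      · exact backMap_resSum hq S i0 g hi0
      · exact backMap_supp hq S i0 g hi0
    · -- left inverse
      intro x hx
      have hmem := Finset.mem_filter.mp hx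
      have hsx : supp x = S := hmem.2
      have hres : resSum x = 0 := (Finset.mem_filter.mp hmem.1).2.2
      have hxa : ∀ a, a ∈ S → (x a : ℕ) ≠ 0 := fun a ha => mem_supp.mp (hsx ▸ ha)
      funext a
      beta_reduce
      by_cases haE : a ∈ S.erase i0
      · refine Fin.ext ?_
        rw [backMap_apply_mem hq S i0 _ haE]
        have := hxa a (Finset.mem_of_mem_erase haE)
        simp only
        omega
      · by_cases hai : a = i0
        · rw [hai, backMap_apply_i0 hq S i0 _]
          have hT : ∑ b ∈ (S.erase i0).attach,
              (((((fun a (ha : a ∈ S.erase i0) =>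
                (⟨(x a : ℕ) - 1, by
                  have ha' : a ∈ supp x := by rw [hsx]; exact Finset.mem_of_mem_erase ha
                  have := mem_supp.mp ha'
                  have := (x a).isLt
                  omega⟩ : Fin (q-1))) b.1 b.2 : Fin (q-1)) : ℕ) + 1 : ℕ) : ZMod (q-1)) =
              ∑ b ∈ S.erase i0, ((x b : ℕ) : ZMod (q-1)) := by
            rw [← Finset.sum_attach (S.erase i0) (fun b => ((x b : ℕ) : ZMod (q-1)))]
            refine Finset.sum_congr rfl (fun b _ => ?_)
            have := hxa b.1 (Finset.mem_of_mem_erase b.2)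
            congr 1
            simp only
            omega
          rw [hT]
          have h2 : ((x i0 : ℕ) : ZMod (q-1)) + ∑ b ∈ S.erase i0, ((x b : ℕ) : ZMod (q-1))
              = 0 := by
            rw [Finset.add_sum_erase S (fun b => ((x b : ℕ) : ZMod (q-1))) hi0, ← hsx,
              ← resSum_eq_sum_supp x, hres]
          have h3 : - ∑ b ∈ S.erase i0, ((x b : ℕ) : ZMod (q-1))
              = ((x i0 : ℕ) : ZMod (q-1)) := by
            linear_combination -h2
          rw [h3]
          exact unlift_spec hq _ (hxa i0 hi0)
        · refine Fin.ext ?_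
          rw [backMap_apply_zero hq S i0 _ haE hai]
          have : a ∉ supp x := by
            rw [hsx]; intro haS; exact haE (Finset.mem_erase.mpr ⟨hai, haS⟩)
          rw [mem_supp, not_not] at this
          omega
    · -- right inverse
      intro g hg
      funext a
      funext ha
      beta_reduce
      refine Fin.ext ?_
      simp only
      rw [backMap_apply_mem hq S i0 g ha]
      omega
  rw [key, Finset.card_pi, Finset.prod_const, Finset.card_univ, Fintype.card_fin,
    Finset.card_erase_of_mem hi0, hS]

lemma card_D (hq : 2 ≤ q) {w : ℕ} (hw : 1 ≤ w) :
    (Finset.univ.filter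
        (fun x : Fin n → Fin q => wordWeight x = w ∧ resSum x = 0)).card
      = n.choose w * (q-1)^(w-1) := by
  classical
  have H : ∀ x ∈ (Finset.univ.filter
      (fun x : Fin n → Fin q => wordWeight x = w ∧ resSum x = 0)),
      supp x ∈ (Finset.univ : Finset (Fin n)).powersetCard w := by
    intro x hx
    refine Finset.mem_powersetCard.mpr ⟨Finset.subset_univ _, ?_⟩
    rw [← wordWeight_eq_card_supp]
    exact (Finset.mem_filter.mp hx).2.1
  rw [Finset.card_eq_sum_card_fiberwise H,
    Finset.sum_congr rfl (fun S hS => card_fiber hq hw S (Finset.mem_powersetCard.mp hS).2),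
    Finset.sum_const, smul_eq_mul, Finset.card_powersetCard, Finset.card_univ, Fintype.card_fin]

end AqAux

open AqAux in
/-- `A_q(n,2,w) = C(n,w) * (q-1)^(w-1)`. -/
theorem Aq_n_2_w (n q w : ℕ) (hn : 1 ≤ n) (hq : 2 ≤ q) (hw1 : 1 ≤ w) (hwn : w ≤ n) :
    (∃ C : Finset (Fin n → Fin q), IsCWCode n q 2 w C ∧
        C.card = n.choose w * (q - 1) ^ (w - 1)) ∧
    (∀ C : Finset (Fin n → Fin q), IsCWCode n q 2 w C →
        C.card ≤ n.choose w * (q - 1) ^ (w - 1)) := by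
  classical
  set D := (Finset.univ.filter
    (fun x : Fin n → Fin q => wordWeight x = w ∧ resSum x = 0)) with hD
  have hmemD : ∀ x, x ∈ D ↔ wordWeight x = w ∧ resSum x = 0 := by
    intro x; rw [hD, Finset.mem_filter]; simp
  constructor
  · refine ⟨D, ⟨?_, ?_⟩, card_D hq hw1⟩
    · intro x hx; exact ((hmemD x).mp hx).1
    · intro x hx y hy hxy
      have h1 := (hmemD x).mp hx
      have h2 := (hmemD y).mp hy
      exact dist_ge_two hq x y (h1.1.trans h2.1.symm) (h1.2.trans h2.2.symm) hxy
  · intro C hC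
    rw [← card_D hq hw1 (n := n) (q := q)]
    have hsne : ∀ x ∈ C, (supp x).Nonempty := by
      intro x hx
      refine Finset.card_pos.mp ?_
      rw [← wordWeight_eq_card_supp, hC.1 x hx]
      omega
    apply Finset.card_le_card_of_injOn (fixup hq)
    · intro x hx
      rw [Finset.mem_coe, hmemD]
      exact ⟨by rw [wordWeight_eq_card_supp, supp_fixup hq x (hsne x hx),
          ← wordWeight_eq_card_supp]; exact hC.1 x hx,
        resSum_fixup hq x (hsne x hx)⟩
    · intro x hx y hy h
      simp only [Finset.mem_coe] at hx hy
      have hsx := hsne x hx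
      have hsy := hsne y hy
      have hsupp : supp x = supp y := by
        rw [← supp_fixup hq x hsx, ← supp_fixup hq y hsy, h]
      have hmin : (supp y).min' hsy = (supp x).min' hsx := by
        congr 1
        exact hsupp.symm
      have hagree : ∀ j, j ≠ (supp x).min' hsx → x j = y j := by
        intro j hj
        have hjy : j ≠ (supp y).min' hsy := by rw [hmin]; exact hj
        have := congrFun h j
        rwa [fixup_eq_off hq x hsx j hj, fixup_eq_off hq y hsy j hjy] at this
      by_contra hxy
      have h2 := hC.2 x hx y hy hxy
      have hsub : Finset.univ.filter (fun i => x i ≠ y i) ⊆ {(supp x).min' hsx} := by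
        intro j hj
        rw [Finset.mem_singleton]
        by_contra hji
        exact (Finset.mem_filter.mp hj).2 (hagree j hji)
      have : hammingDist x y ≤ 1 := by
        calc hammingDist x y = (Finset.univ.filter (fun i => x i ≠ y i)).card := rfl
          _ ≤ ({(supp x).min' hsx} : Finset (Fin n)).card := Finset.card_le_card hsub
          _ = 1 := Finset.card_singleton _
      omega
end

section
/- For all integers n ≥ 2 and g ≥ 1, setting q = g+1, the maximum cardinality A_q(n,3,2) of a q-ary constant-weight code of length n, weight 2 and minimum distance 3 equals min(⌊g·n/2⌋, C(n,2)); in particular A_q(n,3,2) = ⌊g·n/2⌋ when n > g and A_q(n,3,2) = C(n,2) when n ≤ g. -/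
section Gen
variable {n q : ℕ} [NeZero q]

def mkW (A B : Fin n × Fin n → Fin q) (p : Fin n × Fin n) : Fin n → Fin q :=
  fun t => if t = p.1 then A p else if t = p.2 then B p else 0

variable {A B : Fin n × Fin n → Fin q} {E : Finset (Fin n × Fin n)}

lemma finval_ne_zero_iff {q : ℕ} [NeZero q] {a : Fin q} : (a : ℕ) ≠ 0 ↔ a ≠ 0 :=
  not_congr ⟨fun h => Fin.ext h, fun h => by rw [h]; rfl⟩

lemma mkW_fst (p : Fin n × Fin n) : mkW A B p p.1 = A p := if_pos rfl

lemma mkW_snd {p : Fin n × Fin n} (hp : p.1 ≠ p.2) : mkW A B p p.2 = B p := by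
  simp [mkW, hp.symm]

lemma mkW_zero {p : Fin n × Fin n} {t : Fin n} (h1 : t ≠ p.1) (h2 : t ≠ p.2) :
    mkW A B p t = 0 := by simp [mkW, h1, h2]

theorem code_of_edges
    (hne : ∀ p ∈ E, p.1 ≠ p.2)
    (hA : ∀ p ∈ E, A p ≠ 0) (hB : ∀ p ∈ E, B p ≠ 0)
    (hedge : ∀ p ∈ E, ∀ r ∈ E, p ≠ r → ¬(p.1 = r.2 ∧ p.2 = r.1))
    (h11 : ∀ p ∈ E, ∀ r ∈ E, p ≠ r → p.1 = r.1 → A p ≠ A r)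
    (h12 : ∀ p ∈ E, ∀ r ∈ E, p ≠ r → p.1 = r.2 → A p ≠ B r)
    (h22 : ∀ p ∈ E, ∀ r ∈ E, p ≠ r → p.2 = r.2 → B p ≠ B r) :
    IsCWCode n q 3 2 (E.image (mkW A B)) ∧ (E.image (mkW A B)).card = E.card := by
  have h21 : ∀ p ∈ E, ∀ r ∈ E, p ≠ r → p.2 = r.1 → B p ≠ A r := fun p hp r hr h hh =>
    (h12 r hr p hp h.symm hh.symm).symm
  -- difference at first coordinate
  have d1 : ∀ p ∈ E, ∀ r ∈ E, p ≠ r → mkW A B p p.1 ≠ mkW A B r p.1 := by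
    intro p hp r hr hpr
    rw [mkW_fst]
    by_cases h1 : p.1 = r.1
    · conv_rhs => rw [h1, mkW_fst]
      exact h11 p hp r hr hpr h1
    · by_cases h2 : p.1 = r.2
      · conv_rhs => rw [h2, mkW_snd (hne r hr)]
        exact h12 p hp r hr hpr h2
      · rw [mkW_zero h1 h2]
        exact hA p hp
  have d2 : ∀ p ∈ E, ∀ r ∈ E, p ≠ r → mkW A B p p.2 ≠ mkW A B r p.2 := by
    intro p hp r hr hpr
    rw [mkW_snd (hne p hp)]
    by_cases h1 : p.2 = r.1
    · conv_rhs => rw [h1, mkW_fst]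
      exact h21 p hp r hr hpr h1
    · by_cases h2 : p.2 = r.2
      · conv_rhs => rw [h2, mkW_snd (hne r hr)]
        exact h22 p hp r hr hpr h2
      · rw [mkW_zero h1 h2]
        exact hB p hp
  have hinj : Set.InjOn (mkW A B) E := by
    intro p hp r hr h
    by_contra hpr
    exact d1 p hp r hr hpr (by rw [h])
  refine ⟨⟨?_, ?_⟩, Finset.card_image_of_injOn hinj⟩
  · rintro x hx
    obtain ⟨p, hp, rfl⟩ := Finset.mem_image.1 hx
    have : Finset.univ.filter (fun i => ((mkW A B p i : ℕ) ≠ 0)) = {p.1, p.2} := by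
      ext t
      simp only [Finset.mem_filter, Finset.mem_univ, true_and, Finset.mem_insert,
        Finset.mem_singleton, ne_eq]
      rw [← ne_eq, finval_ne_zero_iff]
      constructor
      · intro h
        by_contra hc
        push_neg at hc
        exact h (mkW_zero hc.1 hc.2)
      · rintro (rfl | rfl)
        · rw [mkW_fst]; exact hA p hp
        · rw [mkW_snd (hne p hp)]; exact hB p hp
    rw [wordWeight, this, Finset.card_pair (hne p hp)]
  · rintro x hx y hy hxy
    obtain ⟨p, hp, rfl⟩ := Finset.mem_image.1 hx
    obtain ⟨r, hr, rfl⟩ := Finset.mem_image.1 hy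
    have hpr : p ≠ r := fun h => hxy (by rw [h])
    -- find a third differing coordinate among r's endpoints
    have hw : ∃ w : Fin n, w ≠ p.1 ∧ w ≠ p.2 ∧ mkW A B p w ≠ mkW A B r w := by
      have key : (r.1 ≠ p.1 ∧ r.1 ≠ p.2) ∨ (r.2 ≠ p.1 ∧ r.2 ≠ p.2) := by
        rcases eq_or_ne r.1 p.1 with e1 | e1
        · exact Or.inr ⟨fun hc => hne r hr (e1.trans hc.symm), 
            fun hc => hpr (Prod.ext e1.symm hc.symm)⟩
        · rcases eq_or_ne r.1 p.2 with e2 | e2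
          · exact Or.inr ⟨fun hc => hedge p hp r hr hpr ⟨hc.symm, e2.symm⟩,
              fun hc => hne r hr (e2.trans hc.symm)⟩
          · exact Or.inl ⟨e1, e2⟩
      rcases key with ⟨ha, hb⟩ | ⟨ha, hb⟩
      · refine ⟨r.1, ha, hb, ?_⟩
        rw [mkW_zero ha hb, mkW_fst]
        exact (hA r hr).symm
      · refine ⟨r.2, ha, hb, ?_⟩
        rw [mkW_zero ha hb, mkW_snd (hne r hr)]
        exact (hB r hr).symm
    obtain ⟨w, hw1, hw2, hw3⟩ := hw
    have hsub : ({p.1, p.2, w} : Finset (Fin n)) ⊆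
        Finset.univ.filter (fun i => mkW A B p i ≠ mkW A B r i) := by
      intro t ht
      simp only [Finset.mem_insert, Finset.mem_singleton] at ht
      simp only [Finset.mem_filter, Finset.mem_univ, true_and]
      rcases ht with rfl | rfl | rfl
      · exact d1 p hp r hr hpr
      · exact d2 p hp r hr hpr
      · exact hw3
    have hcard : ({p.1, p.2, w} : Finset (Fin n)).card = 3 := by
      rw [Finset.card_insert_of_notMem (by simp [hne p hp, hw1.symm]),
        Finset.card_insert_of_notMem (by simp [hw2.symm]), Finset.card_singleton]
    calc 3 = ({p.1, p.2, w} : Finset (Fin n)).card := hcard.symm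
      _ ≤ _ := Finset.card_le_card hsub
      _ = hammingDist (mkW A B p) (mkW A B r) := rfl

end Gen


section Build
variable {n : ℕ} [NeZero n]

/-- `dd p` is the cyclic "distance" from `p.1` to `p.2`. -/
def dd (p : Fin n × Fin n) : ℕ := ((p.2 - p.1 : Fin n) : ℕ)

lemma dd_ne_zero {p : Fin n × Fin n} (h : dd p ≠ 0) : p.1 ≠ p.2 := by
  intro hc
  apply h
  rw [dd, hc, sub_self]
  rfl

lemma dd_eq_dd {p r : Fin n × Fin n} (h : dd p = dd r) :
    (p.2 - p.1 : Fin n) = r.2 - r.1 := Fin.ext h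

lemma dd_add_dd {p r : Fin n × Fin n} (h1 : p.1 = r.2) (h2 : p.2 = r.1)
    (h3 : dd p ≠ 0) : dd p + dd r = n := by
  have hadd : (p.2 - p.1 : Fin n) + (r.2 - r.1) = 0 := by
    rw [h1, h2]; abel
  have hy : (r.2 - r.1 : Fin n) = -(p.2 - p.1) := eq_neg_of_add_eq_zero_left
    (by rw [add_comm]; exact hadd)
  have hval : ((p.2 - p.1 : Fin n) + (r.2 - r.1) : Fin n).val = 0 := by rw [hadd]; rfl
  rw [Fin.val_add] at hval
  have h0 : (0:ℕ) < n := Nat.pos_of_ne_zero (NeZero.ne n)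
  have hdvd : n ∣ dd p + dd r := Nat.dvd_of_mod_eq_zero hval
  obtain ⟨c, hc⟩ := hdvd
  have hlt1 : dd p < n := (p.2 - p.1 : Fin n).isLt
  have hlt2 : dd r < n := (r.2 - r.1 : Fin n).isLt
  rcases c with _ | _ | c
  · omega
  · omega
  · have h2n : n * 2 ≤ n * (c + 1 + 1) := Nat.mul_le_mul_left n (by omega)
    omega

theorem exists_code (g k : ℕ) (hn : 2 ≤ n) (hkn : 2*k < n) (hkg : 2*k ≤ g)
    (E_c E_m : Finset (Fin n × Fin n))
    (hc : ∀ p ∈ E_c, 1 ≤ dd p ∧ dd p ≤ k)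
    (hm : ∀ p ∈ E_m, dd p = n/2)
    (hkm : E_m ≠ ∅ → k < n/2 ∧ k < n - n/2 ∧ 2*k < g)
    (hmm : ∀ p ∈ E_m, ∀ r ∈ E_m, p ≠ r →
      p.1 ≠ r.1 ∧ p.1 ≠ r.2 ∧ p.2 ≠ r.1 ∧ p.2 ≠ r.2) :
    ∃ C : Finset (Fin n → Fin (g+1)), IsCWCode n (g+1) 3 2 C ∧
      C.card = E_c.card + E_m.card := by
  classical
  have hg1 : 0 < g + 1 := Nat.succ_pos g
  set A : Fin n × Fin n → Fin (g+1) :=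
    fun p => if h : dd p ≤ k then ⟨dd p, by omega⟩ else ⟨g, by omega⟩ with hA_def
  set B : Fin n × Fin n → Fin (g+1) :=
    fun p => if h : dd p ≤ k then ⟨k + dd p, by omega⟩ else ⟨g, by omega⟩ with hB_def
  have hAc : ∀ p, dd p ≤ k → (A p : ℕ) = dd p := by
    intro p h; simp only [hA_def, dif_pos h]
  have hAm : ∀ p, ¬ (dd p ≤ k) → (A p : ℕ) = g := by
    intro p h; simp only [hA_def, dif_neg h]
  have hBc : ∀ p, dd p ≤ k → (B p : ℕ) = k + dd p := by
    intro p h; simp only [hB_def, dif_pos h]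
  have hBm : ∀ p, ¬ (dd p ≤ k) → (B p : ℕ) = g := by
    intro p h; simp only [hB_def, dif_neg h]
  -- basic facts for members of E_m
  have hm' : ∀ p ∈ E_m, ¬ (dd p ≤ k) ∧ 2*k < g ∧ dd p = n/2 := by
    intro p hp
    obtain ⟨h1, h2, h3⟩ := hkm (Finset.ne_empty_of_mem hp)
    exact ⟨by rw [hm p hp]; omega, h3, hm p hp⟩
  have hdisj : Disjoint E_c E_m := by
    rw [Finset.disjoint_left]
    intro p hp hpm
    obtain ⟨h1, _, h3⟩ := hm' p hpm
    exact h1 (hc p hp).2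
  set E := E_c ∪ E_m with hE_def
  have hmemE : ∀ p ∈ E, p ∈ E_c ∨ p ∈ E_m := fun p hp => Finset.mem_union.1 hp
  have hddpos : ∀ p ∈ E, 1 ≤ dd p := by
    intro p hp
    rcases hmemE p hp with h | h
    · exact (hc p h).1
    · obtain ⟨h1, _, _⟩ := hm' p h; omega
  have hne : ∀ p ∈ E, p.1 ≠ p.2 := by
    intro p hp
    exact dd_ne_zero (by have := hddpos p hp; omega)
  -- `Fin.ne` via values
  have hvne : ∀ (a b : Fin (g+1)), (a : ℕ) ≠ (b : ℕ) → a ≠ b :=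
    fun a b h => Fin.ne_of_val_ne h
  have hAne : ∀ p ∈ E, A p ≠ 0 := by
    intro p hp
    apply hvne
    show (A p : ℕ) ≠ (0 : ℕ)
    rcases hmemE p hp with h | h
    · rw [hAc p (hc p h).2]; have := (hc p h).1; omega
    · obtain ⟨h1, h2, _⟩ := hm' p h; rw [hAm p h1]; omega
  have hBne : ∀ p ∈ E, B p ≠ 0 := by
    intro p hp
    apply hvne
    show (B p : ℕ) ≠ (0 : ℕ)
    rcases hmemE p hp with h | h
    · rw [hBc p (hc p h).2]; have := (hc p h).1; omega
    · obtain ⟨h1, h2, _⟩ := hm' p h; rw [hBm p h1]; omega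
  have hedge : ∀ p ∈ E, ∀ r ∈ E, p ≠ r → ¬(p.1 = r.2 ∧ p.2 = r.1) := by
    rintro p hp r hr hpr ⟨h1, h2⟩
    have hsum : dd p + dd r = n := dd_add_dd h1 h2 (by have := hddpos p hp; omega)
    rcases hmemE p hp with hpc | hpm <;> rcases hmemE r hr with hrc | hrm
    · have := (hc p hpc).2; have := (hc r hrc).2; omega
    · have := (hc p hpc).2
      obtain ⟨_, _, h3⟩ := hm' r hrm
      obtain ⟨hk1, hk2, _⟩ := hkm (Finset.ne_empty_of_mem hrm)
      omega
    · have := (hc r hrc).2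
      obtain ⟨_, _, h3⟩ := hm' p hpm
      obtain ⟨hk1, hk2, _⟩ := hkm (Finset.ne_empty_of_mem hpm)
      omega
    · exact (hmm p hpm r hrm hpr).2.2.1 h2
  have prod_eq : ∀ {p r : Fin n × Fin n}, p.1 = r.1 → p.2 = r.2 → p = r := by
    intro p r h1 h2; exact Prod.ext h1 h2
  have h11 : ∀ p ∈ E, ∀ r ∈ E, p ≠ r → p.1 = r.1 → A p ≠ A r := by
    intro p hp r hr hpr h1 hAA
    have hv : (A p : ℕ) = (A r : ℕ) := by rw [hAA]
    rcases hmemE p hp with hpc | hpm <;> rcases hmemE r hr with hrc | hrm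
    · rw [hAc p (hc p hpc).2, hAc r (hc r hrc).2] at hv
      have := dd_eq_dd hv
      rw [h1] at this
      exact hpr (prod_eq h1 (sub_left_inj.1 this))
    · obtain ⟨hr1, hr2, _⟩ := hm' r hrm
      rw [hAc p (hc p hpc).2, hAm r hr1] at hv
      have := (hc p hpc).2; omega
    · obtain ⟨hp1, hp2, _⟩ := hm' p hpm
      rw [hAm p hp1, hAc r (hc r hrc).2] at hv
      have := (hc r hrc).2; omega
    · exact (hmm p hpm r hrm hpr).1 h1
  have h12 : ∀ p ∈ E, ∀ r ∈ E, p ≠ r → p.1 = r.2 → A p ≠ B r := by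
    intro p hp r hr hpr h1 hAB
    have hv : (A p : ℕ) = (B r : ℕ) := by rw [hAB]
    rcases hmemE p hp with hpc | hpm <;> rcases hmemE r hr with hrc | hrm
    · rw [hAc p (hc p hpc).2, hBc r (hc r hrc).2] at hv
      have := (hc p hpc).2; have := (hc r hrc).1; omega
    · obtain ⟨hr1, hr2, _⟩ := hm' r hrm
      rw [hAc p (hc p hpc).2, hBm r hr1] at hv
      have := (hc p hpc).2; omega
    · obtain ⟨hp1, hp2, _⟩ := hm' p hpm
      rw [hAm p hp1, hBc r (hc r hrc).2] at hv
      have := (hc r hrc).2; omega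
    · exact (hmm p hpm r hrm hpr).2.1 h1
  have h22 : ∀ p ∈ E, ∀ r ∈ E, p ≠ r → p.2 = r.2 → B p ≠ B r := by
    intro p hp r hr hpr h2 hBB
    have hv : (B p : ℕ) = (B r : ℕ) := by rw [hBB]
    rcases hmemE p hp with hpc | hpm <;> rcases hmemE r hr with hrc | hrm
    · rw [hBc p (hc p hpc).2, hBc r (hc r hrc).2] at hv
      have hdd : dd p = dd r := by omega
      have := dd_eq_dd hdd
      rw [h2] at this
      exact hpr (prod_eq (sub_right_inj.1 this) h2)
    · obtain ⟨hr1, hr2, _⟩ := hm' r hrm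
      rw [hBc p (hc p hpc).2, hBm r hr1] at hv
      have := (hc p hpc).2; omega
    · obtain ⟨hp1, hp2, _⟩ := hm' p hpm
      rw [hBm p hp1, hBc r (hc r hrc).2] at hv
      have := (hc r hrc).2; omega
    · exact (hmm p hpm r hrm hpr).2.2.2 h2
  obtain ⟨hcode, hcard⟩ := code_of_edges hne hAne hBne hedge h11 h12 h22
  exact ⟨E.image (mkW A B), hcode, by
    rw [hcard, hE_def, Finset.card_union_of_disjoint hdisj]⟩

end Build


section Concrete
variable {n : ℕ} [NeZero n]
open Fin.NatCast

def Ecirc (n k : ℕ) [NeZero n] : Finset (Fin n × Fin n) :=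
  (Finset.univ ×ˢ Finset.Icc 1 k).image (fun x => (x.1, x.1 + ((x.2 : ℕ) : Fin n)))

lemma Ecirc_dd {k : ℕ} (hkn : k < n) : ∀ p ∈ Ecirc n k, 1 ≤ dd p ∧ dd p ≤ k := by
  intro p hp
  obtain ⟨x, hmem, rfl⟩ := Finset.mem_image.1 hp
  simp only [Finset.mem_product, Finset.mem_Icc, Finset.mem_univ, true_and] at hmem
  have hdd : dd (x.1, x.1 + ((x.2 : ℕ) : Fin n)) = x.2 := by
    show ((x.1 + (x.2 : ℕ) - x.1 : Fin n) : ℕ) = x.2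
    rw [add_sub_cancel_left, Fin.val_natCast, Nat.mod_eq_of_lt (by omega)]
  omega

lemma Ecirc_card {k : ℕ} (hkn : k < n) : (Ecirc n k).card = n * k := by
  rw [Ecirc, Finset.card_image_of_injOn, Finset.card_product, Finset.card_univ,
    Fintype.card_fin, Nat.card_Icc, show k + 1 - 1 = k from rfl]
  intro x hx y hy h
  simp only [Finset.coe_product, Set.mem_prod, Finset.mem_coe, Finset.mem_Icc,
    Finset.mem_univ, true_and, Set.mem_univ] at hx hy
  simp only [Prod.mk.injEq] at h
  obtain ⟨h1, h2⟩ := h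
  rw [h1] at h2
  have h3 : ((x.2 : ℕ) : Fin n) = ((y.2 : ℕ) : Fin n) := add_left_cancel h2
  have h4 : (x.2 : ℕ) % n = (y.2 : ℕ) % n := by
    rw [← Fin.val_natCast, ← Fin.val_natCast, h3]
  rw [Nat.mod_eq_of_lt (by omega), Nat.mod_eq_of_lt (by omega)] at h4
  exact Prod.ext h1 h4

def EmatchEven (n : ℕ) [NeZero n] : Finset (Fin n × Fin n) :=
  (Finset.range (n/2)).image (fun j => (((j : ℕ) : Fin n), ((j + n/2 : ℕ) : Fin n)))

lemma EmatchEven_dd (hn : 2 ≤ n) : ∀ p ∈ EmatchEven n, dd p = n/2 := by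
  intro p hp
  obtain ⟨j, hmem, rfl⟩ := Finset.mem_image.1 hp
  show ((((j + n/2 : ℕ) : Fin n) - ((j : ℕ) : Fin n) : Fin n) : ℕ) = n/2
  rw [Nat.cast_add, add_sub_cancel_left, Fin.val_natCast, Nat.mod_eq_of_lt (by omega)]

lemma EmatchEven_vals (hn2 : n % 2 = 0) {j : ℕ} (hj : j < n/2) :
    (((j : ℕ) : Fin n) : ℕ) = j ∧ (((j + n/2 : ℕ) : Fin n) : ℕ) = j + n/2 := by
  constructor
  · rw [Fin.val_natCast, Nat.mod_eq_of_lt (by omega)]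
  · rw [Fin.val_natCast, Nat.mod_eq_of_lt (by omega)]

lemma EmatchEven_card (hn2 : n % 2 = 0) : (EmatchEven n).card = n / 2 := by
  rw [EmatchEven, Finset.card_image_of_injOn, Finset.card_range]
  intro x hx y hy h
  simp only [Finset.coe_range, Set.mem_Iio] at hx hy
  simp only [Prod.mk.injEq] at h
  have := congrArg Fin.val h.1
  rwa [(EmatchEven_vals hn2 hx).1, (EmatchEven_vals hn2 hy).1] at this

lemma EmatchEven_disj (hn2 : n % 2 = 0) : ∀ p ∈ EmatchEven n, ∀ r ∈ EmatchEven n, p ≠ r →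
    p.1 ≠ r.1 ∧ p.1 ≠ r.2 ∧ p.2 ≠ r.1 ∧ p.2 ≠ r.2 := by
  intro p hp r hr hpr
  obtain ⟨j, hj, rfl⟩ := Finset.mem_image.1 hp
  obtain ⟨i, hi, rfl⟩ := Finset.mem_image.1 hr
  simp only [Finset.mem_range] at hj hi
  have hji : j ≠ i := by rintro rfl; exact hpr rfl
  obtain ⟨v1, v2⟩ := EmatchEven_vals hn2 hj
  obtain ⟨w1, w2⟩ := EmatchEven_vals hn2 hi
  refine ⟨Fin.ne_of_val_ne ?_, Fin.ne_of_val_ne ?_, Fin.ne_of_val_ne ?_, Fin.ne_of_val_ne ?_⟩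
  · rw [v1, w1]; omega
  · rw [v1, w2]; omega
  · rw [v2, w1]; omega
  · rw [v2, w2]; omega

def EmatchOdd (n : ℕ) [NeZero n] : Finset (Fin n × Fin n) :=
  (Finset.range (n/2)).image
    (fun j => (((2*j*(n/2) : ℕ) : Fin n), (((2*j+1)*(n/2) : ℕ) : Fin n)))

lemma odd_cop (hn2 : n % 2 = 1) : Nat.gcd n (n/2) = 1 := by
  set m := n/2 with hm
  have h1 : Nat.Coprime (1 + m * 2) m :=
    (Nat.coprime_add_mul_left_left 1 m 2).2 (Nat.coprime_one_left _)
  have h2 : n = 1 + m * 2 := by omega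
  rw [h2]
  exact h1

lemma odd_inj (hn2 : n % 2 = 1) {e e' : ℕ} (he : e < n) (he' : e' < n)
    (h : e * (n/2) % n = e' * (n/2) % n) : e = e' := by
  have : e ≡ e' [MOD n] := Nat.ModEq.cancel_right_of_coprime (odd_cop hn2) h
  have := this.eq_of_lt_of_lt he he'
  exact this

lemma EmatchOdd_dd (hn : 2 ≤ n) (hn2 : n % 2 = 1) : ∀ p ∈ EmatchOdd n, dd p = n/2 := by
  intro p hp
  obtain ⟨j, hmem, rfl⟩ := Finset.mem_image.1 hp
  show ((((2*j+1)*(n/2) : ℕ) : Fin n) - (((2*j*(n/2) : ℕ)) : Fin n) : Fin n).val = n/2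
  rw [show (2*j+1)*(n/2) = 2*j*(n/2) + n/2 by ring, Nat.cast_add, add_sub_cancel_left,
    Fin.val_natCast, Nat.mod_eq_of_lt (by omega)]

lemma EmatchOdd_card (hn2 : n % 2 = 1) : (EmatchOdd n).card = n / 2 := by
  rw [EmatchOdd, Finset.card_image_of_injOn, Finset.card_range]
  intro x hx y hy h
  simp only [Finset.coe_range, Set.mem_Iio] at hx hy
  simp only [Prod.mk.injEq] at h
  have := congrArg Fin.val h.1
  rw [Fin.val_natCast, Fin.val_natCast] at this
  have := odd_inj hn2 (by omega : 2*x < n) (by omega : 2*y < n)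
    (by rw [show 2*x*(n/2) = 2*x*(n/2) from rfl] at this; 
        calc 2*x*(n/2) % n = 2*y*(n/2) % n := this)
  omega

lemma EmatchOdd_disj (hn2 : n % 2 = 1) : ∀ p ∈ EmatchOdd n, ∀ r ∈ EmatchOdd n, p ≠ r →
    p.1 ≠ r.1 ∧ p.1 ≠ r.2 ∧ p.2 ≠ r.1 ∧ p.2 ≠ r.2 := by
  intro p hp r hr hpr
  obtain ⟨j, hj, rfl⟩ := Finset.mem_image.1 hp
  obtain ⟨i, hi, rfl⟩ := Finset.mem_image.1 hr
  simp only [Finset.mem_range] at hj hi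
  have hji : j ≠ i := by rintro rfl; exact hpr rfl
  have key : ∀ e e' : ℕ, e < n → e' < n → e ≠ e' →
      (((e*(n/2) : ℕ) : Fin n) : Fin n) ≠ ((e'*(n/2) : ℕ) : Fin n) := by
    intro e e' he he' hee hc
    have := congrArg Fin.val hc
    rw [Fin.val_natCast, Fin.val_natCast] at this
    exact hee (odd_inj hn2 he he' this)
  refine ⟨?_, ?_, ?_, ?_⟩
  · exact key (2*j) (2*i) (by omega) (by omega) (by omega)
  · exact (by
      have := key (2*j) (2*i+1) (by omega) (by omega) (by omega)
      rwa [show (2*i+1)*(n/2) = (2*i+1)*(n/2) from rfl] at this)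
  · exact key (2*j+1) (2*i) (by omega) (by omega) (by omega)
  · exact key (2*j+1) (2*i+1) (by omega) (by omega) (by omega)

end Concrete


lemma min_eq_G (n g : ℕ) (hn : 2 ≤ n) (hg : 1 ≤ g) :
    min (g * n / 2) (n.choose 2) = (min g (n-1)) * n / 2 := by
  rcases le_or_gt n g with h | h
  · have hG : min g (n-1) = n - 1 := min_eq_right (by omega)
    have hch : n.choose 2 = n * (n-1) / 2 := Nat.choose_two_right n
    have hle : n * (n-1) ≤ g * n := by
      calc n * (n-1) = (n-1) * n := mul_comm _ _
        _ ≤ g * n := Nat.mul_le_mul (by omega) (le_refl n)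
    rw [hG, hch, min_eq_right (Nat.div_le_div_right hle), mul_comm]
  · have hG : min g (n-1) = g := min_eq_left (by omega)
    have hch : n.choose 2 = n * (n-1) / 2 := Nat.choose_two_right n
    have hle : g * n ≤ n * (n-1) := by
      calc g * n ≤ (n-1) * n := Nat.mul_le_mul (by omega) (le_refl n)
        _ = n * (n-1) := mul_comm _ _
    rw [hG, hch, min_eq_left (Nat.div_le_div_right hle)]

lemma exists_good_code (n g : ℕ) (hn : 2 ≤ n) (hg : 1 ≤ g) :
    ∃ C : Finset (Fin n → Fin (g+1)), IsCWCode n (g+1) 3 2 C ∧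
      C.card = min (g * n / 2) (n.choose 2) := by
  haveI : NeZero n := ⟨by omega⟩
  set G := min g (n-1) with hG_def
  have hGg : G ≤ g := min_le_left _ _
  have hGn : G ≤ n - 1 := min_le_right _ _
  have hG1 : 1 ≤ G := le_min hg (by omega)
  set k := G / 2 with hk_def
  have hkn : 2 * k < n := by omega
  have hkg : 2 * k ≤ g := by omega
  have hmin : min (g * n / 2) (n.choose 2) = G * n / 2 := min_eq_G n g hn hg
  rcases Nat.even_or_odd G with hev | hod
  · -- G even : no matching needed
    have hG2 : G = 2 * k := by
      rw [Nat.even_iff] at hev; omega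
    obtain ⟨C, hC, hCc⟩ := exists_code g k hn hkn hkg (Ecirc n k) ∅
      (Ecirc_dd (by omega)) (by simp) (fun h => absurd rfl h) (by simp)
    refine ⟨C, hC, ?_⟩
    rw [hCc, Ecirc_card (by omega), Finset.card_empty, hmin,
      show G * n = (n * k) * 2 by rw [hG2]; ring, Nat.mul_div_cancel _ (by norm_num)]
    exact Nat.add_zero _
  · -- G odd : add a matching of size n/2
    have hG2 : G = 2 * k + 1 := by
      rw [Nat.odd_iff] at hod; omega
    have hkm : k < n/2 ∧ k < n - n/2 ∧ 2*k < g := by omega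
    have hcard_goal : n * k + n / 2 = G * n / 2 := by
      rw [show G * n = n + (n * k) * 2 by rw [hG2]; ring,
        Nat.add_mul_div_right _ _ (by norm_num : (0:ℕ) < 2)]
      exact add_comm _ _
    rcases Nat.even_or_odd n with hnev | hnod
    · have hn2 : n % 2 = 0 := Nat.even_iff.1 hnev
      obtain ⟨C, hC, hCc⟩ := exists_code g k hn hkn hkg (Ecirc n k) (EmatchEven n)
        (Ecirc_dd (by omega)) (EmatchEven_dd hn) (fun _ => hkm) (EmatchEven_disj hn2)
      refine ⟨C, hC, ?_⟩
      rw [hCc, Ecirc_card (by omega), EmatchEven_card hn2, hmin, hcard_goal]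
    · have hn2 : n % 2 = 1 := Nat.odd_iff.1 hnod
      obtain ⟨C, hC, hCc⟩ := exists_code g k hn hkn hkg (Ecirc n k) (EmatchOdd n)
        (Ecirc_dd (by omega)) (EmatchOdd_dd hn hn2) (fun _ => hkm) (EmatchOdd_disj hn2)
      refine ⟨C, hC, ?_⟩
      rw [hCc, Ecirc_card (by omega), EmatchOdd_card hn2, hmin, hcard_goal]


lemma fin_eq_zero_of_val {q : ℕ} [NeZero q] {a : Fin q} (h : ¬ (a : ℕ) ≠ 0) : a = 0 :=
  Fin.ext (by simp [not_not.1 h])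

lemma upper_bound (n g : ℕ) (hn : 2 ≤ n) (C : Finset (Fin n → Fin (g+1)))
    (hC : IsCWCode n (g+1) 3 2 C) : C.card ≤ min (g * n / 2) (n.choose 2) := by
  classical
  obtain ⟨hw, hd⟩ := hC
  set supp : (Fin n → Fin (g+1)) → Finset (Fin n) :=
    fun x => Finset.univ.filter (fun i => (x i : ℕ) ≠ 0) with hsupp_def
  have hsc : ∀ x ∈ C, (supp x).card = 2 := hw
  refine le_min ?_ ?_
  · -- the pair-counting bound : C.card * 2 ≤ g * n
    rw [Nat.le_div_iff_mul_le (by norm_num : (0:ℕ) < 2)]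
    have h4 : C.card * 2 = ∑ i : Fin n, (C.filter fun x => (x i : ℕ) ≠ 0).card := by
      calc C.card * 2 = ∑ _x ∈ C, 2 := by rw [Finset.sum_const, smul_eq_mul, mul_comm]
        _ = ∑ x ∈ C, (supp x).card := (Finset.sum_congr rfl (fun x hx => (hsc x hx).symm))
        _ = ∑ x ∈ C, ∑ i : Fin n, (if (x i : ℕ) ≠ 0 then 1 else 0) :=
            Finset.sum_congr rfl (fun x _ => Finset.card_filter _ _)
        _ = ∑ i : Fin n, ∑ x ∈ C, (if (x i : ℕ) ≠ 0 then 1 else 0) := Finset.sum_comm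
        _ = ∑ i : Fin n, (C.filter fun x => (x i : ℕ) ≠ 0).card :=
            Finset.sum_congr rfl (fun i _ => (Finset.card_filter _ _).symm)
    have h5 : ∀ i : Fin n, (C.filter fun x => (x i : ℕ) ≠ 0).card ≤ g := by
      intro i
      have hle : (C.filter fun x => (x i : ℕ) ≠ 0).card ≤
          ((Finset.univ : Finset (Fin (g+1))).erase 0).card := by
        apply Finset.card_le_card_of_injOn (fun x => x i)
        · intro x hx
          rw [Finset.mem_coe, Finset.mem_filter] at hx
          exact Finset.mem_erase.2 ⟨fun hc => hx.2 (by rw [show x i = 0 from hc]; rfl), Finset.mem_univ _⟩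
        · intro x hx y hy hxy
          rw [Finset.mem_coe, Finset.mem_filter] at hx hy
          by_contra hne
          have h3d := hd x hx.1 y hy.1 hne
          have hix : i ∈ supp x := by
            rw [hsupp_def]; exact Finset.mem_filter.2 ⟨Finset.mem_univ _, hx.2⟩
          have hiy : i ∈ supp y := by
            rw [hsupp_def]; exact Finset.mem_filter.2 ⟨Finset.mem_univ _, hy.2⟩
          have hsub : Finset.univ.filter (fun t => x t ≠ y t) ⊆
              ((supp x).erase i) ∪ ((supp y).erase i) := by
            intro t ht
            rw [Finset.mem_filter] at ht
            have hti : t ≠ i := fun hc => ht.2 (by rw [hc]; exact hxy)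
            rcases Classical.em ((x t : ℕ) ≠ 0) with h | h
            · exact Finset.mem_union_left _ (Finset.mem_erase.2 ⟨hti,
                Finset.mem_filter.2 ⟨Finset.mem_univ _, h⟩⟩)
            · rcases Classical.em ((y t : ℕ) ≠ 0) with h' | h'
              · exact Finset.mem_union_right _ (Finset.mem_erase.2 ⟨hti,
                  Finset.mem_filter.2 ⟨Finset.mem_univ _, h'⟩⟩)
              · exact absurd ((fin_eq_zero_of_val h).trans (fin_eq_zero_of_val h').symm) ht.2
          have hdist : hammingDist x y ≤ 2 := by
            calc hammingDist x y = (Finset.univ.filter (fun t => x t ≠ y t)).card := rfl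
              _ ≤ (((supp x).erase i) ∪ ((supp y).erase i)).card := Finset.card_le_card hsub
              _ ≤ ((supp x).erase i).card + ((supp y).erase i).card := Finset.card_union_le _ _
              _ ≤ 2 := by
                  rw [Finset.card_erase_of_mem hix, Finset.card_erase_of_mem hiy,
                    hsc x hx.1, hsc y hy.1]
          exact absurd (h3d.trans hdist) (by norm_num)
      calc (C.filter fun x => (x i : ℕ) ≠ 0).card
          ≤ ((Finset.univ : Finset (Fin (g+1))).erase 0).card := hle
        _ = g := by
            rw [Finset.card_erase_of_mem (Finset.mem_univ _), Finset.card_univ,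
              Fintype.card_fin]
            exact Nat.add_sub_cancel g 1
    calc C.card * 2 = ∑ i : Fin n, (C.filter fun x => (x i : ℕ) ≠ 0).card := h4
      _ ≤ ∑ _i : Fin n, g := Finset.sum_le_sum (fun i _ => h5 i)
      _ = n * g := by rw [Finset.sum_const, smul_eq_mul, Finset.card_univ, Fintype.card_fin]
      _ = g * n := mul_comm _ _
  · -- the support bound : distinct codewords have distinct supports
    have hinj : Set.InjOn supp C := by
      intro x hx y hy hxy
      rw [Finset.mem_coe] at hx hy
      by_contra hne
      have h3d := hd x hx y hy hne
      have hsub : Finset.univ.filter (fun t => x t ≠ y t) ⊆ supp x := by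
        intro t ht
        rw [Finset.mem_filter] at ht
        rcases Classical.em ((x t : ℕ) ≠ 0) with h | h
        · exact Finset.mem_filter.2 ⟨Finset.mem_univ _, h⟩
        · rcases Classical.em ((y t : ℕ) ≠ 0) with h' | h'
          · rw [hxy]; exact Finset.mem_filter.2 ⟨Finset.mem_univ _, h'⟩
          · exact absurd ((fin_eq_zero_of_val h).trans (fin_eq_zero_of_val h').symm) ht.2
      have hdist : hammingDist x y ≤ 2 := by
        calc hammingDist x y = (Finset.univ.filter (fun t => x t ≠ y t)).card := rfl
          _ ≤ (supp x).card := Finset.card_le_card hsub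
          _ = 2 := hsc x hx
      exact absurd (h3d.trans hdist) (by norm_num)
    calc C.card = (C.image supp).card := (Finset.card_image_of_injOn hinj).symm
      _ ≤ (Finset.powersetCard 2 (Finset.univ : Finset (Fin n))).card := by
          apply Finset.card_le_card
          intro s hs
          obtain ⟨x, hx, rfl⟩ := Finset.mem_image.1 hs
          exact Finset.mem_powersetCard.2 ⟨Finset.subset_univ _, hsc x hx⟩
      _ = n.choose 2 := by
          rw [Finset.card_powersetCard, Finset.card_univ, Fintype.card_fin]


/-- `A_{g+1}(n,3,2) = min(⌊gn/2⌋, C(n,2))`; in particular it equals `⌊gn/2⌋`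
when `n > g` and `C(n,2)` when `n ≤ g`. -/
theorem Aq_n_3_2 (n g : ℕ) (hn : 2 ≤ n) (hg : 1 ≤ g) :
    (∃ C : Finset (Fin n → Fin (g + 1)), IsCWCode n (g + 1) 3 2 C ∧
        C.card = min (g * n / 2) (n.choose 2)) ∧
    (∀ C : Finset (Fin n → Fin (g + 1)), IsCWCode n (g + 1) 3 2 C →
        C.card ≤ min (g * n / 2) (n.choose 2)) ∧
    (n > g → min (g * n / 2) (n.choose 2) = g * n / 2) ∧
    (n ≤ g → min (g * n / 2) (n.choose 2) = n.choose 2) := by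
  refine ⟨exists_good_code n g hn hg, fun C hC => upper_bound n g hn C hC, ?_, ?_⟩
  · intro h
    apply min_eq_left
    rw [Nat.choose_two_right]
    apply Nat.div_le_div_right
    calc g * n ≤ (n-1) * n := Nat.mul_le_mul (by omega) (le_refl n)
      _ = n * (n-1) := mul_comm _ _
  · intro h
    apply min_eq_right
    rw [Nat.choose_two_right]
    apply Nat.div_le_div_right
    calc n * (n-1) = (n-1) * n := mul_comm _ _
      _ ≤ g * n := Nat.mul_le_mul (by omega) (le_refl n)
end

section
/- For all integers n ≥ 2 and g ≥ 1, there exists a partition of H (the set of all words of length n and weight 2 over ℤ_{g+1}) into g subsets such that each subset has cardinality C(n,2)·g and any two distinct words lying in the same subset have Hamming distance at least 2. (This is an optimal decomposition of the complete multipartite graph K_{n×g} with respect to distance 2.) -/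
/-- The set `H(m)` of all words of length `m` and weight `2` over `ℤ_{g+1}`. -/
def weightTwoWords (m g : ℕ) : Finset (Fin m → Fin (g + 1)) :=
  Finset.univ.filter (fun x => wordWeight x = 2)

/-- A partition of `H(m)` (words of length `m`, weight `2` over `ℤ_{g+1}`) into
`k` subsets, each of cardinality `s`, with pairwise Hamming distance at least
`d` inside each subset. -/
def HasDistPartition (m g k s d : ℕ) : Prop :=
  ∃ P : Fin k → Finset (Fin m → Fin (g + 1)),
    (∀ i j, i ≠ j → Disjoint (P i) (P j)) ∧
    (Finset.univ.biUnion P = weightTwoWords m g) ∧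
    (∀ i, (P i).card = s) ∧
    (∀ i, ∀ x ∈ P i, ∀ y ∈ P i, x ≠ y → d ≤ hammingDist x y)


namespace OptDecomp
variable {n g : ℕ}

def mkW (i j : Fin n) (a b : Fin (g+1)) : Fin n → Fin (g+1) :=
  fun t => if t = i then a else if t = j then b else 0

lemma mkW_support (i j : Fin n) (hij : i ≠ j) (a b : Fin (g+1))
    (ha : (a : ℕ) ≠ 0) (hb : (b : ℕ) ≠ 0) :
    (Finset.univ.filter (fun t => ((mkW i j a b t : Fin (g+1)) : ℕ) ≠ 0)) = {i, j} := by
  ext t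
  simp only [Finset.mem_filter, Finset.mem_univ, true_and, Finset.mem_insert,
    Finset.mem_singleton]
  simp only [mkW]
  split_ifs with h1 h2 <;> simp_all

lemma mkW_sum (i j : Fin n) (hij : i ≠ j) (a b : Fin (g+1)) :
    ∑ t, ((mkW i j a b t : Fin (g+1)) : ℕ) = (a : ℕ) + b := by
  rw [← Finset.sum_subset (Finset.subset_univ ({i, j} : Finset (Fin n)))]
  · rw [Finset.sum_pair hij]
    simp [mkW, hij, (Ne.symm hij)]
  · intro t _ ht
    simp only [Finset.mem_insert, Finset.mem_singleton, not_or] at ht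
    simp [mkW, ht.1, ht.2]

lemma decode (x : Fin n → Fin (g+1)) (i j : Fin n)
    (hs : (Finset.univ.filter (fun t => ((x t : Fin (g+1)) : ℕ) ≠ 0)) = {i, j}) :
    x = mkW i j (x i) (x j) := by
  funext t
  simp only [mkW]
  split_ifs with h1 h2
  · rw [h1]
  · rw [h2]
  · have ht : t ∉ ({i, j} : Finset (Fin n)) := by simp [h1, h2]
    rw [← hs] at ht
    simp only [Finset.mem_filter, Finset.mem_univ, true_and, not_not] at ht
    exact Fin.ext ht

lemma mod_inj {v w : ℕ} (hv1 : 1 ≤ v) (hvg : v ≤ g) (hw1 : 1 ≤ w) (hwg : w ≤ g)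
    (h : v % g = w % g) : v = w := by
  rcases eq_or_lt_of_le hvg with rfl | hv
  · rcases eq_or_lt_of_le hwg with rfl | hw
    · rfl
    · rw [Nat.mod_self, Nat.mod_eq_of_lt hw] at h; omega
  · rcases eq_or_lt_of_le hwg with rfl | hw
    · rw [Nat.mod_self, Nat.mod_eq_of_lt hv] at h; omega
    · rwa [Nat.mod_eq_of_lt hv, Nat.mod_eq_of_lt hw] at h

lemma pair_nonempty (i j : Fin n) : ({i, j} : Finset (Fin n)).Nonempty :=
  ⟨i, Finset.mem_insert_self i {j}⟩

lemma min'_pair {i j : Fin n} (h : i < j) :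
    ({i, j} : Finset (Fin n)).min' (pair_nonempty i j) = i := by
  refine le_antisymm (Finset.min'_le _ i (by simp)) (Finset.le_min' _ _ _ ?_)
  intro y hy
  simp only [Finset.mem_insert, Finset.mem_singleton] at hy
  rcases hy with rfl | rfl
  · exact le_rfl
  · exact h.le

lemma max'_pair {i j : Fin n} (h : i < j) :
    ({i, j} : Finset (Fin n)).max' (pair_nonempty i j) = j := by
  refine le_antisymm (Finset.max'_le _ _ _ ?_) (Finset.le_max' _ j (by simp))
  intro y hy
  simp only [Finset.mem_insert, Finset.mem_singleton] at hy
  rcases hy with rfl | rfl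
  · exact h.le
  · exact le_rfl

/-- The encoding map for class `c`. -/
def enc (hg : 1 ≤ g) (c : Fin g) (S : Finset (Fin n)) (hne : S.Nonempty) (a : Fin g) :
    Fin n → Fin (g+1) :=
  mkW (S.min' hne) (S.max' hne) (Fin.succ a)
    (Fin.succ ⟨((c : ℕ) + 2*g - (a : ℕ) - 2) % g, Nat.mod_lt _ hg⟩)

lemma eq_pair (S : Finset (Fin n)) (h : S.card = 2) (hne : S.Nonempty) :
    S = {S.min' hne, S.max' hne} := by
  have hlt : S.min' hne < S.max' hne := S.min'_lt_max'_of_card (by omega)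
  refine (Finset.eq_of_subset_of_card_le ?_ ?_).symm
  · intro t ht
    simp only [Finset.mem_insert, Finset.mem_singleton] at ht
    rcases ht with rfl | rfl
    · exact S.min'_mem hne
    · exact S.max'_mem hne
  · rw [h, Finset.card_pair hlt.ne]

lemma enc_weight (hg : 1 ≤ g) (c : Fin g) (S : Finset (Fin n)) (h2 : S.card = 2)
    (hne : S.Nonempty) (a : Fin g) : wordWeight (enc hg c S hne a) = 2 := by
  have hlt : S.min' hne < S.max' hne := S.min'_lt_max'_of_card (by omega)
  rw [wordWeight, enc, mkW_support _ _ hlt.ne _ _ (by simp) (by simp),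
    Finset.card_pair hlt.ne]

lemma enc_sum (hg : 1 ≤ g) (c : Fin g) (S : Finset (Fin n)) (h2 : S.card = 2)
    (hne : S.Nonempty) (a : Fin g) :
    (∑ t, ((enc hg c S hne a t : Fin (g+1)) : ℕ)) % g = c := by
  have hlt : S.min' hne < S.max' hne := S.min'_lt_max'_of_card (by omega)
  rw [enc, mkW_sum _ _ hlt.ne]
  have ha : (a : ℕ) < g := a.isLt
  simp only [Fin.val_succ]
  have h1 : (a : ℕ) + 1 + (((c : ℕ) + 2*g - (a : ℕ) - 2) % g + 1)
      = ((c : ℕ) + 2*g - (a : ℕ) - 2) % g + ((a : ℕ) + 2) := by omega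
  rw [h1, Nat.mod_add_mod]
  have h3 : (c : ℕ) + 2*g - (a : ℕ) - 2 + ((a : ℕ) + 2) = (c : ℕ) + 2*g := by omega
  rw [h3, Nat.add_mul_mod_self_right, Nat.mod_eq_of_lt c.isLt]

lemma enc_inj (hg : 1 ≤ g) (c : Fin g) (S T : Finset (Fin n)) (hS2 : S.card = 2)
    (hT2 : T.card = 2) (hSne : S.Nonempty) (hTne : T.Nonempty) (a b : Fin g)
    (h : enc hg c S hSne a = enc hg c T hTne b) : S = T ∧ a = b := by
  have hSl : S.min' hSne < S.max' hSne := S.min'_lt_max'_of_card (by omega)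
  have hTl : T.min' hTne < T.max' hTne := T.min'_lt_max'_of_card (by omega)
  have hsupp := congrArg
    (fun x : Fin n → Fin (g+1) =>
      Finset.univ.filter (fun t => ((x t : Fin (g+1)) : ℕ) ≠ 0)) h
  rw [enc, enc] at hsupp
  rw [mkW_support _ _ hSl.ne _ _ (by simp) (by simp),
    mkW_support _ _ hTl.ne _ _ (by simp) (by simp)] at hsupp
  have hST : S = T := by
    rw [eq_pair S hS2 hSne, eq_pair T hT2 hTne, hsupp]
  refine ⟨hST, ?_⟩
  have hmin : S.min' hSne = T.min' hTne := by
    subst hST; rfl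
  have hval := congrFun h (S.min' hSne)
  simp only [enc, mkW, if_pos rfl] at hval
  rw [hmin, if_pos rfl] at hval
  exact Fin.succ_injective _ hval

lemma enc_surj (hg : 1 ≤ g) (c : Fin g) (x : Fin n → Fin (g+1))
    (hw2 : wordWeight x = 2)
    (hsum : (∑ t, ((x t : Fin (g+1)) : ℕ)) % g = (c : ℕ)) :
    ∃ (S : Finset (Fin n)) (a : Fin g), S.card = 2 ∧
      ∀ hne : S.Nonempty, enc hg c S hne a = x := by
  rw [wordWeight] at hw2
  obtain ⟨i, j, hij, hSeq⟩ := Finset.card_eq_two.mp hw2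
  -- wlog i < j
  wlog hlt : i < j generalizing i j
  · exact this j i hij.symm (by rwa [Finset.pair_comm] at hSeq)
      ((lt_or_gt_of_ne hij).resolve_left hlt)
  have hxi : ((x i : Fin (g+1)) : ℕ) ≠ 0 := by
    have : i ∈ Finset.univ.filter (fun t => ((x t : Fin (g+1)) : ℕ) ≠ 0) := by
      rw [hSeq]; exact Finset.mem_insert_self i {j}
    exact (Finset.mem_filter.mp this).2
  have hxj : ((x j : Fin (g+1)) : ℕ) ≠ 0 := by
    have : j ∈ Finset.univ.filter (fun t => ((x t : Fin (g+1)) : ℕ) ≠ 0) := by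
      rw [hSeq]; simp
    exact (Finset.mem_filter.mp this).2
  have hxig : ((x i : Fin (g+1)) : ℕ) ≤ g := Fin.is_le _
  have hxjg : ((x j : Fin (g+1)) : ℕ) ≤ g := Fin.is_le _
  have hdec : x = mkW i j (x i) (x j) := decode x i j hSeq
  refine ⟨{i, j}, ⟨((x i : Fin (g+1)) : ℕ) - 1, by omega⟩,
    Finset.card_pair hij, fun hne => ?_⟩
  have hmin : ({i, j} : Finset (Fin n)).min' hne = i := min'_pair hlt
  have hmax : ({i, j} : Finset (Fin n)).max' hne = j := max'_pair hlt
  rw [enc, hmin, hmax]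
  have hai : Fin.succ (⟨((x i : Fin (g+1)) : ℕ) - 1, by omega⟩ : Fin g) = x i := by
    apply Fin.ext
    simp only [Fin.val_succ]
    omega
  have hsum' : (((x i : Fin (g+1)) : ℕ) + ((x j : Fin (g+1)) : ℕ)) % g = (c : ℕ) := by
    rw [hdec] at hsum
    rwa [mkW_sum _ _ hij] at hsum
  have hbj : Fin.succ (⟨((c : ℕ) + 2*g - (((x i : Fin (g+1)) : ℕ) - 1) - 2) % g,
      Nat.mod_lt _ hg⟩ : Fin g) = x j := by
    apply Fin.ext
    simp only [Fin.val_succ]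
    have hwlt : ((c : ℕ) + 2*g - (((x i : Fin (g+1)) : ℕ) - 1) - 2) % g < g :=
      Nat.mod_lt _ hg
    have hcong : (((x i : Fin (g+1)) : ℕ)
        + (((c : ℕ) + 2*g - (((x i : Fin (g+1)) : ℕ) - 1) - 2) % g + 1)) % g = (c : ℕ) := by
      have h1 : ((x i : Fin (g+1)) : ℕ)
          + (((c : ℕ) + 2*g - (((x i : Fin (g+1)) : ℕ) - 1) - 2) % g + 1)
          = ((c : ℕ) + 2*g - (((x i : Fin (g+1)) : ℕ) - 1) - 2) % g
            + (((x i : Fin (g+1)) : ℕ) + 1) := by omega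
      rw [h1, Nat.mod_add_mod]
      have h3 : (c : ℕ) + 2*g - (((x i : Fin (g+1)) : ℕ) - 1) - 2
          + (((x i : Fin (g+1)) : ℕ) + 1) = (c : ℕ) + 2*g := by omega
      rw [h3, Nat.add_mul_mod_self_right, Nat.mod_eq_of_lt c.isLt]
    have hmm : ((x j : Fin (g+1)) : ℕ) % g
        = (((c : ℕ) + 2*g - (((x i : Fin (g+1)) : ℕ) - 1) - 2) % g + 1) % g :=
      Nat.ModEq.add_left_cancel' _ (hsum'.trans hcong.symm)
    have := mod_inj (g := g) (by omega) hxjg (by omega) (by omega) hmm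
    omega
  rw [hai, hbj, ← hdec]

end OptDecomp

open OptDecomp

/-- Optimal decomposition of `K_{n×g}` with respect to distance 2: a partition
of `H` into `g` subsets, each of cardinality `C(n,2)·g` and with pairwise
Hamming distance at least 2. -/
theorem optimal_decomposition_dist_two (n g : ℕ) (hn : 2 ≤ n) (hg : 1 ≤ g) :
    HasDistPartition n g g (n.choose 2 * g) 2 := by
  classical
  refine ⟨fun c => (weightTwoWords n g).filter
      (fun x => (∑ t, ((x t : Fin (g+1)) : ℕ)) % g = c.val), ?_, ?_, ?_, ?_⟩
  · -- disjointness
    intro i j hij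
    rw [Finset.disjoint_left]
    intro x hx hy
    simp only [Finset.mem_filter] at hx hy
    exact hij (Fin.ext (hx.2.symm.trans hy.2))
  · -- cover
    ext x
    simp only [Finset.mem_biUnion, Finset.mem_univ, true_and]
    constructor
    · rintro ⟨c, hc⟩
      exact (Finset.mem_filter.mp hc).1
    · intro hx
      exact ⟨⟨_ % g, Nat.mod_lt _ hg⟩, Finset.mem_filter.mpr ⟨hx, rfl⟩⟩
  · -- cardinality
    intro c
    have hE : (((Finset.univ : Finset (Fin n)).powersetCard 2) ×ˢ
        (Finset.univ : Finset (Fin g))).card = n.choose 2 * g := by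
      rw [Finset.card_product, Finset.card_powersetCard]
      simp
    rw [← hE]
    have hSne : ∀ p : Finset (Fin n) × Fin g,
        p ∈ ((Finset.univ : Finset (Fin n)).powersetCard 2) ×ˢ
          (Finset.univ : Finset (Fin g)) → p.1.Nonempty := by
      intro p hp
      have h2 : p.1.card = 2 := (Finset.mem_powersetCard.mp (Finset.mem_product.mp hp).1).2
      exact Finset.card_pos.mp (by omega)
    have hcard2 : ∀ p : Finset (Fin n) × Fin g,
        p ∈ ((Finset.univ : Finset (Fin n)).powersetCard 2) ×ˢ
          (Finset.univ : Finset (Fin g)) → p.1.card = 2 :=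
      fun p hp => (Finset.mem_powersetCard.mp (Finset.mem_product.mp hp).1).2
    refine (Finset.card_bij (fun p hp => enc hg c p.1 (hSne p hp) p.2) ?_ ?_ ?_).symm
    · intro p hp
      simp only [Finset.mem_filter, weightTwoWords, Finset.mem_univ, true_and]
      exact ⟨enc_weight hg c p.1 (hcard2 p hp) _ p.2, enc_sum hg c p.1 (hcard2 p hp) _ p.2⟩
    · intro p hp q hq heq
      obtain ⟨h1, h2⟩ := enc_inj hg c p.1 q.1 (hcard2 p hp) (hcard2 q hq) _ _ p.2 q.2 heq
      exact Prod.ext h1 h2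
    · intro x hx
      simp only [Finset.mem_filter, weightTwoWords, Finset.mem_univ, true_and] at hx
      obtain ⟨S, a, hS2, hall⟩ := enc_surj hg c x hx.1 hx.2
      refine ⟨⟨S, a⟩, Finset.mem_product.mpr
        ⟨Finset.mem_powersetCard.mpr ⟨Finset.subset_univ _, hS2⟩, Finset.mem_univ _⟩, hall _⟩
  · -- distance
    intro c x hx y hy hxy
    by_contra hcon
    push_neg at hcon
    have hd1 : hammingDist x y = 1 := by
      have h0 : hammingDist x y ≠ 0 := fun h => hxy (hammingDist_eq_zero.mp h)
      omega
    have hdd : hammingDist x y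
        = (Finset.univ.filter (fun t => x t ≠ y t)).card := rfl
    rw [hdd] at hd1
    obtain ⟨k, hk⟩ := Finset.card_eq_one.mp hd1
    have hxk : x k ≠ y k := by
      have : k ∈ Finset.univ.filter (fun t => x t ≠ y t) := by rw [hk]; simp
      simpa using (Finset.mem_filter.mp this).2
    have hoff : ∀ t, t ≠ k → x t = y t := by
      intro t ht
      by_contra hne
      have : t ∈ Finset.univ.filter (fun t => x t ≠ y t) := by simp [hne]
      rw [hk] at this
      simp at this
      exact ht this
    simp only [Finset.mem_filter, weightTwoWords, Finset.mem_univ, true_and] at hx hy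
    obtain ⟨hwx, hsx⟩ := hx
    obtain ⟨hwy, hsy⟩ := hy
    have key : ∀ u v : Fin n → Fin (g+1), wordWeight u = 2 → wordWeight v = 2 →
        (∀ t, t ≠ k → u t = v t) → u k ≠ v k → ((u k : Fin (g+1)) : ℕ) = 0 → False := by
      intro u v hu hv hof hne h0
      have hv0 : ((v k : Fin (g+1)) : ℕ) ≠ 0 := by
        intro h
        exact hne (Fin.ext (h0.trans h.symm))
      have hins : Finset.univ.filter (fun t => ((v t : Fin (g+1)) : ℕ) ≠ 0)
          = insert k (Finset.univ.filter (fun t => ((u t : Fin (g+1)) : ℕ) ≠ 0)) := by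
        ext t
        by_cases htk : t = k
        · subst htk
          simp [hv0]
          exact fun h => hv0 (by simp [h])
        · simp only [Finset.mem_filter, Finset.mem_univ, true_and, Finset.mem_insert, htk,
            false_or]
          rw [hof t htk]
      have hkn : k ∉ Finset.univ.filter (fun t => ((u t : Fin (g+1)) : ℕ) ≠ 0) := by
        simp [h0]
        exact Fin.ext (by simp [h0])
      have := congrArg Finset.card hins
      rw [Finset.card_insert_of_notMem hkn] at this
      rw [wordWeight] at hu hv
      omega
    have hx0 : ((x k : Fin (g+1)) : ℕ) ≠ 0 := fun h => key x y hwx hwy hoff hxk h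
    have hy0 : ((y k : Fin (g+1)) : ℕ) ≠ 0 := fun h =>
      key y x hwy hwx (fun t ht => (hoff t ht).symm) (Ne.symm hxk) h
    have hsplitx : ∑ t, ((x t : Fin (g+1)) : ℕ)
        = ((x k : Fin (g+1)) : ℕ) + ∑ t ∈ Finset.univ.erase k, ((x t : Fin (g+1)) : ℕ) :=
      (Finset.add_sum_erase _ _ (Finset.mem_univ k)).symm
    have hsplity : ∑ t, ((y t : Fin (g+1)) : ℕ)
        = ((y k : Fin (g+1)) : ℕ) + ∑ t ∈ Finset.univ.erase k, ((y t : Fin (g+1)) : ℕ) :=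
      (Finset.add_sum_erase _ _ (Finset.mem_univ k)).symm
    have herase : ∑ t ∈ Finset.univ.erase k, ((x t : Fin (g+1)) : ℕ)
        = ∑ t ∈ Finset.univ.erase k, ((y t : Fin (g+1)) : ℕ) :=
      Finset.sum_congr rfl (fun t ht => by rw [hoff t (Finset.ne_of_mem_erase ht)])
    rw [hsplitx, herase] at hsx
    rw [hsplity] at hsy
    have hmm : ((x k : Fin (g+1)) : ℕ) % g = ((y k : Fin (g+1)) : ℕ) % g :=
      Nat.ModEq.add_right_cancel' _ (hsx.trans hsy.symm)
    have hxg : ((x k : Fin (g+1)) : ℕ) ≤ g := Fin.is_le _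
    have hyg : ((y k : Fin (g+1)) : ℕ) ≤ g := Fin.is_le _
    have := mod_inj (g := g) (by omega) hxg (by omega) hyg hmm
    exact hxk (Fin.ext this)
end

section
/- For all integers n ≥ 2 and g ≥ 1, there exists a partition of H (the set of all words of length n and weight 2 over ℤ_{g+1}) into subsets such that each subset has cardinality ⌊n/2⌋ and any two distinct words lying in the same subset have Hamming distance at least 4; the number of subsets in such a partition is g²·(n−1) if n is even and g²·n if n is odd. (This is an optimal decomposition of the complete multipartite graph K_{n×g} with respect to distance 4.) -/
namespace OptDecomp

/-- Number of (near-)one-factors of `K_n`. -/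
def k0 (n : ℕ) : ℕ := if Even n then n - 1 else n

/-- Index of the factor containing a given edge. -/
def widx (n : ℕ) (p : Fin n × Fin n) : ℕ :=
  if Even n then
    (if (p.2 : ℕ) = n - 1 then (2 * (p.1 : ℕ)) % (n - 1)
     else ((p.1 : ℕ) + (p.2 : ℕ)) % (n - 1))
  else ((p.1 : ℕ) + (p.2 : ℕ)) % n

lemma mod_inj_s4 {m x y : ℕ} (hx : x < m) (hy : y < m) (h : x % m = y % m) : x = y := by
  rwa [Nat.mod_eq_of_lt hx, Nat.mod_eq_of_lt hy] at h

lemma add_cancel_mod {m z x y : ℕ} (hx : x < m) (hy : y < m)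
    (h : (z + x) % m = (z + y) % m) : x = y := by
  have := (Nat.ModEq.add_left_cancel' z h)
  exact mod_inj_s4 hx hy this

lemma add_mod_inj {m x y z w : ℕ} (hy : y < m) (hw : w < m) (hxz : x = z)
    (h : (x + y) % m = (z + w) % m) : y = w := by
  subst hxz; exact add_cancel_mod hy hw h

lemma add_mod_inj_right {m x y z w : ℕ} (hx : x < m) (hz : z < m) (hyw : y = w)
    (h : (x + y) % m = (z + w) % m) : x = z := by
  subst hyw
  rw [Nat.add_comm x y, Nat.add_comm z y] at h
  exact add_cancel_mod hx hz h

lemma two_mul_cancel_mod {m x y : ℕ} (hm : Odd m) (hx : x < m) (hy : y < m)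
    (h : (2 * x) % m = (2 * y) % m) : x = y := by
  have h2 : ¬ (2 ∣ m) := by rcases hm with ⟨c, rfl⟩; omega
  have hco : Nat.Coprime 2 m := (Nat.Prime.coprime_iff_not_dvd Nat.prime_two).mpr h2
  have := (Nat.ModEq.cancel_left_of_coprime (by simpa [Nat.Coprime] using hco)
    (h : (2*x) ≡ 2*y [MOD m]))
  exact mod_inj_s4 hx hy this

lemma widx_lt {n : ℕ} (hn : 2 ≤ n) (p : Fin n × Fin n) : widx n p < k0 n := by
  unfold widx k0
  by_cases he : Even n <;> simp [he]
  · have : 0 < n - 1 := by omega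
    split <;> exact Nat.mod_lt _ this
  · exact Nat.mod_lt _ (by omega)

lemma widx_disj {n : ℕ} (hn : 2 ≤ n) {p q : Fin n × Fin n} (hp : p.1 < p.2) (hq : q.1 < q.2)
    (h : widx n p = widx n q) (hne : p ≠ q) :
    p.1 ≠ q.1 ∧ p.1 ≠ q.2 ∧ p.2 ≠ q.1 ∧ p.2 ≠ q.2 := by
  obtain ⟨a, b⟩ := p
  obtain ⟨c, d⟩ := q
  simp only [Fin.lt_def] at hp hq
  have hb : (b : ℕ) < n := b.isLt
  have hd : (d : ℕ) < n := d.isLt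
  have hpq : (a : ℕ) ≠ c ∨ (b : ℕ) ≠ d := by
    by_contra hcon
    push_neg at hcon
    exact hne (by simp [Prod.ext_iff, Fin.ext_iff, hcon.1, hcon.2])
  unfold widx at h
  simp only [ne_eq, Fin.ext_iff]
  by_cases he : Even n
  · simp only [he, if_true] at h
    set m := n - 1 with hm
    have hmodd : Odd m := by
      rcases he with ⟨c', rfl⟩; exact ⟨c' - 1, by omega⟩
    have ham : (a : ℕ) < m := by omega
    have hcm : (c : ℕ) < m := by omega
    by_cases h1 : (b : ℕ) = n - 1 <;> by_cases h2 : (d : ℕ) = n - 1 <;>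
      simp only [hm, h1, h2, if_true, if_false] at h
    · -- both edges contain the vertex n-1
      exfalso
      have hac := two_mul_cancel_mod hmodd ham hcm h
      rcases hpq with h' | h' <;> omega
    · -- first edge contains n-1, second does not
      have hdm : (d : ℕ) < m := by omega
      rw [two_mul] at h
      refine ⟨?_, ?_, by omega, by omega⟩
      · intro hac
        have := add_mod_inj ham hdm hac h
        omega
      · intro had
        rw [Nat.add_comm (c : ℕ) (d : ℕ)] at h
        have := add_mod_inj ham hcm had h
        omega
    · -- second edge contains n-1, first does not
      have hbm : (b : ℕ) < m := by omega
      rw [two_mul] at h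
      refine ⟨?_, by omega, ?_, by omega⟩
      · intro hac
        have := add_mod_inj hbm hcm hac h
        omega
      · intro hbc
        rw [Nat.add_comm (a : ℕ) (b : ℕ)] at h
        have := add_mod_inj ham hcm hbc h
        omega
    · -- neither edge contains n-1
      have hbm : (b : ℕ) < m := by omega
      have hdm : (d : ℕ) < m := by omega
      refine ⟨?_, ?_, ?_, ?_⟩
      · intro hac
        have := add_mod_inj hbm hdm hac h
        rcases hpq with h' | h' <;> omega
      · intro had
        rw [Nat.add_comm (c : ℕ) (d : ℕ)] at h
        have := add_mod_inj hbm hcm had h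
        omega
      · intro hbc
        rw [Nat.add_comm (a : ℕ) (b : ℕ)] at h
        have := add_mod_inj ham hdm hbc h
        omega
      · intro hbd
        have := add_mod_inj_right ham hcm hbd h
        rcases hpq with h' | h' <;> omega
  · simp only [he, if_false] at h
    have ha : (a : ℕ) < n := a.isLt
    have hc : (c : ℕ) < n := c.isLt
    refine ⟨?_, ?_, ?_, ?_⟩
    · intro hac
      have := add_mod_inj hb hd hac h
      rcases hpq with h' | h' <;> omega
    · intro had
      rw [Nat.add_comm (c : ℕ) (d : ℕ)] at h
      have := add_mod_inj hb hc had h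
      omega
    · intro hbc
      rw [Nat.add_comm (a : ℕ) (b : ℕ)] at h
      have := add_mod_inj ha hd hbc h
      omega
    · intro hbd
      have := add_mod_inj_right ha hc hbd h
      rcases hpq with h' | h' <;> omega


section Words
variable {n g : ℕ}

lemma val_zero_iff {q : ℕ} (x : Fin (q + 1)) : (x : ℕ) = 0 ↔ x = 0 := by
  rw [Fin.ext_iff, Fin.val_zero]

/-- The word supported on `{a, b}` with values `s, t` there. -/
def wrd (a b : Fin n) (s t : Fin (g + 1)) : Fin n → Fin (g + 1) :=
  fun i => if i = a then s else if i = b then t else 0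

lemma wrd_fst (a b : Fin n) (s t : Fin (g + 1)) : wrd a b s t a = s := by
  simp [wrd]

lemma wrd_snd {a b : Fin n} (hab : a ≠ b) (s t : Fin (g + 1)) : wrd a b s t b = t := by
  simp [wrd, hab.symm]

lemma wrd_other {a b i : Fin n} (hia : i ≠ a) (hib : i ≠ b) (s t : Fin (g + 1)) :
    wrd a b s t i = 0 := by
  simp [wrd, hia, hib]

lemma wrd_ne_zero {a b : Fin n} (hab : a ≠ b) {s t : Fin (g + 1)} (hs : s ≠ 0) (ht : t ≠ 0)
    (i : Fin n) : wrd a b s t i ≠ 0 ↔ i = a ∨ i = b := by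
  unfold wrd
  by_cases h1 : i = a <;> by_cases h2 : i = b <;> simp [h1, h2, hs, ht, Ne.symm hab]

lemma wrd_support {a b : Fin n} (hab : a ≠ b) {s t : Fin (g + 1)} (hs : s ≠ 0) (ht : t ≠ 0) :
    Finset.univ.filter (fun i => ((wrd a b s t i : ℕ) ≠ 0)) = {a, b} := by
  ext i
  simp only [Finset.mem_filter, Finset.mem_univ, true_and, Finset.mem_insert,
    Finset.mem_singleton, ne_eq, val_zero_iff]
  exact wrd_ne_zero hab hs ht i

lemma wrd_weight {a b : Fin n} (hab : a ≠ b) {s t : Fin (g + 1)} (hs : s ≠ 0) (ht : t ≠ 0) :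
    wordWeight (wrd a b s t) = 2 := by
  unfold wordWeight
  rw [wrd_support hab hs ht]
  rw [Finset.card_insert_of_notMem (by simpa using hab), Finset.card_singleton]

lemma wrd_eq {a b c d : Fin n} (hab : a < b) (hcd : c < d) {s t u v : Fin (g + 1)}
    (hs : s ≠ 0) (ht : t ≠ 0) (hu : u ≠ 0) (hv : v ≠ 0)
    (h : wrd a b s t = wrd c d u v) : a = c ∧ b = d ∧ s = u ∧ t = v := by
  have hab' : a ≠ b := ne_of_lt hab
  have hcd' : c ≠ d := ne_of_lt hcd
  have hmem : ∀ i : Fin n, (i = a ∨ i = b) ↔ (i = c ∨ i = d) := by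
    intro i
    rw [← wrd_ne_zero hab' hs ht i, h, wrd_ne_zero hcd' hu hv i]
  have hac : a = c := by
    have h1 := (hmem a).mp (Or.inl rfl)
    have h2 := (hmem c).mpr (Or.inl rfl)
    rcases h1 with h1 | h1
    · exact h1
    · rcases h2 with h2 | h2
      · exact h2.symm
      · exfalso
        rw [Fin.lt_def] at hab hcd
        rw [Fin.ext_iff] at h1 h2
        omega
  have hbd : b = d := by
    have h1 := (hmem b).mp (Or.inr rfl)
    rcases h1 with h1 | h1
    · exfalso
      rw [Fin.lt_def] at hab hcd
      rw [Fin.ext_iff] at h1 hac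
      omega
    · exact h1
  refine ⟨hac, hbd, ?_, ?_⟩
  · have := congrFun h a
    rwa [wrd_fst, hac, wrd_fst] at this
  · have := congrFun h b
    rwa [wrd_snd hab' , hbd, wrd_snd hcd'] at this

lemma exists_wrd {x : Fin n → Fin (g + 1)} (hx : wordWeight x = 2) :
    ∃ a b : Fin n, a < b ∧ x a ≠ 0 ∧ x b ≠ 0 ∧ x = wrd a b (x a) (x b) := by
  unfold wordWeight at hx
  obtain ⟨u, v, huv, hS⟩ := Finset.card_eq_two.mp hx
  have hmem : ∀ i : Fin n, (x i : ℕ) ≠ 0 ↔ (i = u ∨ i = v) := by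
    intro i
    constructor
    · intro hi
      have : i ∈ Finset.univ.filter (fun i => ((x i : ℕ) ≠ 0)) := by
        simpa using hi
      rw [hS] at this
      simpa using this
    · intro hi
      have : i ∈ ({u, v} : Finset (Fin n)) := by simpa using hi
      rw [← hS] at this
      simpa using this
  wlog hlt : u < v generalizing u v
  · exact this v u huv.symm (by rw [hS]; ext i; simp; tauto)
      (fun i => (hmem i).trans (by tauto)) (lt_of_le_of_ne (not_lt.mp hlt) huv.symm)
  have hxu : x u ≠ 0 := by
    rw [Ne, ← val_zero_iff]
    exact (hmem u).mpr (Or.inl rfl)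
  have hxv : x v ≠ 0 := by
    rw [Ne, ← val_zero_iff]
    exact (hmem v).mpr (Or.inr rfl)
  refine ⟨u, v, hlt, hxu, hxv, ?_⟩
  funext i
  by_cases h1 : i = u
  · rw [h1, wrd_fst]
  · by_cases h2 : i = v
    · rw [h2, wrd_snd (ne_of_lt hlt)]
    · rw [wrd_other h1 h2]
      have : ¬ ((x i : ℕ) ≠ 0) := by rw [hmem i]; tauto
      rw [not_not, val_zero_iff] at this
      exact this

end Words

section Edges
variable {n : ℕ}

/-- All edges of `K_n`, as ordered pairs with increasing coordinates. -/
def allEdges (n : ℕ) : Finset (Fin n × Fin n) :=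
  Finset.univ.filter fun p => p.1 < p.2

/-- The `r`-th (near-)one-factor. -/
def factor (n r : ℕ) : Finset (Fin n × Fin n) :=
  (allEdges n).filter fun p => widx n p = r

lemma allEdges_card (n : ℕ) : 2 * (allEdges n).card = n * (n - 1) := by
  classical
  set B := Finset.univ.filter fun p : Fin n × Fin n => p.2 < p.1 with hB
  have himg : B = (allEdges n).image Prod.swap := by
    ext p
    simp only [hB, Finset.mem_filter, Finset.mem_univ, true_and, Finset.mem_image, allEdges]
    constructor
    · intro hp
      exact ⟨p.swap, by simpa using hp, by simp⟩
    · rintro ⟨q, hq, rfl⟩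
      simpa using hq
  have hcard2 : B.card = (allEdges n).card := by
    rw [himg]
    exact Finset.card_image_of_injective _ Prod.swap_injective
  have hdisj : Disjoint (allEdges n) B := by
    rw [Finset.disjoint_left]
    intro p hp hp'
    simp only [allEdges, hB, Finset.mem_filter, Finset.mem_univ, true_and] at hp hp'
    exact absurd hp' (not_lt.mpr (le_of_lt hp))
  have hunion : allEdges n ∪ B = Finset.univ.filter fun p : Fin n × Fin n => p.1 ≠ p.2 := by
    ext p
    simp only [Finset.mem_union, allEdges, hB, Finset.mem_filter, Finset.mem_univ, true_and]
    constructor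
    · rintro (h | h)
      · exact ne_of_lt h
      · exact (ne_of_lt h).symm
    · intro h
      exact lt_or_gt_of_ne h
  have hoff : (Finset.univ.filter fun p : Fin n × Fin n => p.1 ≠ p.2)
      = (Finset.univ : Finset (Fin n)).offDiag := by
    ext p
    simp [Finset.mem_offDiag]
  have h1 : (allEdges n).card + B.card = n * n - n := by
    rw [← Finset.card_union_of_disjoint hdisj, hunion, hoff, Finset.offDiag_card]
    simp
  rw [Nat.mul_sub_one]
  omega

lemma sum_factor_card {n : ℕ} (hn : 2 ≤ n) :
    ∑ r ∈ Finset.range (k0 n), (factor n r).card = (allEdges n).card :=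
  (Finset.card_eq_sum_card_fiberwise
    (fun p _ => Finset.mem_range.mpr (widx_lt hn p))).symm

lemma factor_card_le {n : ℕ} (hn : 2 ≤ n) (r : ℕ) : (factor n r).card ≤ n / 2 := by
  have hdisj : ∀ p ∈ factor n r, ∀ q ∈ factor n r, p ≠ q →
      Disjoint ({p.1, p.2} : Finset (Fin n)) {q.1, q.2} := by
    intro p hp q hq hne
    simp only [factor, allEdges, Finset.mem_filter, Finset.mem_univ, true_and] at hp hq
    obtain ⟨h1, h2, h3, h4⟩ := widx_disj hn hp.1 hq.1 (hp.2.trans hq.2.symm) hne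
    rw [Finset.disjoint_left]
    intro i hi hi'
    simp only [Finset.mem_insert, Finset.mem_singleton] at hi hi'
    rcases hi with rfl | rfl <;> rcases hi' with h | h
    · exact h1 h
    · exact h2 h
    · exact h3 h
    · exact h4 h
  have hbig : ((factor n r).biUnion fun p => ({p.1, p.2} : Finset (Fin n))).card
      = ∑ p ∈ factor n r, ({p.1, p.2} : Finset (Fin n)).card :=
    Finset.card_biUnion hdisj
  have hc2 : ∀ p ∈ factor n r, ({p.1, p.2} : Finset (Fin n)).card = 2 := by
    intro p hp
    simp only [factor, allEdges, Finset.mem_filter, Finset.mem_univ, true_and] at hp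
    rw [Finset.card_insert_of_notMem (by simp [ne_of_lt hp.1]), Finset.card_singleton]
  rw [Finset.sum_congr rfl hc2, Finset.sum_const, smul_eq_mul] at hbig
  have hle : ((factor n r).biUnion fun p => ({p.1, p.2} : Finset (Fin n))).card ≤ n := by
    simpa using Finset.card_le_card
      (Finset.subset_univ ((factor n r).biUnion fun p => ({p.1, p.2} : Finset (Fin n))))
  rw [Nat.le_div_iff_mul_le (by norm_num : (0:ℕ) < 2)]
  omega

lemma k0_mul {n : ℕ} (hn : 2 ≤ n) : 2 * (k0 n * (n / 2)) = n * (n - 1) := by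
  unfold k0
  by_cases he : Even n <;> simp only [he, if_true, if_false]
  · have h2 : 2 * (n / 2) = n := by
      rw [Nat.even_iff] at he; omega
    calc 2 * ((n - 1) * (n / 2)) = (n - 1) * (2 * (n / 2)) := by ring
      _ = n * (n - 1) := by rw [h2]; ring
  · have h2 : 2 * (n / 2) = n - 1 := by
      rw [Nat.even_iff] at he; omega
    calc 2 * (n * (n / 2)) = n * (2 * (n / 2)) := by ring
      _ = n * (n - 1) := by rw [h2]

lemma factor_card {n : ℕ} (hn : 2 ≤ n) {r : ℕ} (hr : r < k0 n) :
    (factor n r).card = n / 2 := by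
  by_contra hne
  have hlt : (factor n r).card < n / 2 := lt_of_le_of_ne (factor_card_le hn r) hne
  have hsum : ∑ i ∈ Finset.range (k0 n), (factor n i).card
      < ∑ _i ∈ Finset.range (k0 n), (n / 2) :=
    Finset.sum_lt_sum (fun i _ => factor_card_le hn i) ⟨r, Finset.mem_range.mpr hr, hlt⟩
  rw [sum_factor_card hn, Finset.sum_const, Finset.card_range, smul_eq_mul] at hsum
  have h1 := allEdges_card n
  have h2 := k0_mul hn
  omega

end Edges

section Classes
variable {n g : ℕ}

/-- The class of words: supports drawn from factor `r`, values `s+1, t+1`. -/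
def cls (n g : ℕ) (s t : Fin g) (r : ℕ) : Finset (Fin n → Fin (g + 1)) :=
  (factor n r).image fun p => wrd p.1 p.2 s.succ t.succ

lemma mem_cls {s t : Fin g} {r : ℕ} {x : Fin n → Fin (g + 1)} :
    x ∈ cls n g s t r ↔
      ∃ p : Fin n × Fin n, p.1 < p.2 ∧ widx n p = r ∧ x = wrd p.1 p.2 s.succ t.succ := by
  simp only [cls, factor, allEdges, Finset.mem_image, Finset.mem_filter, Finset.mem_univ,
    true_and]
  constructor
  · rintro ⟨p, ⟨h1, h2⟩, rfl⟩
    exact ⟨p, h1, h2, rfl⟩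
  · rintro ⟨p, h1, h2, rfl⟩
    exact ⟨p, ⟨h1, h2⟩, rfl⟩

lemma cls_card (hn : 2 ≤ n) {s t : Fin g} {r : ℕ} (hr : r < k0 n) :
    (cls n g s t r).card = n / 2 := by
  rw [cls, Finset.card_image_of_injOn, factor_card hn hr]
  intro p hp q hq h
  simp only [factor, allEdges, Finset.mem_filter, Finset.mem_univ, true_and,
    Finset.coe_filter, Set.mem_setOf_eq] at hp hq
  obtain ⟨h1, h2, _, _⟩ := wrd_eq hp.1 hq.1 (Fin.succ_ne_zero s) (Fin.succ_ne_zero t)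
    (Fin.succ_ne_zero s) (Fin.succ_ne_zero t) h
  exact Prod.ext h1 h2

lemma cls_weight {s t : Fin g} {r : ℕ} {x : Fin n → Fin (g + 1)}
    (hx : x ∈ cls n g s t r) : x ∈ weightTwoWords n g := by
  obtain ⟨p, h1, _, rfl⟩ := mem_cls.mp hx
  simp only [weightTwoWords, Finset.mem_filter, Finset.mem_univ, true_and]
  exact wrd_weight (ne_of_lt h1) (Fin.succ_ne_zero s) (Fin.succ_ne_zero t)

lemma cls_disjoint {s t u v : Fin g} {r r' : ℕ} (hne : (s, t, r) ≠ (u, v, r')) :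
    Disjoint (cls n g s t r) (cls n g u v r') := by
  rw [Finset.disjoint_left]
  intro x hx hx'
  obtain ⟨p, hp1, hp2, rfl⟩ := mem_cls.mp hx
  obtain ⟨q, hq1, hq2, hxq⟩ := mem_cls.mp hx'
  obtain ⟨h1, h2, h3, h4⟩ := wrd_eq hp1 hq1 (Fin.succ_ne_zero s) (Fin.succ_ne_zero t)
    (Fin.succ_ne_zero u) (Fin.succ_ne_zero v) hxq
  apply hne
  have hpq : p = q := Prod.ext h1 h2
  rw [Fin.succ_inj] at h3 h4
  rw [h3, h4, ← hp2, ← hq2, hpq]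

lemma cls_dist (hn : 2 ≤ n) {s t : Fin g} {r : ℕ} {x y : Fin n → Fin (g + 1)}
    (hx : x ∈ cls n g s t r) (hy : y ∈ cls n g s t r) (hxy : x ≠ y) :
    4 ≤ hammingDist x y := by
  obtain ⟨p, hp1, hp2, rfl⟩ := mem_cls.mp hx
  obtain ⟨q, hq1, hq2, rfl⟩ := mem_cls.mp hy
  have hpq : p ≠ q := fun h => hxy (by rw [h])
  obtain ⟨h1, h2, h3, h4⟩ := widx_disj hn hp1 hq1 (hp2.trans hq2.symm) hpq
  have hp12 : p.1 ≠ p.2 := ne_of_lt hp1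
  have hq12 : q.1 ≠ q.2 := ne_of_lt hq1
  have hsub : ({p.1, p.2, q.1, q.2} : Finset (Fin n))
      ⊆ Finset.univ.filter fun i => wrd p.1 p.2 s.succ t.succ i ≠ wrd q.1 q.2 s.succ t.succ i := by
    intro i hi
    simp only [Finset.mem_insert, Finset.mem_singleton] at hi
    simp only [Finset.mem_filter, Finset.mem_univ, true_and]
    rcases hi with rfl | rfl | rfl | rfl
    · rw [wrd_fst, wrd_other h1 h2]
      exact Fin.succ_ne_zero s
    · rw [wrd_snd hp12, wrd_other h3 h4]
      exact Fin.succ_ne_zero t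
    · rw [wrd_other (fun h => h1 h.symm) (fun h => h3 h.symm), wrd_fst]
      exact fun h => Fin.succ_ne_zero s h.symm
    · rw [wrd_other (fun h => h2 h.symm) (fun h => h4 h.symm), wrd_snd hq12]
      exact fun h => Fin.succ_ne_zero t h.symm
  have hcard : ({p.1, p.2, q.1, q.2} : Finset (Fin n)).card = 4 := by
    rw [Finset.card_insert_of_notMem (by simp [hp12, h1, h2]),
      Finset.card_insert_of_notMem (by simp [h3, h4]),
      Finset.card_insert_of_notMem (by simp [hq12]), Finset.card_singleton]
  calc 4 = ({p.1, p.2, q.1, q.2} : Finset (Fin n)).card := hcard.symm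
    _ ≤ (Finset.univ.filter fun i =>
          wrd p.1 p.2 s.succ t.succ i ≠ wrd q.1 q.2 s.succ t.succ i).card :=
        Finset.card_le_card hsub
    _ = hammingDist (wrd p.1 p.2 s.succ t.succ) (wrd q.1 q.2 s.succ t.succ) := rfl

end Classes

end OptDecomp

/-- Optimal decomposition of `K_{n×g}` with respect to distance 4: a partition
of `H` into subsets of cardinality `⌊n/2⌋` with pairwise Hamming distance at
least 4; the number of subsets is `g²(n-1)` if `n` is even and `g²·n` if `n`
is odd. -/
theorem optimal_decomposition_dist_four (n g : ℕ) (hn : 2 ≤ n) (hg : 1 ≤ g) :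
    HasDistPartition n g (if Even n then g ^ 2 * (n - 1) else g ^ 2 * n) (n / 2) 4 := by
  classical
  open OptDecomp in
  rw [show (if Even n then g ^ 2 * (n - 1) else g ^ 2 * n) = g ^ 2 * k0 n from by
    unfold OptDecomp.k0; split <;> rfl]
  have hK : Fintype.card (Fin g × Fin g × Fin (OptDecomp.k0 n)) = g ^ 2 * OptDecomp.k0 n := by
    simp; ring
  let e : Fin (g ^ 2 * OptDecomp.k0 n) ≃ (Fin g × Fin g × Fin (OptDecomp.k0 n)) :=
    (Fintype.equivFinOfCardEq hK).symm
  refine ⟨fun i => OptDecomp.cls n g (e i).1 (e i).2.1 ((e i).2.2 : ℕ), ?_, ?_, ?_, ?_⟩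
  · intro i j hij
    apply OptDecomp.cls_disjoint
    intro hcon
    rw [Prod.ext_iff, Prod.ext_iff] at hcon
    obtain ⟨h1, h2, h3⟩ := hcon
    exact hij (e.injective (Prod.ext h1 (Prod.ext h2 (Fin.ext h3))))
  · ext x
    simp only [Finset.mem_biUnion, Finset.mem_univ, true_and]
    constructor
    · rintro ⟨i, hi⟩
      exact OptDecomp.cls_weight hi
    · intro hx
      simp only [weightTwoWords, Finset.mem_filter, Finset.mem_univ, true_and] at hx
      obtain ⟨a, b, hab, hxa, hxb, hx'⟩ := OptDecomp.exists_wrd hx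
      refine ⟨e.symm ((x a).pred hxa, (x b).pred hxb,
        ⟨OptDecomp.widx n (a, b), OptDecomp.widx_lt hn (a, b)⟩), ?_⟩
      rw [Equiv.apply_symm_apply]  -- might need care with `e`
      rw [OptDecomp.mem_cls]
      exact ⟨(a, b), hab, rfl, by rwa [Fin.succ_pred, Fin.succ_pred]⟩
  · intro i
    exact OptDecomp.cls_card hn ((e i).2.2).isLt
  · intro i x hx y hy hxy
    exact OptDecomp.cls_dist hn hx hy hxy
end

section
/- Let g ≥ 2 and n > g be integers with g·n odd. Then there is no partition of H (the set of all words of length n and weight 2 over ℤ_{g+1}) into subsets such that each subset has cardinality (g·n−1)/2 and any two distinct words lying in the same subset have Hamming distance at least 3. In other words, when n > g and g·n is odd, the complete multipartite graph K_{n×g} admits no optimal decomposition with respect to distance 3. -/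
open Finset

/-- The word with value `a` at position `p.1.1`, `b` at `p.1.2`, zero elsewhere. -/
def pairWord {n g : ℕ} (p : (Fin n × Fin n) × Fin (g + 1) × Fin (g + 1)) :
    Fin n → Fin (g + 1) :=
  fun t => if t = p.1.1 then p.2.1 else if t = p.1.2 then p.2.2 else 0

lemma val_ne_zero_iff {g : ℕ} (v : Fin (g+1)) : (v : ℕ) ≠ 0 ↔ v ≠ 0 := by
  constructor
  · intro h h'; subst h'; simp at h
  · intro h h'; exact h (Fin.ext h')

lemma filter_pairWord {n g : ℕ} (i j : Fin n) (a b : Fin (g + 1))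
    (hij : i ≠ j) (ha : a ≠ 0) (hb : b ≠ 0) :
    Finset.univ.filter (fun t => ((pairWord ((i, j), (a, b)) : Fin n → Fin (g+1)) t : ℕ) ≠ 0)
      = {i, j} := by
  ext t
  simp only [mem_filter, mem_univ, true_and, mem_insert, mem_singleton, pairWord,
    val_ne_zero_iff]
  rcases eq_or_ne t i with rfl | hti
  · simp [ha]
  · rcases eq_or_ne t j with rfl | htj
    · simp [hti, hb]
    · simp [hti, htj]

lemma two_mul_card_weightTwoWords (n g : ℕ) :
    2 * (weightTwoWords n g).card = (n * n - n) * (g * g) := by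
  classical
  set V : Finset (Fin (g+1)) := Finset.univ.filter (fun v => v ≠ 0) with hV
  set D : Finset ((Fin n × Fin n) × Fin (g+1) × Fin (g+1)) :=
    (Finset.univ : Finset (Fin n)).offDiag ×ˢ (V ×ˢ V) with hD
  have hmemD : ∀ p : (Fin n × Fin n) × Fin (g+1) × Fin (g+1),
      p ∈ D ↔ p.1.1 ≠ p.1.2 ∧ p.2.1 ≠ 0 ∧ p.2.2 ≠ 0 := by
    intro p
    simp [hD, hV, Finset.mem_offDiag, Finset.mem_product]
  have hmaps : ∀ p ∈ D, pairWord p ∈ weightTwoWords n g := by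
    intro p hp
    rw [hmemD] at hp
    obtain ⟨hij, ha, hb⟩ := hp
    simp only [weightTwoWords, mem_filter, mem_univ, true_and]
    unfold wordWeight
    have := filter_pairWord p.1.1 p.1.2 p.2.1 p.2.2 hij ha hb
    rw [show ((p.1.1, p.1.2), (p.2.1, p.2.2)) = p from rfl] at this
    rw [this]
    rw [Finset.card_insert_of_notMem (by simpa using hij), Finset.card_singleton]
  have hcard := Finset.card_eq_sum_card_fiberwise hmaps
  have hfib : ∀ x ∈ weightTwoWords n g,
      (D.filter (fun p => pairWord p = x)).card = 2 := by
    intro x hx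
    simp only [weightTwoWords, mem_filter, mem_univ, true_and] at hx
    unfold wordWeight at hx
    obtain ⟨i, j, hij, hS⟩ := Finset.card_eq_two.mp hx
    have hmemS : ∀ t : Fin n, (x t : ℕ) ≠ 0 ↔ (t = i ∨ t = j) := by
      intro t
      constructor
      · intro ht
        have : t ∈ ({i, j} : Finset (Fin n)) := by
          rw [← hS]; simpa using ht
        simpa using this
      · intro ht
        have : t ∈ Finset.univ.filter (fun t => (x t : ℕ) ≠ 0) := by
          rw [hS]; simpa using ht
        simpa using this
    have hxi : x i ≠ 0 := by
      rw [← val_ne_zero_iff]; rw [hmemS]; left; rfl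
    have hxj : x j ≠ 0 := by
      rw [← val_ne_zero_iff]; rw [hmemS]; right; rfl
    have hx0 : ∀ t : Fin n, t ≠ i → t ≠ j → x t = 0 := by
      intro t h1 h2
      by_contra h
      rcases (hmemS t).mp (by rwa [val_ne_zero_iff]) with h' | h' <;> [exact h1 h'; exact h2 h']
    have key : D.filter (fun p => pairWord p = x)
        = {((i, j), (x i, x j)), ((j, i), (x j, x i))} := by
      ext p
      simp only [mem_filter, mem_insert, mem_singleton]
      constructor
      · rintro ⟨hpD, hpx⟩
        rw [hmemD] at hpD
        obtain ⟨h12, ha, hb⟩ := hpD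
        obtain ⟨⟨i', j'⟩, a, b⟩ := p
        simp only at h12 ha hb ⊢
        have hsupp := filter_pairWord i' j' a b h12 ha hb
        rw [show ((i', j'), (a, b)) = (((i', j'), (a, b)) :
          (Fin n × Fin n) × Fin (g+1) × Fin (g+1)) from rfl] at hsupp
        have hsupp2 : ({i', j'} : Finset (Fin n)) = {i, j} := by
          rw [← hsupp, ← hS]
          congr 1
          funext t
          rw [hpx]
        have ha' : pairWord ((i', j'), (a, b)) i' = a := by simp [pairWord]
        have hb' : pairWord ((i', j'), (a, b)) j' = b := by simp [pairWord, h12.symm]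
        have hane : a = x i' := by rw [← hpx]; exact ha'.symm
        have hbne : b = x j' := by rw [← hpx]; exact hb'.symm
        have hi' : i' = i ∨ i' = j := by
          have : i' ∈ ({i, j} : Finset (Fin n)) := by rw [← hsupp2]; simp
          simpa using this
        have hj' : j' = i ∨ j' = j := by
          have : j' ∈ ({i, j} : Finset (Fin n)) := by rw [← hsupp2]; simp
          simpa using this
        rcases hi' with rfl | rfl
        · rcases hj' with rfl | rfl
          · exact absurd rfl h12
          · left; simp [hane, hbne]
        · rcases hj' with rfl | rfl
          · right; simp [hane, hbne]
          · exact absurd rfl h12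
      · intro hp
        have hw1 : pairWord (((i, j), (x i, x j)) :
            (Fin n × Fin n) × Fin (g+1) × Fin (g+1)) = x := by
          funext t
          simp only [pairWord]
          rcases eq_or_ne t i with rfl | h1
          · simp
          · rcases eq_or_ne t j with rfl | h2
            · simp [h1]
            · simp [h1, h2, hx0 t h1 h2]
        have hw2 : pairWord (((j, i), (x j, x i)) :
            (Fin n × Fin n) × Fin (g+1) × Fin (g+1)) = x := by
          funext t
          simp only [pairWord]
          rcases eq_or_ne t j with rfl | h1
          · simp
          · rcases eq_or_ne t i with rfl | h2
            · simp [h1]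
            · simp [h1, h2, hx0 t h2 h1]
        rcases hp with rfl | rfl
        · exact ⟨(hmemD _).mpr ⟨hij, hxi, hxj⟩, hw1⟩
        · exact ⟨(hmemD _).mpr ⟨hij.symm, hxj, hxi⟩, hw2⟩
    rw [key, Finset.card_insert_of_notMem (by simp [hij]), Finset.card_singleton]
  rw [Finset.sum_congr rfl hfib, Finset.sum_const, smul_eq_mul] at hcard
  have hDcard : D.card = (n * n - n) * (g * g) := by
    have hVcard : V.card = g := by
      rw [hV, Finset.filter_ne', Finset.card_erase_of_mem (Finset.mem_univ _)]
      simp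
    rw [hD, Finset.card_product, Finset.card_product, hVcard, Finset.offDiag_card]
    simp [Fintype.card_fin]
  rw [hDcard] at hcard
  omega

/-- If `n > g` and `g·n` is odd, then `K_{n×g}` admits no optimal decomposition
with respect to distance 3: there is no partition of `H` into subsets each of
cardinality `(g·n - 1)/2` and pairwise Hamming distance at least 3. -/
theorem no_optimal_decomposition_dist_three_odd (n g : ℕ) (hg : 2 ≤ g) (hng : g < n)
    (hodd : Odd (g * n)) :
    ¬ ∃ k : ℕ, HasDistPartition n g k ((g * n - 1) / 2) 3 := by
  rintro ⟨k, P, hdisj, hunion, hcardP, -⟩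
  obtain ⟨m, hm⟩ := hodd
  have hn3 : 3 ≤ n := by omega
  have hH : (weightTwoWords n g).card = k * m := by
    rw [← hunion, Finset.card_biUnion (fun i _ j _ hij => hdisj i j hij)]
    have : ∀ i : Fin k, (P i).card = m := by
      intro i; rw [hcardP i]; omega
    rw [Finset.sum_congr rfl (fun i _ => this i), Finset.sum_const, smul_eq_mul,
      Finset.card_univ, Fintype.card_fin]
  have h2 := two_mul_card_weightTwoWords n g
  rw [hH] at h2
  -- 2 * (k * m) = (n*n - n) * (g*g); note 2*m = g*n - 1
  have key : k * (g * n - 1) = (n * n - n) * (g * g) := by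
    rw [show g * n - 1 = 2 * m from by omega]
    rw [← h2]; ring
  -- cast to ℤ
  have keyZ : (k : ℤ) * ((g : ℤ) * n - 1) = ((n : ℤ) * n - n) * (g * g) := by
    have h1 : (1 : ℕ) ≤ g * n := by nlinarith
    have h2' : n ≤ n * n := Nat.le_mul_of_pos_left n (by omega)
    have hc := congrArg (Nat.cast : ℕ → ℤ) key
    push_cast [Nat.cast_sub h1, Nat.cast_sub h2'] at hc
    linarith
  have hdvd : ((g : ℤ) * n - 1) ∣ ((g : ℤ) - 1) := by
    refine ⟨(g : ℤ) * n - g + 1 - k, ?_⟩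
    linear_combination keyZ
  have hpos : (0 : ℤ) < (g : ℤ) - 1 := by
    have : (2 : ℤ) ≤ g := by exact_mod_cast hg
    linarith
  have hle := Int.le_of_dvd hpos hdvd
  have hgn : (3 : ℤ) ≤ n := by exact_mod_cast hn3
  have hgz : (2 : ℤ) ≤ g := by exact_mod_cast hg
  nlinarith
end

section
/- For every even integer n ≥ 2 and every integer g with n ≤ g, there exists an ODAR(n,g), i.e., a partition of the set of all words of length n and weight 2 over ℤ_{g+1} into g² subsets such that each subset has cardinality C(n,2) and any two distinct words lying in the same subset have Hamming distance at least 3. -/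
/-- A partition of `H(m)` (words of length `m`, weight `2` over `ℤ_{g+1}`) into
`k` subsets, each of cardinality `s`, with pairwise Hamming distance at least
`3` inside each subset. -/
def HasDist3Partition (m g k s : ℕ) : Prop :=
  ∃ P : Fin k → Finset (Fin m → Fin (g + 1)),
    (∀ i j, i ≠ j → Disjoint (P i) (P j)) ∧
    (Finset.univ.biUnion P = weightTwoWords m g) ∧
    (∀ i, (P i).card = s) ∧
    (∀ i, ∀ x ∈ P i, ∀ y ∈ P i, x ≠ y → 3 ≤ hammingDist x y)

/-- An `ODAR(m,g)`: a partition of `H(m)` into `g²` subsets, each of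
cardinality `C(m,2)` and with pairwise Hamming distance at least 3. -/
def IsODAR (m g : ℕ) : Prop :=
  HasDist3Partition m g (g ^ 2) (m.choose 2)

/-- An `OF(m,g)`: a partition of `H(m)` into `g(m-1)` subsets, each of
cardinality `g·m/2` and with pairwise Hamming distance at least 3. -/
def IsOF (m g : ℕ) : Prop :=
  HasDist3Partition m g (g * (m - 1)) (g * m / 2)

/-! ### Auxiliary development for the construction -/

/-- chain length `m = g / gcd g d`. -/
def ODARchainLen (g d : ℕ) : ℕ := g / Nat.gcd g d

/-- The chain enumeration of `ℤ_g`: value at position `p` (as a natural number). -/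
def ODARFdN (g d p : ℕ) : ℕ := p / ODARchainLen g d + p % ODARchainLen g d * d

lemma ODARchainLen_pos {g d : ℕ} (hg : 0 < g) : 0 < ODARchainLen g d :=
  Nat.div_pos (Nat.le_of_dvd hg (Nat.gcd_dvd_left g d)) (Nat.gcd_pos_of_pos_left d hg)

lemma ODARgcd_mul_chainLen {g d : ℕ} : Nat.gcd g d * ODARchainLen g d = g :=
  Nat.mul_div_cancel' (Nat.gcd_dvd_left g d)

lemma ODARcancel_td {g d t t' : ℕ} (hg : 0 < g) (hle : t ≤ t') (ht' : t' < ODARchainLen g d)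
    (hdvd : t * d ≡ t' * d [MOD g]) : t = t' := by
  set h := Nat.gcd g d with hh
  set m := ODARchainLen g d with hm
  have hpos : 0 < h := Nat.gcd_pos_of_pos_left d hg
  have hmd : h ∣ d := Nat.gcd_dvd_right g d
  have hgdvd : (g : ℕ) ∣ t' * d - t * d := (Nat.modEq_iff_dvd' (Nat.mul_le_mul_right d hle)).mp hdvd
  have hsub : t' * d - t * d = (t' - t) * d := by
    rw [Nat.sub_mul]
  rw [hsub] at hgdvd
  obtain ⟨δ, hδ⟩ := hmd
  have hgm : g = h * m := (ODARgcd_mul_chainLen).symm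
  have hco : Nat.Coprime m δ := by
    have := Nat.coprime_div_gcd_div_gcd (m := g) (n := d) hpos
    have h1 : g / h = m := rfl
    have h2 : d / h = δ := by rw [hδ, Nat.mul_div_cancel_left _ hpos]
    rwa [h1, h2] at this
  have hdd : h * m ∣ (t' - t) * (h * δ) := by rw [← hgm, ← hδ]; exact hgdvd
  have hmdvd : m ∣ (t' - t) * δ := by
    have h2 : (t' - t) * (h * δ) = h * ((t' - t) * δ) := by ring
    rw [h2] at hdd
    exact (Nat.mul_dvd_mul_iff_left hpos).mp hdd
  have hfin : m ∣ (t' - t) := hco.dvd_of_dvd_mul_right hmdvd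
  have hlt : t' - t < m := lt_of_le_of_lt (Nat.sub_le _ _) ht'
  have h0 : t' - t = 0 := Nat.eq_zero_of_dvd_of_lt hfin hlt
  omega

lemma ODARq_eq {g d q q' t t' : ℕ} (hq : q < Nat.gcd g d) (hq' : q' < Nat.gcd g d)
    (hmod : q + t * d ≡ q' + t' * d [MOD g]) : q = q' := by
  set h := Nat.gcd g d with hh
  have hdvdg : h ∣ g := Nat.gcd_dvd_left g d
  have hdvdd : h ∣ d := Nat.gcd_dvd_right g d
  have hmodh : q + t * d ≡ q' + t' * d [MOD h] := hmod.of_dvd hdvdg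
  have h1 : q + t * d ≡ q + 0 [MOD h] := Nat.ModEq.add_left q ((Nat.modEq_zero_iff_dvd).mpr (hdvdd.mul_left t))
  have h2 : q' + t' * d ≡ q' + 0 [MOD h] := Nat.ModEq.add_left q' ((Nat.modEq_zero_iff_dvd).mpr (hdvdd.mul_left t'))
  have hqq : q ≡ q' [MOD h] := by
    calc q ≡ q + t * d [MOD h] := by simpa using h1.symm
    _ ≡ q' + t' * d [MOD h] := hmodh
    _ ≡ q' [MOD h] := by simpa using h2
  unfold Nat.ModEq at hqq
  rw [Nat.mod_eq_of_lt hq, Nat.mod_eq_of_lt hq'] at hqq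
  exact hqq

/-- L1: the chain enumeration is injective on `[0, g)`. -/
lemma ODARFdN_injective {g d p p' : ℕ} (hg : 0 < g) (hp : p < g) (hp' : p' < g)
    (h : ODARFdN g d p ≡ ODARFdN g d p' [MOD g]) : p = p' := by
  set m := ODARchainLen g d with hm
  have hmpos : 0 < m := ODARchainLen_pos hg
  have hgm : g = Nat.gcd g d * m := (ODARgcd_mul_chainLen).symm
  have hqlt : p / m < Nat.gcd g d := Nat.div_lt_iff_lt_mul hmpos |>.mpr (by omega)
  have hqlt' : p' / m < Nat.gcd g d := Nat.div_lt_iff_lt_mul hmpos |>.mpr (by omega)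
  unfold ODARFdN at h
  rw [← hm] at h
  have hq : p / m = p' / m := ODARq_eq hqlt hqlt' h
  rw [hq] at h
  have ht : p % m * d ≡ p' % m * d [MOD g] := Nat.ModEq.add_left_cancel' _ h
  have hteq : p % m = p' % m := by
    rcases le_total (p % m) (p' % m) with hle | hle
    · exact ODARcancel_td hg hle (Nat.mod_lt _ hmpos) ht
    · exact (ODARcancel_td hg hle (Nat.mod_lt _ hmpos) ht.symm).symm
  have e1 : m * (p' / m) + p % m = p := by rw [← hq]; exact Nat.div_add_mod p m
  have e2 := Nat.div_add_mod p' m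
  omega

/-- L2: no `d`-difference across a gap of at least 2 positions. -/
lemma ODARFdN_not_shift {g d p p' : ℕ} (hg : 0 < g) (h2 : p + 2 ≤ p') (hp' : p' < g)
    (h : ODARFdN g d p' ≡ ODARFdN g d p + d [MOD g]) : False := by
  set m := ODARchainLen g d with hm
  have hmpos : 0 < m := ODARchainLen_pos hg
  have hgm : g = Nat.gcd g d * m := (ODARgcd_mul_chainLen).symm
  have hp : p < g := by omega
  have hqlt : p / m < Nat.gcd g d := Nat.div_lt_iff_lt_mul hmpos |>.mpr (by omega)
  have hqlt' : p' / m < Nat.gcd g d := Nat.div_lt_iff_lt_mul hmpos |>.mpr (by omega)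
  unfold ODARFdN at h
  rw [← hm] at h
  have hrhs : p / m + p % m * d + d = p / m + (p % m + 1) * d := by ring
  rw [hrhs] at h
  have hq : p' / m = p / m := ODARq_eq hqlt' hqlt h
  rw [hq] at h
  have ht : p' % m * d ≡ (p % m + 1) * d [MOD g] := Nat.ModEq.add_left_cancel' _ h
  have e1 := Nat.div_add_mod p m
  have e2 : m * (p / m) + p' % m = p' := by rw [← hq]; exact Nat.div_add_mod p' m
  have htlt' : p' % m < m := Nat.mod_lt _ hmpos
  have htrel : p % m + 2 ≤ p' % m := by omega
  have hfin : p % m + 1 = p' % m := by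
    have hle : p % m + 1 ≤ p' % m := by omega
    exact ODARcancel_td hg hle htlt' ht.symm
  omega

section ZModLayer
variable {g : ℕ} [NeZero g]

/-- chain enumeration valued in `ZMod g`. -/
def Fz (d : ZMod g) (p : ℕ) : ZMod g := ((ODARFdN g d.val p : ℕ) : ZMod g)

lemma Fz_injective {d : ZMod g} {p p' : ℕ} (hp : p < g) (hp' : p' < g)
    (h : Fz d p = Fz d p') : p = p' := by
  have hg : 0 < g := Nat.pos_of_ne_zero (NeZero.ne g)
  refine ODARFdN_injective (d := d.val) hg hp hp' ?_
  exact (ZMod.natCast_eq_natCast_iff _ _ _).mp h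

lemma Fz_not_shift {d : ZMod g} {p p' : ℕ} (h2 : p + 2 ≤ p') (hp' : p' < g)
    (h : Fz d p' = Fz d p + d) : False := by
  have hg : 0 < g := Nat.pos_of_ne_zero (NeZero.ne g)
  refine ODARFdN_not_shift (d := d.val) hg h2 hp' ?_
  refine (ZMod.natCast_eq_natCast_iff _ _ _).mp ?_
  push_cast
  rw [ZMod.natCast_val, ZMod.cast_id]
  exact h

/-- encode a `ZMod g` value as a nonzero element of `Fin (g+1)`. -/
def vOf (z : ZMod g) : Fin (g + 1) := ⟨z.val + 1, by have := ZMod.val_lt z; omega⟩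

lemma vOf_injective : Function.Injective (vOf (g := g)) := by
  intro a b hab
  have : a.val = b.val := by
    have := congrArg Fin.val hab
    simpa [vOf] using this
  exact ZMod.val_injective _ this

lemma vOf_val_ne_zero (z : ZMod g) : ((vOf z : Fin (g+1)) : ℕ) ≠ 0 := by
  simp [vOf]

/-- decode a nonzero element of `Fin (g+1)` to `ZMod g`. -/
def zOf (v : Fin (g + 1)) : ZMod g := ((v : ℕ) - 1 : ℕ)

lemma vOf_zOf (v : Fin (g + 1)) (hv : (v : ℕ) ≠ 0) : vOf (zOf v) = v := by
  have hlt : (v : ℕ) - 1 < g := by have := v.isLt; omega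
  have : (zOf v).val = (v : ℕ) - 1 := ZMod.val_cast_of_lt hlt
  apply Fin.ext
  simp only [vOf, this]
  omega

end ZModLayer

section Words
variable {n g : ℕ} [NeZero g]

/-- The word in class `(s,d)` with support `{i,j}`, `i < j`. -/
def theWord (s d : ZMod g) (i j : Fin n) : Fin n → Fin (g + 1) :=
  fun x => if x = i then vOf (s + Fz d i.val + Fz d j.val)
           else if x = j then vOf (s + Fz d i.val + Fz d j.val + d) else 0

lemma theWord_fst (s d : ZMod g) (i j : Fin n) :
    theWord s d i j i = vOf (s + Fz d i.val + Fz d j.val) := by simp [theWord]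

lemma theWord_snd (s d : ZMod g) {i j : Fin n} (hij : i ≠ j) :
    theWord s d i j j = vOf (s + Fz d i.val + Fz d j.val + d) := by
  simp [theWord, hij.symm]

lemma theWord_other (s d : ZMod g) {i j x : Fin n} (hx : x ≠ i) (hx' : x ≠ j) :
    theWord s d i j x = 0 := by simp [theWord, hx, hx']

lemma vOf_ne_zero (z : ZMod g) : vOf z ≠ (0 : Fin (g + 1)) := by
  intro h
  exact vOf_val_ne_zero z (by rw [h]; rfl)

lemma theWord_support {s d : ZMod g} {i j x : Fin n} (hx : theWord s d i j x ≠ 0) :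
    x = i ∨ x = j := by
  by_contra hc
  push_neg at hc
  exact hx (theWord_other s d hc.1 hc.2)

lemma wordWeight_theWord (s d : ZMod g) {i j : Fin n} (hij : i < j) :
    wordWeight (theWord s d i j) = 2 := by
  have hne : i ≠ j := ne_of_lt hij
  unfold wordWeight
  have hflt : (Finset.univ.filter (fun x => ((theWord s d i j x : ℕ) ≠ 0))) = {i, j} := by
    ext x
    simp only [Finset.mem_filter, Finset.mem_univ, true_and, Finset.mem_insert,
      Finset.mem_singleton]
    constructor
    · intro hx
      refine theWord_support (s := s) (d := d) (i := i) (j := j) (x := x) ?_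
      intro h0
      rw [h0] at hx
      exact hx rfl
    · rintro (rfl | rfl)
      · rw [theWord_fst]; exact vOf_val_ne_zero _
      · rw [theWord_snd _ _ hne]; exact vOf_val_ne_zero _
  rw [hflt]
  exact Finset.card_pair hne

lemma theWord_mem (s d : ZMod g) {i j : Fin n} (hij : i < j) :
    theWord s d i j ∈ weightTwoWords n g := by
  unfold weightTwoWords
  simp [wordWeight_theWord s d hij]

lemma build_word {w : Fin n → Fin (g + 1)} {a b : Fin n}
    (hmem : ∀ x : Fin n, ((w x : ℕ) ≠ 0) ↔ (x = a ∨ x = b)) (hab : a < b) :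
    ∃ (s d : ZMod g) (i j : Fin n), i < j ∧ theWord s d i j = w := by
  have hwa : (w a : ℕ) ≠ 0 := (hmem a).mpr (Or.inl rfl)
  have hwb : (w b : ℕ) ≠ 0 := (hmem b).mpr (Or.inr rfl)
  set za := zOf (w a) with hza
  set zb := zOf (w b) with hzb
  set d := zb - za with hd
  refine ⟨za - Fz d a.val - Fz d b.val, d, a, b, hab, ?_⟩
  funext x
  by_cases hxa : x = a
  · subst hxa
    rw [theWord_fst]
    have hsum : za - Fz d x.val - Fz d b.val + Fz d x.val + Fz d b.val = za := by ring
    rw [hsum, vOf_zOf _ hwa]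
  · by_cases hxb : x = b
    · subst hxb
      rw [theWord_snd _ _ (ne_of_lt hab)]
      have hsum : za - Fz d a.val - Fz d x.val + Fz d a.val + Fz d x.val + d = zb := by
        rw [hd]; ring
      rw [hsum, vOf_zOf _ hwb]
    · rw [theWord_other _ _ hxa hxb]
      symm
      have h0 : (w x : ℕ) = 0 := by
        by_contra hc
        rcases (hmem x).mp hc with h | h
        · exact hxa h
        · exact hxb h
      exact Fin.ext h0

/-- every weight-two word arises as `theWord s d i j`. -/
lemma decomposition {w : Fin n → Fin (g + 1)} (hw : w ∈ weightTwoWords n g) :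
    ∃ (s d : ZMod g) (i j : Fin n), i < j ∧ theWord s d i j = w := by
  unfold weightTwoWords at hw
  rw [Finset.mem_filter] at hw
  have hcard := hw.2
  unfold wordWeight at hcard
  obtain ⟨a, b, hab, hset⟩ := Finset.card_eq_two.mp hcard
  have hmem : ∀ x : Fin n, ((w x : ℕ) ≠ 0) ↔ (x = a ∨ x = b) := by
    intro x
    constructor
    · intro hx
      have hxs : x ∈ Finset.univ.filter (fun i => ((w i : ℕ) ≠ 0)) := by
        simp only [Finset.mem_filter, Finset.mem_univ, true_and]; exact hx
      rw [hset] at hxs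
      simpa using hxs
    · intro hx
      have hxs : x ∈ ({a, b} : Finset (Fin n)) := by simpa using hx
      rw [← hset] at hxs
      simpa using hxs
  rcases hab.lt_or_gt with hlt | hlt
  · exact build_word hmem hlt
  · have hmem' : ∀ x : Fin n, ((w x : ℕ) ≠ 0) ↔ (x = b ∨ x = a) := by
      intro x; rw [hmem]; tauto
    exact build_word hmem' hlt

/-- class and support are determined by the word. -/
lemma classEq {s d s' d' : ZMod g} {i j k l : Fin n} (hij : i < j) (hkl : k < l)
    (heq : theWord s d i j = theWord s' d' k l) :
    s = s' ∧ d = d' ∧ i = k ∧ j = l := by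
  -- supports agree
  have hik : i = k := by
    have h1 : theWord s' d' k l i ≠ 0 := by
      rw [← heq, theWord_fst]; exact vOf_ne_zero _
    have h2 : theWord s d i j k ≠ 0 := by
      rw [heq, theWord_fst]; exact vOf_ne_zero _
    rcases theWord_support h1 with h | h
    · exact h
    · -- i = l ; then k ∈ {i, j} leads to contradiction
      exfalso
      rcases theWord_support h2 with h' | h'
      · -- k = i = l contradicts k < l
        rw [h] at h'; rw [h'] at hkl; exact lt_irrefl _ hkl
      · -- k = j : then j = k < l = i < j
        rw [h'] at hkl; rw [h] at hij
        exact lt_irrefl _ (hij.trans hkl)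
  subst hik
  have hjl : j = l := by
    have h1 : theWord s' d' i l j ≠ 0 := by
      rw [← heq, theWord_snd _ _ (ne_of_lt hij)]; exact vOf_ne_zero _
    rcases theWord_support h1 with h | h
    · exfalso; rw [h] at hij; exact lt_irrefl _ hij
    · exact h
  subst hjl
  -- now compare values
  have hv1 : vOf (s + Fz d i.val + Fz d j.val) = vOf (s' + Fz d' i.val + Fz d' j.val) := by
    have := congrFun heq i
    rwa [theWord_fst, theWord_fst] at this
  have hv2 : vOf (s + Fz d i.val + Fz d j.val + d) =
      vOf (s' + Fz d' i.val + Fz d' j.val + d') := by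
    have := congrFun heq j
    rwa [theWord_snd _ _ (ne_of_lt hij), theWord_snd _ _ (ne_of_lt hij)] at this
  have e1 := vOf_injective hv1
  have e2 := vOf_injective hv2
  have hdd : d = d' := by
    rw [e1] at e2
    exact add_left_cancel e2
  subst hdd
  refine ⟨?_, rfl, rfl, rfl⟩
  have := e1
  exact by
    have h1 : s + (Fz d i.val + Fz d j.val) = s' + (Fz d i.val + Fz d j.val) := by
      rw [← add_assoc, ← add_assoc]; exact e1
    exact add_right_cancel h1

end Words

section Distance
variable {n g : ℕ} [NeZero g]

lemma three_le_hamming {x y : Fin n → Fin (g + 1)} {p1 p2 p3 : Fin n}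
    (h12 : p1 ≠ p2) (h13 : p1 ≠ p3) (h23 : p2 ≠ p3)
    (d1 : x p1 ≠ y p1) (d2 : x p2 ≠ y p2) (d3 : x p3 ≠ y p3) :
    3 ≤ hammingDist x y := by
  have hsub : ({p1, p2, p3} : Finset (Fin n)) ⊆ Finset.univ.filter (fun i => x i ≠ y i) := by
    intro p hp
    simp only [Finset.mem_insert, Finset.mem_singleton] at hp
    rcases hp with rfl | rfl | rfl <;> simp [d1, d2, d3]
  have hcard : ({p1, p2, p3} : Finset (Fin n)).card = 3 := by
    rw [Finset.card_insert_of_notMem (by simp [h12, h13]),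
      Finset.card_insert_of_notMem (by simp [h23]), Finset.card_singleton]
  calc 3 = ({p1, p2, p3} : Finset (Fin n)).card := hcard.symm
  _ ≤ (Finset.univ.filter (fun i => x i ≠ y i)).card := Finset.card_le_card hsub
  _ = hammingDist x y := rfl

lemma dist_lemma (hng : n ≤ g) {s d : ZMod g} {i j k l : Fin n} (hij : i < j) (hkl : k < l)
    (hne : ¬(i = k ∧ j = l)) :
    3 ≤ hammingDist (theWord s d i j) (theWord s d k l) := by
  have hgi : (i : ℕ) < g := lt_of_lt_of_le i.isLt hng
  have hgj : (j : ℕ) < g := lt_of_lt_of_le j.isLt hng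
  have hgk : (k : ℕ) < g := lt_of_lt_of_le k.isLt hng
  have hgl : (l : ℕ) < g := lt_of_lt_of_le l.isLt hng
  by_cases hik : i = k
  · subst hik
    have hjl : j ≠ l := fun h => hne ⟨rfl, h⟩
    refine three_le_hamming (p1 := i) (p2 := j) (p3 := l)
      (ne_of_lt hij) (ne_of_lt hkl) hjl ?_ ?_ ?_
    · rw [theWord_fst, theWord_fst]
      intro hEq
      have hv := vOf_injective hEq
      have hFz : Fz d j.val = Fz d l.val := by linear_combination hv
      exact hjl (Fin.ext (Fz_injective hgj hgl hFz))
    · rw [theWord_snd _ _ (ne_of_lt hij), theWord_other _ _ (ne_of_lt hij).symm hjl]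
      exact vOf_ne_zero _
    · rw [theWord_other _ _ (ne_of_lt hkl).symm (fun h => hjl h.symm), theWord_snd _ _ (ne_of_lt hkl)]
      exact (vOf_ne_zero _).symm
  · by_cases hjl : j = l
    · subst hjl
      refine three_le_hamming (p1 := j) (p2 := i) (p3 := k)
        (ne_of_lt hij).symm (ne_of_lt hkl).symm hik ?_ ?_ ?_
      · rw [theWord_snd _ _ (ne_of_lt hij), theWord_snd _ _ (ne_of_lt hkl)]
        intro hEq
        have hv := vOf_injective hEq
        have hFz : Fz d i.val = Fz d k.val := by linear_combination hv
        exact hik (Fin.ext (Fz_injective hgi hgk hFz))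
      · rw [theWord_fst, theWord_other _ _ hik (ne_of_lt hij)]
        exact vOf_ne_zero _
      · rw [theWord_other _ _ (fun h : k = i => hik h.symm) (ne_of_lt hkl), theWord_fst]
        exact (vOf_ne_zero _).symm
    · by_cases hil : i = l
      · subst hil
        -- now k < i < j
        refine three_le_hamming (p1 := i) (p2 := j) (p3 := k)
          (ne_of_lt hij) (fun h => hik h) ((ne_of_lt (hkl.trans hij)).symm) ?_ ?_ ?_
        · rw [theWord_fst, theWord_snd _ _ (ne_of_lt hkl)]
          intro hEq
          have hv := vOf_injective hEq
          have hshift : Fz d j.val = Fz d k.val + d := by linear_combination hv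
          have hv1 : (k : ℕ) < (i : ℕ) := hkl
          have hv2 : (i : ℕ) < (j : ℕ) := hij
          exact Fz_not_shift (by omega) hgj hshift
        · rw [theWord_snd _ _ (ne_of_lt hij),
            theWord_other _ _ ((ne_of_lt (hkl.trans hij)).symm) (ne_of_lt hij).symm]
          exact vOf_ne_zero _
        · rw [theWord_other _ _ (ne_of_lt hkl) (ne_of_lt (hkl.trans hij)), theWord_fst]
          exact (vOf_ne_zero _).symm
      · by_cases hjk : j = k
        · subst hjk
          -- i < j < l
          refine three_le_hamming (p1 := j) (p2 := i) (p3 := l)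
            (ne_of_lt hij).symm (ne_of_lt hkl) (fun h => hil h) ?_ ?_ ?_
          · rw [theWord_snd _ _ (ne_of_lt hij), theWord_fst]
            intro hEq
            have hv := vOf_injective hEq
            have hshift : Fz d l.val = Fz d i.val + d := by linear_combination -hv
            have hv1 : (i : ℕ) < (j : ℕ) := hij
            have hv2 : (j : ℕ) < (l : ℕ) := hkl
            exact Fz_not_shift (by omega) hgl hshift
          · rw [theWord_fst, theWord_other _ _ (ne_of_lt hij) hil]
            exact vOf_ne_zero _
          · rw [theWord_other _ _ (fun h : l = i => hil h.symm) (ne_of_lt hkl).symm,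
              theWord_snd _ _ (ne_of_lt hkl)]
            exact (vOf_ne_zero _).symm
        · refine three_le_hamming (p1 := i) (p2 := j) (p3 := k)
            (ne_of_lt hij) hik (fun h => hjk h) ?_ ?_ ?_
          · rw [theWord_fst, theWord_other _ _ hik hil]
            exact vOf_ne_zero _
          · rw [theWord_snd _ _ (ne_of_lt hij), theWord_other _ _ (fun h => hjk h) hjl]
            exact vOf_ne_zero _
          · rw [theWord_other _ _ (fun h : k = i => hik h.symm) (fun h : k = j => hjk h.symm),
              theWord_fst]
            exact (vOf_ne_zero _).symm

end Distance

section Assembly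

/-- the finset of strictly increasing pairs. -/
def ltPairs (n : ℕ) : Finset (Fin n × Fin n) := Finset.univ.filter (fun p => p.1 < p.2)

lemma card_ltPairs (n : ℕ) : (ltPairs n).card = n.choose 2 := by
  classical
  set gtP : Finset (Fin n × Fin n) := Finset.univ.filter (fun p => p.2 < p.1) with hgt
  have hswap : (ltPairs n).card = gtP.card := by
    refine Finset.card_bij (fun p _ => (p.2, p.1)) ?_ ?_ ?_
    · intro p hp
      simp only [ltPairs, Finset.mem_filter, Finset.mem_univ, true_and] at hp
      simp [hgt, hp]
    · intro p hp q hq h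
      have h1 := congrArg Prod.fst h
      have h2 := congrArg Prod.snd h
      simp only at h1 h2
      exact Prod.ext h2 h1
    · intro p hp
      simp only [hgt, Finset.mem_filter, Finset.mem_univ, true_and] at hp
      exact ⟨(p.2, p.1), by simp [ltPairs, hp], rfl⟩
  have hunion : ltPairs n ∪ gtP = Finset.univ.filter (fun p => p.1 ≠ p.2) := by
    ext p
    simp only [ltPairs, hgt, Finset.mem_union, Finset.mem_filter, Finset.mem_univ, true_and]
    constructor
    · rintro (h | h)
      · exact ne_of_lt h
      · exact (ne_of_lt h).symm
    · intro h
      rcases lt_or_gt_of_ne h with h' | h'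
      · exact Or.inl h'
      · exact Or.inr h'
  have hdisj : Disjoint (ltPairs n) gtP := by
    rw [Finset.disjoint_left]
    intro p hp hp'
    simp only [ltPairs, Finset.mem_filter, Finset.mem_univ, true_and] at hp
    simp only [hgt, Finset.mem_filter, Finset.mem_univ, true_and] at hp'
    exact absurd hp' (lt_asymm hp)
  have hdiag : (Finset.univ.filter (fun p : Fin n × Fin n => p.1 = p.2)).card = n := by
    rw [show (Finset.univ.filter (fun p : Fin n × Fin n => p.1 = p.2)) =
        Finset.univ.image (fun a : Fin n => (a, a)) by
      ext p
      simp only [Finset.mem_filter, Finset.mem_univ, true_and, Finset.mem_image]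
      constructor
      · intro h; exact ⟨p.1, Prod.ext rfl h⟩
      · rintro ⟨a, rfl⟩; rfl]
    rw [Finset.card_image_of_injective _ (fun a b h => (Prod.ext_iff.mp h).1)]
    simp
  have htot := Finset.card_filter_add_card_filter_not
    (s := (Finset.univ : Finset (Fin n × Fin n))) (p := fun p => p.1 = p.2)
  have hcardu : (Finset.univ : Finset (Fin n × Fin n)).card = n * n := by
    simp [Finset.card_univ]
  have hne_card : (Finset.univ.filter (fun p : Fin n × Fin n => p.1 ≠ p.2)).card
      = n * n - n := by
    have : (Finset.univ.filter (fun p : Fin n × Fin n => ¬ p.1 = p.2)).card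
        = n * n - n := by omega
    simpa using this
  have hcu : (ltPairs n).card + gtP.card =
      (Finset.univ.filter (fun p : Fin n × Fin n => p.1 ≠ p.2)).card := by
    rw [← hunion, Finset.card_union_of_disjoint hdisj]
  have hmul : n * (n - 1) + n = n * n := by
    cases n with
    | zero => simp
    | succ k => simp [Nat.succ_sub_one]; ring
  rw [Nat.choose_two_right]
  omega

variable {g : ℕ} [NeZero g]

/-- `Fin g ≃ ZMod g`. -/
def finZMod (g : ℕ) [NeZero g] : Fin g ≃ ZMod g where
  toFun k := ((k : ℕ) : ZMod g)
  invFun z := ⟨z.val, ZMod.val_lt z⟩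
  left_inv k := by
    apply Fin.ext
    simp [ZMod.val_cast_of_lt k.isLt]
  right_inv z := by
    simp [ZMod.natCast_val, ZMod.cast_id]

end Assembly

/-- For every even `n ≥ 2` and every `g` with `n ≤ g`, an `ODAR(n,g)` exists. -/
theorem exists_ODAR_of_even (n g : ℕ) (hn2 : 2 ≤ n) (hne : Even n) (hng : n ≤ g) :
    IsODAR n g := by
  haveI : NeZero g := ⟨by omega⟩
  classical
  -- index equivalence
  let e : Fin (g ^ 2) ≃ ZMod g × ZMod g :=
    ((finCongr (pow_two g)).trans finProdFinEquiv.symm).trans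
      (Equiv.prodCongr (finZMod g) (finZMod g))
  refine ⟨fun c => (ltPairs n).image (fun p => theWord (e c).1 (e c).2 p.1 p.2), ?_, ?_, ?_, ?_⟩
  · -- disjointness
    intro c c' hcc
    rw [Finset.disjoint_left]
    intro w hw hw'
    simp only [Finset.mem_image] at hw hw'
    obtain ⟨p, hp, hpe⟩ := hw
    obtain ⟨q, hq, hqe⟩ := hw'
    simp only [ltPairs, Finset.mem_filter, Finset.mem_univ, true_and] at hp hq
    have heq : theWord (e c).1 (e c).2 p.1 p.2 = theWord (e c').1 (e c').2 q.1 q.2 := by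
      rw [hpe, hqe]
    obtain ⟨hs, hd, -, -⟩ := classEq hp hq heq
    exact hcc (e.injective (Prod.ext hs hd))
  · -- union
    ext w
    simp only [Finset.mem_biUnion, Finset.mem_univ, true_and, Finset.mem_image]
    constructor
    · rintro ⟨c, p, hp, rfl⟩
      simp only [ltPairs, Finset.mem_filter, Finset.mem_univ, true_and] at hp
      exact theWord_mem _ _ hp
    · intro hw
      obtain ⟨s, d, i, j, hij, hwe⟩ := decomposition hw
      refine ⟨e.symm (s, d), (i, j), by simp [ltPairs, hij], ?_⟩
      rw [Equiv.apply_symm_apply]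
      exact hwe
  · -- cardinality
    intro c
    rw [Finset.card_image_of_injOn, card_ltPairs]
    intro p hp q hq heq
    simp only [ltPairs, Finset.coe_filter, Set.mem_setOf_eq] at hp hq
    obtain ⟨-, -, h1, h2⟩ := classEq hp.2 hq.2 heq
    exact Prod.ext h1 h2
  · -- distance
    intro c w hw y hy hwy
    simp only [Finset.mem_image] at hw hy
    obtain ⟨p, hp, rfl⟩ := hw
    obtain ⟨q, hq, rfl⟩ := hy
    simp only [ltPairs, Finset.mem_filter, Finset.mem_univ, true_and] at hp hq
    refine dist_lemma hng hp hq ?_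
    rintro ⟨h1, h2⟩
    exact hwy (by rw [h1, h2])
end

section
/- For every odd integer n ≥ 3 and every integer g with n ≤ g, there exists an ODAR(n,g), i.e., a partition of the set of all words of length n and weight 2 over ℤ_{g+1} into g² subsets such that each subset has cardinality C(n,2) and any two distinct words lying in the same subset have Hamming distance at least 3. -/
namespace ODARProof

lemma int_dvd_zero_of_bounded {M : ℕ} {z : ℤ} (h : (M:ℤ) ∣ z) (h1 : -(M:ℤ) < z)
    (h2 : z < M) : z = 0 := by
  rcases h with ⟨c, rfl⟩
  rcases lt_trichotomy c 0 with hc | hc | hc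
  · have : (M:ℤ) * c ≤ M * (-1) := by
      apply mul_le_mul_of_nonneg_left (by omega) (by positivity)
    omega
  · simp [hc]
  · have : (M:ℤ) * 1 ≤ M * c := by
      apply mul_le_mul_of_nonneg_left (by omega) (by positivity)
    omega

lemma int_dvd_cases_of_bounded {M : ℕ} {z : ℤ} (h : (M:ℤ) ∣ z) (h1 : -(M:ℤ) < z)
    (h2 : z ≤ M) : z = 0 ∨ z = M := by
  rcases eq_or_lt_of_le h2 with he | hlt
  · right; omega
  · left; exact int_dvd_zero_of_bounded h h1 hlt

def gam (d g : ℕ) : ℕ := Nat.gcd d g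
def mm (d g : ℕ) : ℕ := g / gam d g
def hh (d g : ℕ) : ℕ := (mm d g + 1) / 2
def Sp (d g j : ℕ) : ℕ := (j * mm d g + 1) / 2
def Sm (d g j : ℕ) : ℕ := j * mm d g / 2
def cp (n d g : ℕ) : ℕ := n / mm d g

def jP (d g x : ℕ) : ℕ := if x % mm d g < hh d g then 2*(x / mm d g) else 2*(x / mm d g) + 1
def tP (d g x : ℕ) : ℕ := if x % mm d g < hh d g then x % mm d g else x % mm d g - hh d g
def jM (d g y : ℕ) : ℕ :=
  if y % mm d g < mm d g - hh d g then 2*(y / mm d g) else 2*(y / mm d g) + 1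
def tM (d g y : ℕ) : ℕ :=
  if y % mm d g < mm d g - hh d g then y % mm d g else y % mm d g - (mm d g - hh d g)

def Aval (g k d x : ℕ) : ZMod g :=
  if x ≤ k then (jP d g x : ZMod g) - (tP d g x : ℕ) * (d : ZMod g)
  else (jM d g (x - (k+1)) : ZMod g) + (tM d g (x - (k+1)) : ℕ) * (d : ZMod g)

def Bval (g k d x : ℕ) : ZMod g :=
  if x ≤ k then Aval g k d x - (d : ZMod g) else Aval g k d x + (d : ZMod g)

section basic
variable {n g k d : ℕ}

lemma gam_pos (hd : 0 < d) : 0 < gam d g := Nat.gcd_pos_of_pos_left g hd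

lemma gam_mul_mm : gam d g * mm d g = g :=
  Nat.mul_div_cancel' (Nat.gcd_dvd_right d g)

lemma mm_ge_two (hd : 0 < d) (hdg : d < g) : 2 ≤ mm d g := by
  have h2 : gam d g ≤ d := Nat.le_of_dvd hd (Nat.gcd_dvd_left d g)
  have h3 : gam d g * mm d g = g := gam_mul_mm
  have h4 : 0 < gam d g := gam_pos hd
  rcases Nat.lt_or_ge (mm d g) 2 with h | h
  · interval_cases h5 : mm d g <;> omega
  · exact h

lemma hh_bounds : 2 * hh d g ≤ mm d g + 1 ∧ mm d g ≤ 2 * hh d g := by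
  constructor <;> · unfold hh; omega

lemma decodeP (hM : mm d g ≠ 0) (x : ℕ) :
    x = Sp d g (jP d g x) + tP d g x ∧
    (jP d g x % 2 = 0 → tP d g x < hh d g) ∧
    (jP d g x % 2 = 1 → tP d g x < mm d g - hh d g) := by
  have key : x / mm d g * mm d g + x % mm d g = x := by
    rw [mul_comm]; exact Nat.div_add_mod x (mm d g)
  have hb := hh_bounds (d := d) (g := g)
  have hx : x % mm d g < mm d g := Nat.mod_lt _ (by omega)
  unfold jP tP Sp
  set q := x / mm d g with hqdef
  set rem := x % mm d g with hremdef
  by_cases hc : rem < hh d g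
  · simp only [if_pos hc]
    have he : (2 * q) * mm d g + 1 = 2 * (q * mm d g) + 1 := by ring
    rw [he]
    set u := q * mm d g with hu
    have h2 : (2 * u + 1) / 2 = u := by omega
    rw [h2]
    exact ⟨by omega, fun _ => hc, fun h => by omega⟩
  · simp only [if_neg hc]
    have he : (2 * q + 1) * mm d g + 1
        = 2 * (q * mm d g) + (mm d g + 1) := by ring
    rw [he]
    set u := q * mm d g with hu
    have h2 : (2 * u + (mm d g + 1)) / 2 = u + hh d g := by unfold hh; omega
    rw [h2]
    exact ⟨by omega, fun h => by omega, fun _ => by omega⟩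

lemma decodeM (hM : mm d g ≠ 0) (y : ℕ) :
    y = Sm d g (jM d g y) + tM d g y ∧
    (jM d g y % 2 = 0 → tM d g y < mm d g - hh d g) ∧
    (jM d g y % 2 = 1 → tM d g y < hh d g) := by
  have key : y / mm d g * mm d g + y % mm d g = y := by
    rw [mul_comm]; exact Nat.div_add_mod y (mm d g)
  have hb := hh_bounds (d := d) (g := g)
  have hy : y % mm d g < mm d g := Nat.mod_lt _ (by omega)
  unfold jM tM Sm
  set q := y / mm d g with hqdef
  set rem := y % mm d g with hremdef
  by_cases hc : rem < mm d g - hh d g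
  · simp only [if_pos hc]
    have he : (2 * q) * mm d g = 2 * (q * mm d g) := by ring
    rw [he]
    set u := q * mm d g with hu
    have h2 : (2 * u) / 2 = u := by omega
    rw [h2]
    exact ⟨by omega, fun _ => hc, fun h => by omega⟩
  · simp only [if_neg hc]
    have he : (2 * q + 1) * mm d g = 2 * (q * mm d g) + mm d g := by ring
    rw [he]
    set u := q * mm d g with hu
    have h2 : (2 * u + mm d g) / 2 = u + (mm d g - hh d g) := by unfold hh; omega
    rw [h2]
    exact ⟨by omega, fun h => by omega, fun _ => by unfold hh at *; omega⟩

lemma Sp_add_Sm (j : ℕ) : Sp d g j + Sm d g j = j * mm d g := by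
  unfold Sp Sm; omega

lemma Sm_le_Sp (j : ℕ) : Sm d g j ≤ Sp d g j ∧ Sp d g j ≤ Sm d g j + 1 := by
  unfold Sp Sm; omega

lemma Sp_mono {a b : ℕ} (hab : a ≤ b) : Sp d g a ≤ Sp d g b := by
  unfold Sp
  have : a * mm d g ≤ b * mm d g := Nat.mul_le_mul_right _ hab
  omega

lemma Sm_mono {a b : ℕ} (hab : a ≤ b) : Sm d g a ≤ Sm d g b := by
  unfold Sm
  have : a * mm d g ≤ b * mm d g := Nat.mul_le_mul_right _ hab
  omega

end basic

end ODARProof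
section part2
namespace ODARProof

variable {n g k d : ℕ}

lemma master (hd : 0 < d) (hdg : d < g)
    {J J' : ℕ} (hJ : J < gam d g) (hJ' : J' < gam d g) {s s' : ℤ}
    (h : (J : ZMod g) + (s : ZMod g) * (d : ZMod g)
       = (J' : ZMod g) + (s' : ZMod g) * (d : ZMod g)) :
    J = J' ∧ (mm d g : ℤ) ∣ s - s' := by
  have hg : 0 < g := lt_trans hd hdg
  have hγ : 0 < gam d g := gam_pos hd
  have hγg : gam d g ∣ g := Nat.gcd_dvd_right d g
  have hγd : gam d g ∣ d := Nat.gcd_dvd_left d g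
  haveI : NeZero (gam d g) := ⟨by omega⟩
  haveI : NeZero g := ⟨by omega⟩
  have hJJ : J = J' := by
    have h2 := congrArg (ZMod.castHom hγg (ZMod (gam d g))) h
    have hd0 : ((d : ℕ) : ZMod (gam d g)) = 0 :=
      (ZMod.natCast_eq_zero_iff d _).mpr hγd
    simp only [map_add, map_mul, map_natCast, map_intCast, hd0, mul_zero, add_zero] at h2
    have h3 := (ZMod.natCast_eq_natCast_iff _ _ _).mp h2
    unfold Nat.ModEq at h3
    rw [Nat.mod_eq_of_lt hJ, Nat.mod_eq_of_lt hJ'] at h3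
    exact h3
  subst hJJ
  refine ⟨rfl, ?_⟩
  have h4 : (((s - s') * (d : ℤ) : ℤ) : ZMod g) = 0 := by
    push_cast
    linear_combination h
  rw [ZMod.intCast_zmod_eq_zero_iff_dvd] at h4
  obtain ⟨d₀, hd₀⟩ := hγd
  have hgm : gam d g * mm d g = g := gam_mul_mm
  have hcop : Nat.Coprime d₀ (mm d g) := by
    have hc : (d / gam d g).Coprime (mm d g) :=
      Nat.coprime_div_gcd_div_gcd (m := d) (n := g) hγ
    have e1 : d / gam d g = d₀ := by
      nth_rewrite 1 [hd₀]
      exact Nat.mul_div_cancel_left _ hγ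
    rw [e1] at hc
    exact hc
  obtain ⟨c, hc⟩ := h4
  have hγne : (gam d g : ℤ) ≠ 0 := by exact_mod_cast (by omega : gam d g ≠ 0)
  have h5 : (mm d g : ℤ) ∣ (s - s') * d₀ := by
    refine ⟨c, ?_⟩
    apply mul_left_cancel₀ hγne
    calc (gam d g : ℤ) * ((s - s') * d₀) = (s - s') * (gam d g * d₀ : ℕ) := by
          push_cast; ring
      _ = (s - s') * d := by rw [← hd₀]
      _ = (g : ℤ) * c := hc
      _ = (gam d g : ℤ) * ((mm d g : ℤ) * c) := by
          have e3 : (g : ℤ) = (gam d g : ℤ) * (mm d g : ℤ) := by exact_mod_cast hgm.symm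
          rw [e3]; ring
  have hcop' : IsCoprime (mm d g : ℤ) (d₀ : ℤ) := by
    rw [Int.isCoprime_iff_gcd_eq_one]
    exact_mod_cast hcop.symm
  exact hcop'.dvd_of_dvd_mul_right h5

lemma Sp_gam : 2 * Sp d g (gam d g) = g ∨ 2 * Sp d g (gam d g) = g + 1 := by
  have e : gam d g * mm d g = g := gam_mul_mm
  unfold Sp
  rw [show gam d g * mm d g = g from e]
  omega

lemma Sm_gam : 2 * Sm d g (gam d g) = g ∨ 2 * Sm d g (gam d g) + 1 = g := by
  have e : gam d g * mm d g = g := gam_mul_mm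
  unfold Sm
  rw [show gam d g * mm d g = g from e]
  omega

lemma jP_lt_gam (hd : 0 < d) (hdg : d < g) (hng : n ≤ g) (hk : n = 2*k+1)
    {x : ℕ} (hx : x ≤ k) : jP d g x < gam d g := by
  have hM2 := mm_ge_two hd hdg
  have h1 := (decodeP (d := d) (g := g) (by omega) x).1
  by_contra hge
  push_neg at hge
  have h2 : Sp d g (gam d g) ≤ Sp d g (jP d g x) := Sp_mono hge
  have h3 := Sp_gam (d := d) (g := g)
  omega

lemma jM_lt_gam (hd : 0 < d) (hdg : d < g) (hng : n ≤ g) (hk : n = 2*k+1)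
    {y : ℕ} (hy : y + 1 ≤ k) : jM d g y < gam d g := by
  have hM2 := mm_ge_two hd hdg
  have h1 := (decodeM (d := d) (g := g) (by omega) y).1
  by_contra hge
  push_neg at hge
  have h2 : Sm d g (gam d g) ≤ Sm d g (jM d g y) := Sm_mono hge
  have h3 := Sm_gam (d := d) (g := g)
  omega

lemma Sp_even (a : ℕ) : Sp d g (2*a) = a * mm d g := by
  unfold Sp
  rw [show 2*a*mm d g = 2*(a * mm d g) from by ring]
  omega

lemma Sp_odd (a : ℕ) : Sp d g (2*a+1) = a * mm d g + hh d g := by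
  unfold Sp hh
  rw [show (2*a+1)*mm d g = 2*(a * mm d g) + mm d g from by ring]
  omega

lemma Sm_even (a : ℕ) : Sm d g (2*a) = a * mm d g := by
  unfold Sm
  rw [show 2*a*mm d g = 2*(a * mm d g) from by ring]
  omega

lemma Sm_odd (a : ℕ) : Sm d g (2*a+1) = a * mm d g + (mm d g - hh d g) := by
  unfold Sm hh
  rw [show (2*a+1)*mm d g = 2*(a * mm d g) + mm d g from by ring]
  omega

/-- `A`-collisions happen only at distance `0`, `k` or `k+1`. -/
lemma rowA_eq (hd : 0 < d) (hdg : d < g) (hng : n ≤ g) (hk : n = 2*k+1)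
    {x x' : ℕ} (hx : x < n) (hx' : x' < n)
    (h : Aval g k d x = Aval g k d x') :
    x = x' ∨ x' + k = x ∨ x' + (k+1) = x ∨ x + k = x' ∨ x + (k+1) = x' := by
  have hM2 := mm_ge_two hd hdg
  have hMne : mm d g ≠ 0 := by omega
  have hb := hh_bounds (d := d) (g := g)
  unfold Aval at h
  by_cases c1 : x ≤ k <;> by_cases c2 : x' ≤ k
  · -- both plus arc
    rw [if_pos c1, if_pos c2] at h
    obtain ⟨he1, hp1, hp2⟩ := decodeP (d := d) (g := g) hMne x
    obtain ⟨he1', hp1', hp2'⟩ := decodeP (d := d) (g := g) hMne x'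
    have h' : ((jP d g x : ℕ) : ZMod g) + ((-(tP d g x : ℤ) : ℤ) : ZMod g) * (d : ZMod g)
        = ((jP d g x' : ℕ) : ZMod g) + ((-(tP d g x' : ℤ) : ℤ) : ZMod g) * (d : ZMod g) := by
      push_cast
      linear_combination h
    obtain ⟨hJ, hdvd⟩ := master hd hdg (jP_lt_gam hd hdg hng hk c1)
      (jP_lt_gam hd hdg hng hk c2) h'
    have ht : tP d g x = tP d g x' := by
      have hz : (-(tP d g x : ℤ)) - (-(tP d g x' : ℤ)) = 0 := by
        apply int_dvd_zero_of_bounded hdvd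
        · have hpar : jP d g x' % 2 = 0 ∨ jP d g x' % 2 = 1 := by omega
          rcases hpar with hpar | hpar
          · have := hp1' hpar; omega
          · have := hp2' hpar; omega
        · have hpar : jP d g x % 2 = 0 ∨ jP d g x % 2 = 1 := by omega
          rcases hpar with hpar | hpar
          · have := hp1 hpar; omega
          · have := hp2 hpar; omega
      omega
    rw [hJ, ht] at he1
    omega
  · -- x plus, x' minus
    rw [if_pos c1, if_neg c2] at h
    obtain ⟨he1, hp1, hp2⟩ := decodeP (d := d) (g := g) hMne x
    obtain ⟨he1', hp1', hp2'⟩ := decodeM (d := d) (g := g) hMne (x' - (k+1))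
    have h' : ((jP d g x : ℕ) : ZMod g) + ((-(tP d g x : ℤ) : ℤ) : ZMod g) * (d : ZMod g)
        = ((jM d g (x' - (k+1)) : ℕ) : ZMod g)
          + (((tM d g (x' - (k+1)) : ℤ) : ℤ) : ZMod g) * (d : ZMod g) := by
      push_cast
      linear_combination h
    obtain ⟨hJ, hdvd⟩ := master hd hdg (jP_lt_gam hd hdg hng hk c1)
      (jM_lt_gam hd hdg hng hk (by omega)) h'
    rw [← hJ] at he1' hp1' hp2'
    have hz : (-(tP d g x : ℤ)) - (tM d g (x' - (k+1)) : ℤ) = 0 := by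
      apply int_dvd_zero_of_bounded hdvd
      · have hpar : jP d g x % 2 = 0 ∨ jP d g x % 2 = 1 := by omega
        rcases hpar with hpar | hpar
        · have b1 := hp1 hpar; have b2 := hp1' hpar; omega
        · have b1 := hp2 hpar; have b2 := hp2' hpar; omega
      · omega
    have hle := Sm_le_Sp (d := d) (g := g) (jP d g x)
    omega
  · -- x minus, x' plus
    rw [if_neg c1, if_pos c2] at h
    obtain ⟨he1, hp1, hp2⟩ := decodeM (d := d) (g := g) hMne (x - (k+1))
    obtain ⟨he1', hp1', hp2'⟩ := decodeP (d := d) (g := g) hMne x'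
    have h' : ((jM d g (x - (k+1)) : ℕ) : ZMod g)
          + (((tM d g (x - (k+1)) : ℤ) : ℤ) : ZMod g) * (d : ZMod g)
        = ((jP d g x' : ℕ) : ZMod g)
          + ((-(tP d g x' : ℤ) : ℤ) : ZMod g) * (d : ZMod g) := by
      push_cast
      linear_combination h
    obtain ⟨hJ, hdvd⟩ := master hd hdg (jM_lt_gam hd hdg hng hk (by omega))
      (jP_lt_gam hd hdg hng hk c2) h'
    rw [hJ] at he1 hp1 hp2
    have hz : ((tM d g (x - (k+1)) : ℤ)) - (-(tP d g x' : ℤ)) = 0 := by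
      apply int_dvd_zero_of_bounded hdvd
      · omega
      · have hpar : jP d g x' % 2 = 0 ∨ jP d g x' % 2 = 1 := by omega
        rcases hpar with hpar | hpar
        · have b1 := hp1 hpar; have b2 := hp1' hpar; omega
        · have b1 := hp2 hpar; have b2 := hp2' hpar; omega
    have hle := Sm_le_Sp (d := d) (g := g) (jP d g x')
    omega
  · -- both minus
    rw [if_neg c1, if_neg c2] at h
    obtain ⟨he1, hp1, hp2⟩ := decodeM (d := d) (g := g) hMne (x - (k+1))
    obtain ⟨he1', hp1', hp2'⟩ := decodeM (d := d) (g := g) hMne (x' - (k+1))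
    have h' : ((jM d g (x - (k+1)) : ℕ) : ZMod g)
          + (((tM d g (x - (k+1)) : ℤ) : ℤ) : ZMod g) * (d : ZMod g)
        = ((jM d g (x' - (k+1)) : ℕ) : ZMod g)
          + (((tM d g (x' - (k+1)) : ℤ) : ℤ) : ZMod g) * (d : ZMod g) := by
      push_cast
      linear_combination h
    obtain ⟨hJ, hdvd⟩ := master hd hdg (jM_lt_gam hd hdg hng hk (by omega))
      (jM_lt_gam hd hdg hng hk (by omega)) h'
    have ht : tM d g (x - (k+1)) = tM d g (x' - (k+1)) := by
      have hz : ((tM d g (x - (k+1)) : ℤ)) - ((tM d g (x' - (k+1)) : ℤ)) = 0 := by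
        apply int_dvd_zero_of_bounded hdvd
        · have hpar : jM d g (x - (k+1)) % 2 = 0 ∨ jM d g (x - (k+1)) % 2 = 1 := by omega
          rcases hpar with hpar | hpar
          · have := hp1 hpar; omega
          · have := hp2 hpar; omega
        · have hpar : jM d g (x' - (k+1)) % 2 = 0 ∨ jM d g (x' - (k+1)) % 2 = 1 := by omega
          rcases hpar with hpar | hpar
          · have := hp1' hpar; omega
          · have := hp2' hpar; omega
      omega
    rw [hJ, ht] at he1
    omega

end ODARProof
end part2



namespace ODARProof

variable {n g k d : ℕ}

/-- `B`-collisions happen only at distance `0`, `k` or `k+1`. -/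
lemma rowB_eq (hd : 0 < d) (hdg : d < g) (hng : n ≤ g) (hk : n = 2*k+1)
    {x x' : ℕ} (hx : x < n) (hx' : x' < n)
    (h : Bval g k d x = Bval g k d x') :
    x = x' ∨ x' + k = x ∨ x' + (k+1) = x ∨ x + k = x' ∨ x + (k+1) = x' := by
  have hM2 := mm_ge_two hd hdg
  have hMne : mm d g ≠ 0 := by omega
  have hb := hh_bounds (d := d) (g := g)
  unfold Bval Aval at h
  by_cases c1 : x ≤ k <;> by_cases c2 : x' ≤ k
  · rw [if_pos c1, if_pos c1, if_pos c2, if_pos c2] at h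
    obtain ⟨he1, hp1, hp2⟩ := decodeP (d := d) (g := g) hMne x
    obtain ⟨he1', hp1', hp2'⟩ := decodeP (d := d) (g := g) hMne x'
    have h' : ((jP d g x : ℕ) : ZMod g) + ((-(tP d g x : ℤ)-1 : ℤ) : ZMod g) * (d : ZMod g)
        = ((jP d g x' : ℕ) : ZMod g)
          + ((-(tP d g x' : ℤ)-1 : ℤ) : ZMod g) * (d : ZMod g) := by
      push_cast
      linear_combination h
    obtain ⟨hJ, hdvd⟩ := master hd hdg (jP_lt_gam hd hdg hng hk c1)
      (jP_lt_gam hd hdg hng hk c2) h'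
    have hz : (-(tP d g x : ℤ)-1) - (-(tP d g x' : ℤ)-1) = 0 := by
      apply int_dvd_zero_of_bounded hdvd
      · have hpar : jP d g x' % 2 = 0 ∨ jP d g x' % 2 = 1 := by omega
        rcases hpar with hpar | hpar
        · have := hp1' hpar; omega
        · have := hp2' hpar; omega
      · have hpar : jP d g x % 2 = 0 ∨ jP d g x % 2 = 1 := by omega
        rcases hpar with hpar | hpar
        · have := hp1 hpar; omega
        · have := hp2 hpar; omega
    have ht : tP d g x = tP d g x' := by omega
    rw [hJ, ht] at he1
    omega
  · -- x plus, x' minus : possible end-pair collision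
    rw [if_pos c1, if_pos c1, if_neg c2, if_neg c2] at h
    obtain ⟨he1, hp1, hp2⟩ := decodeP (d := d) (g := g) hMne x
    obtain ⟨he1', hp1', hp2'⟩ := decodeM (d := d) (g := g) hMne (x' - (k+1))
    have h' : ((jP d g x : ℕ) : ZMod g) + ((-(tP d g x : ℤ)-1 : ℤ) : ZMod g) * (d : ZMod g)
        = ((jM d g (x' - (k+1)) : ℕ) : ZMod g)
          + (((tM d g (x' - (k+1)) : ℤ)+1 : ℤ) : ZMod g) * (d : ZMod g) := by
      push_cast
      linear_combination h
    obtain ⟨hJ, hdvd⟩ := master hd hdg (jP_lt_gam hd hdg hng hk c1)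
      (jM_lt_gam hd hdg hng hk (by omega)) h'
    rw [← hJ] at he1' hp1' hp2'
    have hdvd' : (mm d g : ℤ) ∣ ((tP d g x : ℤ) + (tM d g (x' - (k+1)) : ℤ) + 2) := by
      have h2 := Int.dvd_neg.mpr hdvd
      convert h2 using 1
      ring
    have hpar : jP d g x % 2 = 0 ∨ jP d g x % 2 = 1 := by omega
    have hsum : (tP d g x : ℤ) + (tM d g (x' - (k+1)) : ℤ) + 2 ≤ mm d g := by
      rcases hpar with hpar | hpar
      · have b1 := hp1 hpar; have b2 := hp1' hpar; omega
      · have b1 := hp2 hpar; have b2 := hp2' hpar; omega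
    have hcases := int_dvd_cases_of_bounded hdvd' (by omega) hsum
    have hMeq : tP d g x + tM d g (x' - (k+1)) + 2 = mm d g := by omega
    rcases hpar with hpar | hpar
    · obtain ⟨a, ha⟩ : ∃ a, jP d g x = 2*a := ⟨jP d g x / 2, by omega⟩
      rw [ha] at he1 he1' hp1 hp1'
      rw [Sp_even] at he1
      rw [Sm_even] at he1'
      have b1 := hp1 (by omega)
      have b2 := hp1' (by omega)
      omega
    · obtain ⟨a, ha⟩ : ∃ a, jP d g x = 2*a+1 := ⟨jP d g x / 2, by omega⟩
      rw [ha] at he1 he1' hp2 hp2'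
      rw [Sp_odd] at he1
      rw [Sm_odd] at he1'
      have b1 := hp2 (by omega)
      have b2 := hp2' (by omega)
      omega
  · -- x minus, x' plus
    rw [if_neg c1, if_neg c1, if_pos c2, if_pos c2] at h
    obtain ⟨he1, hp1, hp2⟩ := decodeM (d := d) (g := g) hMne (x - (k+1))
    obtain ⟨he1', hp1', hp2'⟩ := decodeP (d := d) (g := g) hMne x'
    have h' : ((jM d g (x - (k+1)) : ℕ) : ZMod g)
          + (((tM d g (x - (k+1)) : ℤ)+1 : ℤ) : ZMod g) * (d : ZMod g)
        = ((jP d g x' : ℕ) : ZMod g)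
          + ((-(tP d g x' : ℤ)-1 : ℤ) : ZMod g) * (d : ZMod g) := by
      push_cast
      linear_combination h
    obtain ⟨hJ, hdvd⟩ := master hd hdg (jM_lt_gam hd hdg hng hk (by omega))
      (jP_lt_gam hd hdg hng hk c2) h'
    rw [hJ] at he1 hp1 hp2
    have hdvd' : (mm d g : ℤ) ∣ ((tM d g (x - (k+1)) : ℤ) + (tP d g x' : ℤ) + 2) := by
      convert hdvd using 1
      ring
    have hpar : jP d g x' % 2 = 0 ∨ jP d g x' % 2 = 1 := by omega
    have hsum : (tM d g (x - (k+1)) : ℤ) + (tP d g x' : ℤ) + 2 ≤ mm d g := by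
      rcases hpar with hpar | hpar
      · have b1 := hp1 hpar; have b2 := hp1' hpar; omega
      · have b1 := hp2 hpar; have b2 := hp2' hpar; omega
    have hcases := int_dvd_cases_of_bounded hdvd' (by omega) hsum
    have hMeq : tM d g (x - (k+1)) + tP d g x' + 2 = mm d g := by omega
    rcases hpar with hpar | hpar
    · obtain ⟨a, ha⟩ : ∃ a, jP d g x' = 2*a := ⟨jP d g x' / 2, by omega⟩
      rw [ha] at he1 he1' hp1 hp1'
      rw [Sp_even] at he1'
      rw [Sm_even] at he1
      have b1 := hp1 (by omega)
      have b2 := hp1' (by omega)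
      omega
    · obtain ⟨a, ha⟩ : ∃ a, jP d g x' = 2*a+1 := ⟨jP d g x' / 2, by omega⟩
      rw [ha] at he1 he1' hp2 hp2'
      rw [Sp_odd] at he1'
      rw [Sm_odd] at he1
      have b1 := hp2 (by omega)
      have b2 := hp2' (by omega)
      omega
  · rw [if_neg c1, if_neg c1, if_neg c2, if_neg c2] at h
    obtain ⟨he1, hp1, hp2⟩ := decodeM (d := d) (g := g) hMne (x - (k+1))
    obtain ⟨he1', hp1', hp2'⟩ := decodeM (d := d) (g := g) hMne (x' - (k+1))
    have h' : ((jM d g (x - (k+1)) : ℕ) : ZMod g)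
          + (((tM d g (x - (k+1)) : ℤ)+1 : ℤ) : ZMod g) * (d : ZMod g)
        = ((jM d g (x' - (k+1)) : ℕ) : ZMod g)
          + (((tM d g (x' - (k+1)) : ℤ)+1 : ℤ) : ZMod g) * (d : ZMod g) := by
      push_cast
      linear_combination h
    obtain ⟨hJ, hdvd⟩ := master hd hdg (jM_lt_gam hd hdg hng hk (by omega))
      (jM_lt_gam hd hdg hng hk (by omega)) h'
    have hz : ((tM d g (x - (k+1)) : ℤ)+1) - ((tM d g (x' - (k+1)) : ℤ)+1) = 0 := by
      apply int_dvd_zero_of_bounded hdvd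
      · have hpar : jM d g (x - (k+1)) % 2 = 0 ∨ jM d g (x - (k+1)) % 2 = 1 := by omega
        rcases hpar with hpar | hpar
        · have := hp1 hpar; omega
        · have := hp2 hpar; omega
      · have hpar : jM d g (x' - (k+1)) % 2 = 0 ∨ jM d g (x' - (k+1)) % 2 = 1 := by omega
        rcases hpar with hpar | hpar
        · have := hp1' hpar; omega
        · have := hp2' hpar; omega
    have ht : tM d g (x - (k+1)) = tM d g (x' - (k+1)) := by omega
    rw [hJ, ht] at he1
    omega

/-- `A`-`B` cross collisions happen only at adjacent positions. -/
lemma rowAB_eq (hd : 0 < d) (hdg : d < g) (hng : n ≤ g) (hk : n = 2*k+1)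
    {x x' : ℕ} (hx : x < n) (hx' : x' < n)
    (h : Aval g k d x = Bval g k d x') :
    x = x' ∨ x = x' + 1 := by
  have hM2 := mm_ge_two hd hdg
  have hMne : mm d g ≠ 0 := by omega
  have hb := hh_bounds (d := d) (g := g)
  unfold Bval Aval at h
  by_cases c1 : x ≤ k <;> by_cases c2 : x' ≤ k
  · rw [if_pos c1, if_pos c2, if_pos c2] at h
    obtain ⟨he1, hp1, hp2⟩ := decodeP (d := d) (g := g) hMne x
    obtain ⟨he1', hp1', hp2'⟩ := decodeP (d := d) (g := g) hMne x'
    have h' : ((jP d g x : ℕ) : ZMod g) + ((-(tP d g x : ℤ) : ℤ) : ZMod g) * (d : ZMod g)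
        = ((jP d g x' : ℕ) : ZMod g)
          + ((-(tP d g x' : ℤ)-1 : ℤ) : ZMod g) * (d : ZMod g) := by
      push_cast
      linear_combination h
    obtain ⟨hJ, hdvd⟩ := master hd hdg (jP_lt_gam hd hdg hng hk c1)
      (jP_lt_gam hd hdg hng hk c2) h'
    have hz : (-(tP d g x : ℤ)) - (-(tP d g x' : ℤ)-1) = 0 := by
      apply int_dvd_zero_of_bounded hdvd
      · have hpar : jP d g x % 2 = 0 ∨ jP d g x % 2 = 1 := by omega
        rcases hpar with hpar | hpar
        · have := hp1 hpar; omega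
        · have := hp2 hpar; omega
      · have hpar : jP d g x' % 2 = 0 ∨ jP d g x' % 2 = 1 := by omega
        rcases hpar with hpar | hpar
        · have := hp1' hpar; omega
        · have := hp2' hpar; omega
    rw [hJ] at he1
    omega
  · rw [if_pos c1, if_neg c2, if_neg c2] at h
    obtain ⟨he1, hp1, hp2⟩ := decodeP (d := d) (g := g) hMne x
    obtain ⟨he1', hp1', hp2'⟩ := decodeM (d := d) (g := g) hMne (x' - (k+1))
    have h' : ((jP d g x : ℕ) : ZMod g) + ((-(tP d g x : ℤ) : ℤ) : ZMod g) * (d : ZMod g)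
        = ((jM d g (x' - (k+1)) : ℕ) : ZMod g)
          + (((tM d g (x' - (k+1)) : ℤ)+1 : ℤ) : ZMod g) * (d : ZMod g) := by
      push_cast
      linear_combination h
    obtain ⟨hJ, hdvd⟩ := master hd hdg (jP_lt_gam hd hdg hng hk c1)
      (jM_lt_gam hd hdg hng hk (by omega)) h'
    rw [← hJ] at hp1' hp2'
    exfalso
    have hz : (-(tP d g x : ℤ)) - ((tM d g (x' - (k+1)) : ℤ)+1) = 0 := by
      apply int_dvd_zero_of_bounded hdvd
      · have hpar : jP d g x % 2 = 0 ∨ jP d g x % 2 = 1 := by omega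
        rcases hpar with hpar | hpar
        · have b1 := hp1 hpar; have b2 := hp1' hpar; omega
        · have b1 := hp2 hpar; have b2 := hp2' hpar; omega
      · omega
    omega
  · rw [if_neg c1, if_pos c2, if_pos c2] at h
    obtain ⟨he1, hp1, hp2⟩ := decodeM (d := d) (g := g) hMne (x - (k+1))
    obtain ⟨he1', hp1', hp2'⟩ := decodeP (d := d) (g := g) hMne x'
    have h' : ((jM d g (x - (k+1)) : ℕ) : ZMod g)
          + (((tM d g (x - (k+1)) : ℤ) : ℤ) : ZMod g) * (d : ZMod g)
        = ((jP d g x' : ℕ) : ZMod g)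
          + ((-(tP d g x' : ℤ)-1 : ℤ) : ZMod g) * (d : ZMod g) := by
      push_cast
      linear_combination h
    obtain ⟨hJ, hdvd⟩ := master hd hdg (jM_lt_gam hd hdg hng hk (by omega))
      (jP_lt_gam hd hdg hng hk c2) h'
    rw [hJ] at hp1 hp2
    exfalso
    have hz : ((tM d g (x - (k+1)) : ℤ)) - (-(tP d g x' : ℤ)-1) = 0 := by
      apply int_dvd_zero_of_bounded hdvd
      · omega
      · have hpar : jP d g x' % 2 = 0 ∨ jP d g x' % 2 = 1 := by omega
        rcases hpar with hpar | hpar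
        · have b1 := hp1 hpar; have b2 := hp1' hpar; omega
        · have b1 := hp2 hpar; have b2 := hp2' hpar; omega
    omega
  · rw [if_neg c1, if_neg c2, if_neg c2] at h
    obtain ⟨he1, hp1, hp2⟩ := decodeM (d := d) (g := g) hMne (x - (k+1))
    obtain ⟨he1', hp1', hp2'⟩ := decodeM (d := d) (g := g) hMne (x' - (k+1))
    have h' : ((jM d g (x - (k+1)) : ℕ) : ZMod g)
          + (((tM d g (x - (k+1)) : ℤ) : ℤ) : ZMod g) * (d : ZMod g)
        = ((jM d g (x' - (k+1)) : ℕ) : ZMod g)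
          + (((tM d g (x' - (k+1)) : ℤ)+1 : ℤ) : ZMod g) * (d : ZMod g) := by
      push_cast
      linear_combination h
    obtain ⟨hJ, hdvd⟩ := master hd hdg (jM_lt_gam hd hdg hng hk (by omega))
      (jM_lt_gam hd hdg hng hk (by omega)) h'
    have hz : ((tM d g (x - (k+1)) : ℤ)) - ((tM d g (x' - (k+1)) : ℤ)+1) = 0 := by
      apply int_dvd_zero_of_bounded hdvd
      · have hpar : jM d g (x - (k+1)) % 2 = 0 ∨ jM d g (x - (k+1)) % 2 = 1 := by omega
        rcases hpar with hpar | hpar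
        · have := hp1 hpar; omega
        · have := hp2 hpar; omega
      · have hpar : jM d g (x' - (k+1)) % 2 = 0 ∨ jM d g (x' - (k+1)) % 2 = 1 := by omega
        rcases hpar with hpar | hpar
        · have := hp1' hpar; omega
        · have := hp2' hpar; omega
    rw [hJ] at he1
    omega

end ODARProof



namespace ODARProof

/-- Abstract family of rows sufficient to build an ODAR. -/
structure RowFam (n g k : ℕ) where
  RA : ZMod g → ℕ → ZMod g
  RB : ZMod g → ℕ → ZMod g
  rowD : ∀ d r, r < n → RA d r - RB d r = (if r ≤ k then d else -d)
  rowA : ∀ d x x', x < n → x' < n → RA d x = RA d x' →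
    x = x' ∨ x' + k = x ∨ x' + (k+1) = x ∨ x + k = x' ∨ x + (k+1) = x'
  rowB : ∀ d x x', x < n → x' < n → RB d x = RB d x' →
    x = x' ∨ x' + k = x ∨ x' + (k+1) = x ∨ x + k = x' ∨ x + (k+1) = x'
  rowAB : ∀ d x x', x < n → x' < n → RA d x = RB d x' → x = x' ∨ x = x' + 1

/-- The concrete row family. -/
noncomputable def theRowFam (n g k : ℕ) (hg3 : 3 ≤ g) (hng : n ≤ g) (hk : n = 2*k+1) :
    RowFam n g k := by
  haveI : NeZero g := ⟨by omega⟩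
  refine
  { RA := fun d x => if d = 0 then (x : ZMod g) else Aval g k d.val x
    RB := fun d x => if d = 0 then (x : ZMod g) else Bval g k d.val x
    rowD := ?_, rowA := ?_, rowB := ?_, rowAB := ?_ }
  · intro d r hr
    by_cases hd0 : d = 0
    · simp [hd0]
    · rw [if_neg hd0, if_neg hd0]
      have hv : ((d.val : ℕ) : ZMod g) = d := by
        rw [ZMod.natCast_val, ZMod.cast_id]
      unfold Bval
      by_cases hc : r ≤ k
      · rw [if_pos hc, if_pos hc, hv]; ring
      · rw [if_neg hc, if_neg hc, hv]; ring
  · intro d x x' hx hx' h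
    by_cases hd0 : d = 0
    · rw [if_pos hd0, if_pos hd0] at h
      have := (ZMod.natCast_eq_natCast_iff _ _ _).mp h
      unfold Nat.ModEq at this
      rw [Nat.mod_eq_of_lt (by omega), Nat.mod_eq_of_lt (by omega)] at this
      omega
    · rw [if_neg hd0, if_neg hd0] at h
      exact rowA_eq (ZMod.val_pos.mpr hd0) (ZMod.val_lt d) hng hk hx hx' h
  · intro d x x' hx hx' h
    by_cases hd0 : d = 0
    · rw [if_pos hd0, if_pos hd0] at h
      have := (ZMod.natCast_eq_natCast_iff _ _ _).mp h
      unfold Nat.ModEq at this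
      rw [Nat.mod_eq_of_lt (by omega), Nat.mod_eq_of_lt (by omega)] at this
      omega
    · rw [if_neg hd0, if_neg hd0] at h
      exact rowB_eq (ZMod.val_pos.mpr hd0) (ZMod.val_lt d) hng hk hx hx' h
  · intro d x x' hx hx' h
    by_cases hd0 : d = 0
    · rw [if_pos hd0, if_pos hd0] at h
      have := (ZMod.natCast_eq_natCast_iff _ _ _).mp h
      unfold Nat.ModEq at this
      rw [Nat.mod_eq_of_lt (by omega), Nat.mod_eq_of_lt (by omega)] at this
      omega
    · rw [if_neg hd0, if_neg hd0] at h
      exact rowAB_eq (ZMod.val_pos.mpr hd0) (ZMod.val_lt d) hng hk hx hx' h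

end ODARProof




namespace ODARProof

section Frame

variable {n g k : ℕ}

/-- reduce a nonzero symbol of `Fin (g+1)` to `ZMod g`. -/
def red (g : ℕ) (v : Fin (g+1)) : ZMod g := (((v : ℕ) - 1 : ℕ) : ZMod g)

/-- inverse of `red`. -/
def unred (g : ℕ) [NeZero g] (a : ZMod g) : Fin (g+1) :=
  ⟨a.val + 1, by have := ZMod.val_lt a; omega⟩

lemma red_unred [NeZero g] (a : ZMod g) : red g (unred g a) = a := by
  unfold red unred
  simp only [Nat.add_sub_cancel]
  rw [ZMod.natCast_val, ZMod.cast_id]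

lemma unred_val [NeZero g] (a : ZMod g) : ((unred g a : Fin (g+1)) : ℕ) = a.val + 1 := rfl

lemma unred_ne_zero [NeZero g] (a : ZMod g) : ((unred g a : Fin (g+1)) : ℕ) ≠ 0 := by
  rw [unred_val]; omega

lemma unred_red [NeZero g] {v : Fin (g+1)} (hv : (v : ℕ) ≠ 0) : unred g (red g v) = v := by
  have hvlt : (v : ℕ) < g + 1 := v.isLt
  have h1 : ((v : ℕ) - 1) < g := by omega
  unfold red unred
  apply Fin.ext
  simp only
  rw [ZMod.val_cast_of_lt h1]
  omega

lemma red_inj [NeZero g] {v w : Fin (g+1)} (hv : (v : ℕ) ≠ 0) (hw : (w : ℕ) ≠ 0)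
    (h : red g v = red g w) : v = w := by
  have := congrArg (unred g) h
  rwa [unred_red hv, unred_red hw] at this

/-- support of a word. -/
def supp (x : Fin n → Fin (g+1)) : Finset (Fin n) :=
  Finset.univ.filter (fun i => (x i : ℕ) ≠ 0)

lemma mem_supp {x : Fin n → Fin (g+1)} {i : Fin n} : i ∈ supp x ↔ (x i : ℕ) ≠ 0 := by
  unfold supp
  simp

lemma mem_weightTwoWords_iff {x : Fin n → Fin (g+1)} :
    x ∈ weightTwoWords n g ↔ (supp x).card = 2 := by
  unfold weightTwoWords wordWeight supp
  simp

lemma pair_eq_pair {i j i' j' : Fin n} (hij : i < j) (hij' : i' < j')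
    (h : ({i, j} : Finset (Fin n)) = {i', j'}) : i = i' ∧ j = j' := by
  have h1 : i' ∈ ({i, j} : Finset (Fin n)) := by rw [h]; simp
  have h2 : j' ∈ ({i, j} : Finset (Fin n)) := by rw [h]; simp
  have h3 : i ∈ ({i', j'} : Finset (Fin n)) := by rw [← h]; simp
  have h4 : j ∈ ({i', j'} : Finset (Fin n)) := by rw [← h]; simp
  simp only [Finset.mem_insert, Finset.mem_singleton] at h1 h2 h3 h4
  have hlt : i.val < j.val := hij
  have hlt' : i'.val < j'.val := hij'
  have e1 : i'.val = i.val ∨ i'.val = j.val := by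
    rcases h1 with h | h <;> [left; right] <;> rw [h]
  have e2 : j'.val = i.val ∨ j'.val = j.val := by
    rcases h2 with h | h <;> [left; right] <;> rw [h]
  have e3 : i.val = i'.val ∨ i.val = j'.val := by
    rcases h3 with h | h <;> [left; right] <;> rw [h]
  have e4 : j.val = i'.val ∨ j.val = j'.val := by
    rcases h4 with h | h <;> [left; right] <;> rw [h]
  constructor <;> apply Fin.ext <;> omega

lemma exists_pair_of_card_two {s : Finset (Fin n)} (h : s.card = 2) :
    ∃ i j : Fin n, i < j ∧ s = {i, j} := by
  obtain ⟨a, b, hab, rfl⟩ := Finset.card_eq_two.mp h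
  rcases lt_or_gt_of_ne hab with hlt | hgt
  · exact ⟨a, b, hlt, rfl⟩
  · exact ⟨b, a, hgt, Finset.pair_comm a b⟩

variable (k) in
/-- difference parameter of a pair of reduced values at color `r`. -/
def ddOf (r : ℕ) (α β : ZMod g) : ZMod g := if r ≤ k then α - β else β - α

/-- the class of a (plus-value, minus-value) pair at color `r`. -/
def classOfPair (F : RowFam n g k) (r : ℕ) (α β : ZMod g) : ZMod g × ZMod g :=
  (α - F.RA (ddOf k r α β) r, ddOf k r α β)

lemma classOfPair_fst (F : RowFam n g k) (r : ℕ) (α β : ZMod g) :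
    (classOfPair F r α β).1 = α - F.RA (ddOf k r α β) r := rfl

lemma classOfPair_snd (F : RowFam n g k) (r : ℕ) (α β : ZMod g) :
    (classOfPair F r α β).2 = ddOf k r α β := rfl

lemma classOfPair_spec (F : RowFam n g k) {r : ℕ} (hr : r < n) (α β : ZMod g) :
    α = (classOfPair F r α β).1 + F.RA (classOfPair F r α β).2 r ∧
    β = (classOfPair F r α β).1 + F.RB (classOfPair F r α β).2 r := by
  have hd := F.rowD (ddOf k r α β) r hr
  rw [classOfPair_fst, classOfPair_snd]
  constructor
  · ring
  · by_cases hc : r ≤ k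
    · rw [if_pos hc] at hd
      have hv : ddOf k r α β = α - β := by unfold ddOf; rw [if_pos hc]
      linear_combination hd + hv
    · rw [if_neg hc] at hd
      have hv : ddOf k r α β = β - α := by unfold ddOf; rw [if_neg hc]
      linear_combination hd - hv

lemma classOfPair_unique (F : RowFam n g k) {r : ℕ} (hr : r < n) {α β κ dd : ZMod g}
    (h1 : α = κ + F.RA dd r) (h2 : β = κ + F.RB dd r) :
    classOfPair F r α β = (κ, dd) := by
  have hd := F.rowD dd r hr
  have hdd : ddOf k r α β = dd := by
    unfold ddOf
    by_cases hc : r ≤ k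
    · rw [if_pos hc] at hd ⊢
      rw [h1, h2]
      linear_combination hd
    · rw [if_neg hc] at hd ⊢
      rw [h1, h2]
      linear_combination -hd
  have e1 : (classOfPair F r α β).1 = κ := by
    rw [classOfPair_fst, hdd, h1]
    ring
  have e2 : (classOfPair F r α β).2 = dd := by rw [classOfPair_snd, hdd]
  rw [Prod.ext_iff]
  exact ⟨e1, e2⟩

/-- the color of a pair of positions. -/
def rr (i j : Fin n) : ℕ := (i.val + j.val) % n

/-- plus-side value of a weight-two word with support `{i,j}`, `i < j`. -/
def plusVal (g k : ℕ) (x : Fin n → Fin (g+1)) (i j : Fin n) : ZMod g :=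
  if j.val - i.val ≤ k then red g (x i) else red g (x j)

/-- minus-side value. -/
def minusVal (g k : ℕ) (x : Fin n → Fin (g+1)) (i j : Fin n) : ZMod g :=
  if j.val - i.val ≤ k then red g (x j) else red g (x i)

/-- the class of a weight-two word. -/
def classOf (F : RowFam n g k) (x : Fin n → Fin (g+1)) : ZMod g × ZMod g :=
  ∑ p ∈ Finset.univ.filter
      (fun p : Fin n × Fin n => p.1 < p.2 ∧ supp x = {p.1, p.2}),
    classOfPair F (rr p.1 p.2) (plusVal g k x p.1 p.2) (minusVal g k x p.1 p.2)

lemma filter_pair {x : Fin n → Fin (g+1)} {i j : Fin n} (hij : i < j)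
    (hsupp : supp x = {i, j}) :
    Finset.univ.filter (fun p : Fin n × Fin n => p.1 < p.2 ∧ supp x = {p.1, p.2})
      = {(i, j)} := by
  ext p
  simp only [Finset.mem_filter, Finset.mem_univ, true_and, Finset.mem_singleton]
  constructor
  · rintro ⟨hp1, hp2⟩
    rw [hsupp] at hp2
    obtain ⟨e1, e2⟩ := pair_eq_pair hij hp1 hp2
    exact Prod.ext e1.symm e2.symm
  · rintro rfl
    exact ⟨hij, hsupp⟩

lemma classOf_eq_of_supp (F : RowFam n g k) {x : Fin n → Fin (g+1)} {i j : Fin n}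
    (hij : i < j) (hsupp : supp x = {i, j}) :
    classOf F x = classOfPair F (rr i j) (plusVal g k x i j) (minusVal g k x i j) := by
  unfold classOf
  rw [filter_pair hij hsupp, Finset.sum_singleton]

variable (hn1 : 0 < n)

include hn1 in
lemma rr_lt (i j : Fin n) : rr i j < n := Nat.mod_lt _ hn1

/-- the word of a given class with given support pair. -/
def mkWord [NeZero g] (F : RowFam n g k) (κ dd : ZMod g) (i j : Fin n) :
    Fin n → Fin (g+1) := fun t =>
  if t = i then unred g (κ + (if j.val - i.val ≤ k then F.RA dd (rr i j)
      else F.RB dd (rr i j)))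
  else if t = j then unred g (κ + (if j.val - i.val ≤ k then F.RB dd (rr i j)
      else F.RA dd (rr i j)))
  else 0

lemma mkWord_supp [NeZero g] (F : RowFam n g k) (κ dd : ZMod g) {i j : Fin n}
    (hij : i ≠ j) : supp (mkWord F κ dd i j) = {i, j} := by
  ext t
  rw [mem_supp]
  unfold mkWord
  by_cases h1 : t = i
  · subst h1
    simp [unred_ne_zero, Fin.ext_iff, unred_val]
  · by_cases h2 : t = j
    · subst h2
      simp [unred_ne_zero, h1, Fin.ext_iff, unred_val]
    · simp [h1, h2]

lemma mkWord_vals [NeZero g] (F : RowFam n g k) (κ dd : ZMod g) {i j : Fin n}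
    (hij : i ≠ j) :
    red g (mkWord F κ dd i j i) = κ + (if j.val - i.val ≤ k then F.RA dd (rr i j)
      else F.RB dd (rr i j)) ∧
    red g (mkWord F κ dd i j j) = κ + (if j.val - i.val ≤ k then F.RB dd (rr i j)
      else F.RA dd (rr i j)) := by
  constructor
  · show red g (if i = i then _ else _) = _
    rw [if_pos rfl, red_unred]
  · show red g (if j = i then _ else _) = _
    rw [if_neg (Ne.symm hij), if_pos rfl, red_unred]

include hn1 in
lemma mkWord_class [NeZero g] (F : RowFam n g k) (κ dd : ZMod g) {i j : Fin n}
    (hij : i < j) : classOf F (mkWord F κ dd i j) = (κ, dd) := by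
  have hne : i ≠ j := Fin.ne_of_lt hij
  rw [classOf_eq_of_supp F hij (mkWord_supp F κ dd hne)]
  obtain ⟨hv1, hv2⟩ := mkWord_vals F κ dd hne
  apply classOfPair_unique F (rr_lt hn1 i j)
  · unfold plusVal
    by_cases hc : j.val - i.val ≤ k
    · rw [if_pos hc, hv1, if_pos hc]
    · rw [if_neg hc, hv2, if_neg hc]
  · unfold minusVal
    by_cases hc : j.val - i.val ≤ k
    · rw [if_pos hc, hv2, if_pos hc]
    · rw [if_neg hc, hv1, if_neg hc]

/-- class membership determines the two values on the support. -/
lemma classOf_spec (F : RowFam n g k) {x : Fin n → Fin (g+1)} {i j : Fin n}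
    (hij : i < j) (hsupp : supp x = {i, j}) (hn1 : 0 < n) :
    plusVal g k x i j = (classOf F x).1 + F.RA (classOf F x).2 (rr i j) ∧
    minusVal g k x i j = (classOf F x).1 + F.RB (classOf F x).2 (rr i j) := by
  rw [classOf_eq_of_supp F hij hsupp]
  exact classOfPair_spec F (rr_lt hn1 i j) _ _

end Frame

end ODARProof



namespace ODARProof

section Assemble

variable {n g k : ℕ}

lemma modRep {z : ℕ} (hn : 0 < n) (hz : z < 2*n) : z % n = z ∨ z % n + n = z := by
  rcases Nat.lt_or_ge z n with h | h
  · left; exact Nat.mod_eq_of_lt h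
  · right
    have : z % n = z - n := by
      rw [Nat.mod_eq_sub_mod h, Nat.mod_eq_of_lt (by omega)]
    omega

/-- the leg value of a weight-two word at a support position. -/
lemma leg_spec [NeZero g] (F : RowFam n g k) {x : Fin n → Fin (g+1)} {p q : Fin n}
    (hk : n = 2*k+1) (hpq : p ≠ q) (hsupp : supp x = {p, q}) :
    red g (x p) = (classOf F x).1
      + (if (q.val + n - p.val) % n ≤ k then F.RA (classOf F x).2 ((p.val + q.val) % n)
         else F.RB (classOf F x).2 ((p.val + q.val) % n)) := by
  have hn1 : 0 < n := by omega
  have hpv : p.val < n := p.isLt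
  have hqv : q.val < n := q.isLt
  have hne : p.val ≠ q.val := fun h => hpq (Fin.ext h)
  have hrep := modRep (z := q.val + n - p.val) hn1 (by omega)
  rcases Nat.lt_or_ge p.val q.val with hlt | hge
  · -- p < q : p is the smaller one
    have hord : p < q := hlt
    obtain ⟨h1, h2⟩ := classOf_spec F hord hsupp hn1
    have hcond : (q.val + n - p.val) % n = q.val - p.val := by
      have h3 : q.val + n - p.val = n + (q.val - p.val) := by omega
      rw [h3, Nat.add_mod_left, Nat.mod_eq_of_lt (by omega)]
    rw [hcond]
    simp only [plusVal, minusVal] at h1 h2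
    unfold rr at h1 h2
    by_cases hc : q.val - p.val ≤ k
    · rw [if_pos hc] at h1 ⊢
      exact h1
    · rw [if_neg hc] at h2
      rw [if_neg hc]
      exact h2
  · -- q < p
    have hord : q < p := by omega
    have hsupp' : supp x = {q, p} := by rw [hsupp]; exact Finset.pair_comm p q
    obtain ⟨h1, h2⟩ := classOf_spec F hord hsupp' hn1
    have hcond : (q.val + n - p.val) % n = n - (p.val - q.val) := by
      rw [Nat.mod_eq_of_lt (by omega)]
      omega
    have hcomm : (q.val + p.val) % n = (p.val + q.val) % n := by rw [Nat.add_comm]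
    rw [hcond]
    simp only [plusVal, minusVal] at h1 h2
    unfold rr at h1 h2
    rw [hcomm] at h1 h2
    by_cases hc : p.val - q.val ≤ k
    · -- p is the "plus" side?  no: here (p-q) ≤ k means q's pair (q,p) has sg true,
      -- so x p is the minus value; and n - (p-q) ≥ n - k = k+1 > k
      rw [if_pos hc] at h2
      rw [if_neg (by omega)]
      exact h2
    · rw [if_neg hc] at h1
      rw [if_pos (by omega)]
      exact h1

/-- two distinct words in the same class sharing a support position differ there. -/
lemma shared_ne [NeZero g] (F : RowFam n g k) {x y : Fin n → Fin (g+1)}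
    {p q q' : Fin n} (hk : n = 2*k+1)
    (hqq' : q ≠ q') (hpq : p ≠ q) (hpq' : p ≠ q')
    (hsx : supp x = {p, q}) (hsy : supp y = {p, q'})
    (hcl : classOf F x = classOf F y) :
    red g (x p) ≠ red g (y p) := by
  have hn1 : 0 < n := by omega
  intro heq
  have h1 := leg_spec F hk hpq hsx
  have h2 := leg_spec F hk hpq' hsy
  rw [← hcl] at h2
  rw [h1, h2] at heq
  have heq' := add_left_cancel heq
  clear heq h1 h2
  set d := (classOf F x).2
  have hpv : p.val < n := p.isLt
  have hqv : q.val < n := q.isLt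
  have hq'v : q'.val < n := q'.isLt
  have hne1 : p.val ≠ q.val := fun h => hpq (Fin.ext h)
  have hne2 : p.val ≠ q'.val := fun h => hpq' (Fin.ext h)
  have hne3 : q.val ≠ q'.val := fun h => hqq' (Fin.ext h)
  have hrepa := modRep (z := q.val + n - p.val) hn1 (by omega)
  have hrepa' := modRep (z := q'.val + n - p.val) hn1 (by omega)
  have hrepr := modRep (z := p.val + q.val) hn1 (by omega)
  have hrepr' := modRep (z := p.val + q'.val) hn1 (by omega)
  have hbnda : (q.val + n - p.val) % n < n := Nat.mod_lt _ hn1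
  have hbnda' : (q'.val + n - p.val) % n < n := Nat.mod_lt _ hn1
  have hbndr : (p.val + q.val) % n < n := Nat.mod_lt _ hn1
  have hbndr' : (p.val + q'.val) % n < n := Nat.mod_lt _ hn1
  by_cases c1 : (q.val + n - p.val) % n ≤ k <;> by_cases c2 : (q'.val + n - p.val) % n ≤ k
  · rw [if_pos c1, if_pos c2] at heq'
    have hd := F.rowA d _ _ hbndr hbndr' heq'
    rcases hd with h | h | h | h | h <;> omega
  · rw [if_pos c1, if_neg c2] at heq'
    have hd := F.rowAB d _ _ hbndr hbndr' heq'
    rcases hd with h | h <;> omega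
  · rw [if_neg c1, if_pos c2] at heq'
    have hd := F.rowAB d _ _ hbndr' hbndr heq'.symm
    rcases hd with h | h <;> omega
  · rw [if_neg c1, if_neg c2] at heq'
    have hd := F.rowB d _ _ hbndr hbndr' heq'
    rcases hd with h | h | h | h | h <;> omega

lemma word_eq_zero {x : Fin n → Fin (g+1)} {t : Fin n} (h : (x t : ℕ) = 0) : x t = 0 := by
  apply Fin.ext
  simp [h]

/-- words of the same class with the same support are equal. -/
lemma eq_of_class_supp [NeZero g] (F : RowFam n g k) {x y : Fin n → Fin (g+1)}
    (hk : n = 2*k+1)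
    (hx : x ∈ weightTwoWords n g) (hy : y ∈ weightTwoWords n g)
    (hcl : classOf F x = classOf F y) (hs : supp x = supp y) : x = y := by
  have hn1 : 0 < n := by omega
  obtain ⟨i, j, hij, hsx⟩ := exists_pair_of_card_two (mem_weightTwoWords_iff.mp hx)
  have hsy : supp y = {i, j} := by rw [← hs, hsx]
  obtain ⟨p1, p2⟩ := classOf_spec F hij hsx hn1
  obtain ⟨q1, q2⟩ := classOf_spec F hij hsy hn1
  rw [← hcl] at q1 q2
  rw [← q1] at p1
  rw [← q2] at p2
  have hxi : (x i : ℕ) ≠ 0 := mem_supp.mp (by rw [hsx]; simp)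
  have hxj : (x j : ℕ) ≠ 0 := mem_supp.mp (by rw [hsx]; simp)
  have hyi : (y i : ℕ) ≠ 0 := mem_supp.mp (by rw [hsy]; simp)
  have hyj : (y j : ℕ) ≠ 0 := mem_supp.mp (by rw [hsy]; simp)
  have hvi : x i = y i ∧ x j = y j := by
    simp only [plusVal, minusVal] at p1 p2
    by_cases hc : j.val - i.val ≤ k
    · simp only [if_pos hc] at p1 p2
      exact ⟨red_inj hxi hyi p1, red_inj hxj hyj p2⟩
    · simp only [if_neg hc] at p1 p2
      exact ⟨red_inj hxi hyi p2, red_inj hxj hyj p1⟩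
  funext t
  by_cases h1 : t = i
  · rw [h1]; exact hvi.1
  · by_cases h2 : t = j
    · rw [h2]; exact hvi.2
    · have htx : t ∉ supp x := by rw [hsx]; simp [h1, h2]
      have hty : t ∉ supp y := by rw [hsy]; simp [h1, h2]
      rw [mem_supp] at htx hty
      push_neg at htx hty
      rw [word_eq_zero htx, word_eq_zero hty]

lemma hamming_ge_three {x y : Fin n → Fin (g+1)} {a b c : Fin n}
    (hab : a ≠ b) (hac : a ≠ c) (hbc : b ≠ c)
    (ha : x a ≠ y a) (hb : x b ≠ y b) (hc : x c ≠ y c) : 3 ≤ hammingDist x y := by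
  have hsub : ({a, b, c} : Finset (Fin n)) ⊆ Finset.univ.filter (fun i => x i ≠ y i) := by
    intro t ht
    simp only [Finset.mem_insert, Finset.mem_singleton] at ht
    rcases ht with rfl | rfl | rfl <;> simp [ha, hb, hc]
  have hcard : ({a, b, c} : Finset (Fin n)).card = 3 := by
    rw [Finset.card_insert_of_notMem (by simp [hab, hac]),
      Finset.card_insert_of_notMem (by simp [hbc]), Finset.card_singleton]
  calc 3 = ({a, b, c} : Finset (Fin n)).card := hcard.symm
    _ ≤ _ := Finset.card_le_card hsub
  
/-- main distance lemma: distinct words in the same class are at Hamming distance ≥ 3. -/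
lemma dist_ge_three [NeZero g] (F : RowFam n g k) {x y : Fin n → Fin (g+1)}
    (hk : n = 2*k+1)
    (hx : x ∈ weightTwoWords n g) (hy : y ∈ weightTwoWords n g)
    (hcl : classOf F x = classOf F y) (hxy : x ≠ y) : 3 ≤ hammingDist x y := by
  have hn1 : 0 < n := by omega
  obtain ⟨i, j, hij, hsx⟩ := exists_pair_of_card_two (mem_weightTwoWords_iff.mp hx)
  obtain ⟨i', j', hij', hsy⟩ := exists_pair_of_card_two (mem_weightTwoWords_iff.mp hy)
  have hxi : (x i : ℕ) ≠ 0 := mem_supp.mp (by rw [hsx]; simp)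
  have hxj : (x j : ℕ) ≠ 0 := mem_supp.mp (by rw [hsx]; simp)
  have hyi' : (y i' : ℕ) ≠ 0 := mem_supp.mp (by rw [hsy]; simp)
  have hyj' : (y j' : ℕ) ≠ 0 := mem_supp.mp (by rw [hsy]; simp)
  have hijne : i ≠ j := Fin.ne_of_lt hij
  have hijne' : i' ≠ j' := Fin.ne_of_lt hij'
  -- helper: a position in supp x not in supp y gives a difference
  have hdiffx : ∀ t : Fin n, t ∈ supp x → t ∉ supp y → x t ≠ y t := by
    intro t h1 h2
    rw [mem_supp] at h1 h2
    push_neg at h2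
    intro he
    rw [he] at h1
    exact h1 h2
  have hdiffy : ∀ t : Fin n, t ∈ supp y → t ∉ supp x → x t ≠ y t := by
    intro t h1 h2
    rw [mem_supp] at h1 h2
    push_neg at h2
    intro he
    rw [← he] at h1
    exact h1 h2
  -- shared-position helper producing the three differences
  have main : ∀ p q q' : Fin n, p ≠ q → p ≠ q' → q ≠ q' →
      supp x = {p, q} → supp y = {p, q'} → 3 ≤ hammingDist x y := by
    intro p q q' h1 h2 h3 s1 s2
    have hp : x p ≠ y p := by
      intro he
      have hxp : (x p : ℕ) ≠ 0 := mem_supp.mp (by rw [s1]; simp)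
      have hyp : (y p : ℕ) ≠ 0 := mem_supp.mp (by rw [s2]; simp)
      exact shared_ne F hk h3 h1 h2 s1 s2 hcl (by rw [he])
    have hq : x q ≠ y q := by
      apply hdiffx q (by rw [s1]; simp)
      rw [s2]
      simp only [Finset.mem_insert, Finset.mem_singleton]
      push_neg
      exact ⟨fun he => h1 he.symm, h3⟩
    have hq' : x q' ≠ y q' := by
      apply hdiffy q' (by rw [s2]; simp)
      rw [s1]
      simp only [Finset.mem_insert, Finset.mem_singleton]
      push_neg
      exact ⟨fun he => h2 he.symm, fun he => h3 he.symm⟩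
    exact hamming_ge_three (h1) (h2) (h3) hp hq hq'
  by_cases m1 : i ∈ supp y <;> by_cases m2 : j ∈ supp y
  · -- supports equal
    exfalso
    apply hxy
    apply eq_of_class_supp F hk hx hy hcl
    rw [hsx, hsy]
    rw [hsy] at m1 m2
    apply Finset.eq_of_subset_of_card_le
    · intro t ht
      simp only [Finset.mem_insert, Finset.mem_singleton] at ht
      rcases ht with rfl | rfl
      · exact m1
      · exact m2
    · rw [Finset.card_insert_of_notMem (by simp [hijne']), Finset.card_singleton,
        Finset.card_insert_of_notMem (by simp [hijne]), Finset.card_singleton]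
  · -- i shared, j not
    rw [hsy] at m1
    simp only [Finset.mem_insert, Finset.mem_singleton] at m1
    rcases m1 with rfl | rfl
    · -- i = i'
      apply main i j j' hijne hijne'
      · intro he
        apply m2
        rw [hsy, he]
        simp
      · exact hsx
      · exact hsy
    · -- i = j'
      apply main i j i' hijne (fun he => hijne' he.symm)
      · intro he
        apply m2
        rw [hsy, he]
        simp
      · exact hsx
      · rw [hsy]; exact Finset.pair_comm i' i
  · -- j shared, i not
    rw [hsy] at m2
    simp only [Finset.mem_insert, Finset.mem_singleton] at m2
    rcases m2 with rfl | rfl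
    · -- j = i'
      apply main j i j' (fun he => hijne he.symm) hijne'
      · intro he
        apply m1
        rw [hsy, he]
        simp
      · rw [hsx]; exact Finset.pair_comm i j
      · exact hsy
    · -- j = j'
      apply main j i i' (fun he => hijne he.symm) (fun he => hijne' he.symm)
      · intro he
        apply m1
        rw [hsy, he]
        simp
      · rw [hsx]; exact Finset.pair_comm i j
      · rw [hsy]; exact Finset.pair_comm i' j
  · -- disjoint supports
    have hd1 : x i ≠ y i := hdiffx i (by rw [hsx]; simp) m1
    have hd2 : x j ≠ y j := hdiffx j (by rw [hsx]; simp) m2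
    have hi'x : i' ∉ supp x := by
      rw [hsx]
      simp only [Finset.mem_insert, Finset.mem_singleton]
      push_neg
      constructor
      · intro he; apply m1; rw [← he]; rw [hsy]; simp
      · intro he; apply m2; rw [← he]; rw [hsy]; simp
    have hd3 : x i' ≠ y i' := hdiffy i' (by rw [hsy]; simp) hi'x
    have hne1 : i ≠ i' := fun he => (by rw [← he] at hi'x; exact hi'x (by rw [hsx]; simp))
    have hne2 : j ≠ i' := fun he => (by rw [← he] at hi'x; exact hi'x (by rw [hsx]; simp))
    exact hamming_ge_three hijne hne1 hne2 hd1 hd2 hd3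

end Assemble

end ODARProof


namespace ODARProof

section Final

variable {n g k : ℕ}

lemma zmod_val_inj [NeZero g] {a b : ZMod g} (h : a.val = b.val) : a = b := by
  have h2 := congrArg (Nat.cast : ℕ → ZMod g) h
  rwa [ZMod.natCast_val, ZMod.cast_id, ZMod.natCast_val, ZMod.cast_id] at h2

/-- natural-number index of a class. -/
def classIdx (F : RowFam n g k) (x : Fin n → Fin (g+1)) : ℕ :=
  (classOf F x).1.val * g + (classOf F x).2.val

lemma classIdx_lt [NeZero g] (F : RowFam n g k) (x : Fin n → Fin (g+1)) :
    classIdx F x < g^2 := by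
  have h1 := ZMod.val_lt (classOf F x).1
  have h2 := ZMod.val_lt (classOf F x).2
  unfold classIdx
  calc (classOf F x).1.val * g + (classOf F x).2.val
      < (classOf F x).1.val * g + g := by omega
    _ = ((classOf F x).1.val + 1) * g := by ring
    _ ≤ g * g := Nat.mul_le_mul_right g (by omega)
    _ = g^2 := (pow_two g).symm

lemma classIdx_inj [NeZero g] (F : RowFam n g k) {x y : Fin n → Fin (g+1)}
    (h : classIdx F x = classIdx F y) : classOf F x = classOf F y := by
  have hg : 0 < g := NeZero.pos g
  have h1 := ZMod.val_lt (classOf F x).1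
  have h2 := ZMod.val_lt (classOf F x).2
  have h3 := ZMod.val_lt (classOf F y).1
  have h4 := ZMod.val_lt (classOf F y).2
  unfold classIdx at h
  have e2 : (classOf F x).2.val = (classOf F y).2.val := by
    have k1 : ((classOf F x).1.val * g + (classOf F x).2.val) % g
        = (classOf F x).2.val := by
      rw [Nat.mul_comm, Nat.mul_add_mod]
      exact Nat.mod_eq_of_lt h2
    have k2 : ((classOf F y).1.val * g + (classOf F y).2.val) % g
        = (classOf F y).2.val := by
      rw [Nat.mul_comm, Nat.mul_add_mod]
      exact Nat.mod_eq_of_lt h4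
    rw [← k1, ← k2, h]
  have e1 : (classOf F x).1.val = (classOf F y).1.val := by
    have := h
    rw [e2] at this
    have h5 : (classOf F x).1.val * g = (classOf F y).1.val * g := by omega
    exact Nat.eq_of_mul_eq_mul_right hg h5
  exact Prod.ext (zmod_val_inj e1) (zmod_val_inj e2)

/-- the partition. -/
def parts (F : RowFam n g k) : Fin (g^2) → Finset (Fin n → Fin (g+1)) :=
  fun c => (weightTwoWords n g).filter (fun x => classIdx F x = c.val)

theorem frame_isODAR (hn3 : 3 ≤ n) (hk : n = 2*k+1) (hng : n ≤ g) (F : RowFam n g k) :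
    IsODAR n g := by
  haveI : NeZero g := ⟨by omega⟩
  have hn1 : 0 < n := by omega
  refine ⟨parts F, ?_, ?_, ?_, ?_⟩
  · -- disjoint
    intro c c' hcc
    rw [Finset.disjoint_left]
    intro a ha ha'
    rw [parts, Finset.mem_filter] at ha ha'
    exact hcc (Fin.ext (ha.2.symm.trans ha'.2))
  · -- biUnion
    ext x
    simp only [Finset.mem_biUnion, Finset.mem_univ, true_and, parts, Finset.mem_filter]
    constructor
    · rintro ⟨c, hc, _⟩
      exact hc
    · intro hx
      exact ⟨⟨classIdx F x, classIdx_lt F x⟩, hx, rfl⟩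
  · -- cardinalities
    intro c
    have hg : 0 < g := NeZero.pos g
    have hclt : (c : ℕ) < g * g := by
      have h0 := c.isLt
      have e : g^2 = g*g := pow_two g
      omega
    set κc : ZMod g := (Nat.cast ((c : ℕ) / g) : ZMod g) with hκc
    set ddc : ZMod g := (Nat.cast ((c : ℕ) % g) : ZMod g) with hddc
    have hκv : κc.val = (c : ℕ) / g := by
      rw [hκc]
      exact ZMod.val_cast_of_lt (Nat.div_lt_of_lt_mul hclt)
    have hdv : ddc.val = (c : ℕ) % g := by
      rw [hddc]
      exact ZMod.val_cast_of_lt (Nat.mod_lt _ hg)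
    have hrecon : κc.val * g + ddc.val = (c : ℕ) := by
      rw [hκv, hdv, Nat.mul_comm]
      have := Nat.div_add_mod (c : ℕ) g
      omega
    have hmem : ∀ x, x ∈ parts F c ↔ x ∈ weightTwoWords n g ∧ classIdx F x = (c : ℕ) :=
      fun x => Finset.mem_filter
    rw [show (parts F c) = (weightTwoWords n g).filter (fun x => classIdx F x = (c:ℕ))
      from rfl]
    have hbij : ((weightTwoWords n g).filter (fun x => classIdx F x = (c:ℕ))).card
        = (Finset.univ.powersetCard 2 : Finset (Finset (Fin n))).card := by
      apply Finset.card_bij (fun a _ => supp a)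
      · intro a ha
        rw [Finset.mem_filter] at ha
        rw [Finset.mem_powersetCard]
        exact ⟨Finset.subset_univ _, mem_weightTwoWords_iff.mp ha.1⟩
      · intro a ha b hb hab
        rw [Finset.mem_filter] at ha hb
        exact eq_of_class_supp F hk ha.1 hb.1
          (classIdx_inj F (ha.2.trans hb.2.symm)) hab
      · intro s hs
        rw [Finset.mem_powersetCard] at hs
        obtain ⟨i, j, hij, rfl⟩ := exists_pair_of_card_two hs.2
        refine ⟨mkWord F κc ddc i j, ?_, ?_⟩
        · rw [Finset.mem_filter]
          constructor
          · rw [mem_weightTwoWords_iff, mkWord_supp F κc ddc (Fin.ne_of_lt hij)]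
            rw [Finset.card_insert_of_notMem (by simp [Fin.ne_of_lt hij]),
              Finset.card_singleton]
          · unfold classIdx
            rw [mkWord_class hn1 F κc ddc hij]
            exact hrecon
        · exact mkWord_supp F κc ddc (Fin.ne_of_lt hij)
    rw [hbij, Finset.card_powersetCard, Finset.card_univ, Fintype.card_fin]
  · -- distances
    intro c x hx y hy hxy
    rw [parts, Finset.mem_filter] at hx hy
    exact dist_ge_three F hk hx.1 hy.1 (classIdx_inj F (hx.2.trans hy.2.symm)) hxy

end Final

end ODARProof

/-- For every odd `n ≥ 3` and every `g` with `n ≤ g`, an `ODAR(n,g)` exists. -/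
theorem exists_ODAR_of_odd (n g : ℕ) (hn3 : 3 ≤ n) (hno : Odd n) (hng : n ≤ g) :
    IsODAR n g := by
  obtain ⟨m, hm⟩ := hno
  have hk : n = 2*m+1 := by omega
  exact ODARProof.frame_isODAR hn3 hk hng
    (ODARProof.theRowFam n g m (by omega) hng hk)
end
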